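/- arXiv:math/0606541 — 10 statements merged into one kernel-verified Lean document; each statement's English description precedes it below -/
import Mathlib

section
/- Let M be a complex normed space, let L : M → M be a bounded linear map with ‖L‖ ≤ 1, and let (N, α, E) be a reversible lift of L. Then for every bounded linear functional ρ on M the sequence of norms ‖ρ ∘ L^k‖, k = 0, 1, 2, …, is nonincreasing (so its limit exists), and ‖ρ ∘ E‖ ≤ lim_{k→∞} ‖ρ ∘ L^k‖. -/
/-- Let `M` be a complex normed space, `L : M → M` a bounded linear
map with `‖L‖ ≤ 1`, and `(N, α, E)` a reversible lift of `L` (i.e. `α` is a surjective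
linear isometry of the normed space `N`, `E : N → M` is linear with `‖E‖ ≤ 1`, and
`E ∘ α = L ∘ E`).  Then for every bounded linear functional `ρ` on `M` the sequence
`k ↦ ‖ρ ∘ L^k‖` is nonincreasing (hence converges, to its infimum), and
`‖ρ ∘ E‖ ≤ lim_k ‖ρ ∘ L^k‖`. -/
theorem stmt0 {M N : Type*} [NormedAddCommGroup M] [NormedSpace ℂ M]
    [NormedAddCommGroup N] [NormedSpace ℂ N]
    (L : M →L[ℂ] M) (hL : ‖L‖ ≤ 1)
    (α : N ≃ₗᵢ[ℂ] N) (E : N →L[ℂ] M) (hE : ‖E‖ ≤ 1)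
    (hEq : ∀ y : N, E (α y) = L (E y))
    (ρ : M →L[ℂ] ℂ) :
    Antitone (fun k : ℕ => ‖ρ.comp (L ^ k)‖) ∧
    Filter.Tendsto (fun k : ℕ => ‖ρ.comp (L ^ k)‖) Filter.atTop
      (nhds (⨅ k : ℕ, ‖ρ.comp (L ^ k)‖)) ∧
    ‖ρ.comp E‖ ≤ ⨅ k : ℕ, ‖ρ.comp (L ^ k)‖ := by
  have hanti : Antitone (fun k : ℕ => ‖ρ.comp (L ^ k)‖) := by
    apply antitone_nat_of_succ_le
    intro k
    have h1 : ρ.comp (L ^ (k + 1)) = (ρ.comp (L ^ k)).comp L := by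
      ext y; simp [pow_succ]
    calc ‖ρ.comp (L ^ (k + 1))‖ = ‖(ρ.comp (L ^ k)).comp L‖ := by rw [h1]
      _ ≤ ‖ρ.comp (L ^ k)‖ * ‖L‖ := ContinuousLinearMap.opNorm_comp_le _ _
      _ ≤ ‖ρ.comp (L ^ k)‖ * 1 :=
          mul_le_mul_of_nonneg_left hL (norm_nonneg _)
      _ = ‖ρ.comp (L ^ k)‖ := mul_one _
  have hbdd : BddBelow (Set.range fun k : ℕ => ‖ρ.comp (L ^ k)‖) :=
    ⟨0, by rintro x ⟨k, rfl⟩; exact norm_nonneg _⟩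
  refine ⟨hanti, tendsto_atTop_ciInf hanti hbdd, ?_⟩
  -- key: E (α^[k] y) relation
  have key : ∀ (k : ℕ) (y : N), E y = (L ^ k) (E ((α.symm : N → N)^[k] y)) := by
    intro k
    induction k with
    | zero => intro y; simp
    | succ k ih =>
      intro y
      have h2 : (α.symm : N → N)^[k + 1] y = α.symm ((α.symm : N → N)^[k] y) := by
        rw [Function.iterate_succ']; rfl
      have h3 : E ((α.symm : N → N)^[k] y)
          = L (E ((α.symm : N → N)^[k + 1] y)) := by
        rw [h2, ← hEq, α.apply_symm_apply]
      rw [ih y, h3]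
      rw [pow_succ]
      rfl
  have hnorm : ∀ (k : ℕ) (y : N), ‖(α.symm : N → N)^[k] y‖ = ‖y‖ := by
    intro k y
    induction k with
    | zero => rfl
    | succ k ih =>
      rw [Function.iterate_succ', Function.comp_apply, α.symm.norm_map, ih]
  apply le_ciInf
  intro k
  apply ContinuousLinearMap.opNorm_le_bound _ (norm_nonneg _)
  intro y
  have : (ρ.comp E) y = (ρ.comp (L ^ k)) (E ((α.symm : N → N)^[k] y)) := by
    simp [key k y]
  rw [this]
  calc ‖(ρ.comp (L ^ k)) (E ((α.symm : N → N)^[k] y))‖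
      ≤ ‖ρ.comp (L ^ k)‖ * ‖E ((α.symm : N → N)^[k] y)‖ :=
        (ρ.comp (L ^ k)).le_opNorm _
    _ ≤ ‖ρ.comp (L ^ k)‖ * (‖E‖ * ‖(α.symm : N → N)^[k] y‖) :=
        mul_le_mul_of_nonneg_left (E.le_opNorm _) (norm_nonneg _)
    _ = ‖ρ.comp (L ^ k)‖ * (‖E‖ * ‖y‖) := by rw [hnorm]
    _ ≤ ‖ρ.comp (L ^ k)‖ * (1 * ‖y‖) := by
        apply mul_le_mul_of_nonneg_left _ (norm_nonneg _)
        exact mul_le_mul_of_nonneg_right hE (norm_nonneg _)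
    _ = ‖ρ.comp (L ^ k)‖ * ‖y‖ := by ring
end

section
/- Let M⋆ and N⋆ be complex Banach spaces with continuous duals M and N, let L : M → M and E : N → M be normal linear maps with ‖L‖ ≤ 1 and ‖E‖ ≤ 1, and let α : N → N be a surjective linear isometry satisfying E ∘ α = L ∘ E. Then the following are equivalent: (i) for every ρ ∈ M⋆, ‖ρ ∘ E‖ = lim_{n→∞} ‖ρ ∘ L^n‖; (ii) E(ball N) = ∩_{n≥0} L^n(ball M). -/
open Filter Metric NormedSpace ContinuousLinearMap

set_option maxHeartbeats 1000000 in
set_option synthInstance.maxHeartbeats 400000 in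
theorem stmt2 {Mstar Nstar : Type*}
    [NormedAddCommGroup Mstar] [NormedSpace ℂ Mstar] [CompleteSpace Mstar]
    [NormedAddCommGroup Nstar] [NormedSpace ℂ Nstar] [CompleteSpace Nstar]
    (L : (Mstar →L[ℂ] ℂ) →L[ℂ] (Mstar →L[ℂ] ℂ))
    (hLnormal : ∃ Lp : Mstar →L[ℂ] Mstar,
      ∀ (x : Mstar →L[ℂ] ℂ) (ρ : Mstar), L x ρ = x (Lp ρ))
    (hLnorm : ‖L‖ ≤ 1)
    (E : (Nstar →L[ℂ] ℂ) →L[ℂ] (Mstar →L[ℂ] ℂ))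
    (hEnormal : ∃ Ep : Mstar →L[ℂ] Nstar,
      ∀ (y : Nstar →L[ℂ] ℂ) (ρ : Mstar), E y ρ = y (Ep ρ))
    (hEnorm : ‖E‖ ≤ 1)
    (α : (Nstar →L[ℂ] ℂ) ≃ₗᵢ[ℂ] (Nstar →L[ℂ] ℂ))
    (hEq : ∀ y : Nstar →L[ℂ] ℂ, E (α y) = L (E y)) :
    (∀ ρ : Mstar,
        Filter.Tendsto
          (fun n : ℕ => ‖(ContinuousLinearMap.apply ℂ ℂ ρ).comp (L ^ n)‖)
          Filter.atTop
          (nhds ‖(ContinuousLinearMap.apply ℂ ℂ ρ).comp E‖))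
      ↔ (E '' Metric.closedBall 0 1 = ⋂ n : ℕ, (L ^ n) '' Metric.closedBall 0 1) := by
  obtain ⟨Lp, hLp⟩ := hLnormal
  obtain ⟨Ep, hEp⟩ := hEnormal
  -- iterated intertwining identity
  have hiter : ∀ (n : ℕ) (y : Nstar →L[ℂ] ℂ), E ((⇑α)^[n] y) = (L ^ n) (E y) := by
    intro n
    induction n with
    | zero => intro y; simp
    | succ n ih =>
      intro y
      rw [Function.iterate_succ_apply, ih (α y), hEq, ← ContinuousLinearMap.mul_apply,
        ← pow_succ]
  have hsymm_norm : ∀ (n : ℕ) (y : Nstar →L[ℂ] ℂ), ‖(⇑α.symm)^[n] y‖ = ‖y‖ := by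
    intro n
    induction n with
    | zero => intro y; simp
    | succ n ih =>
      intro y
      rw [Function.iterate_succ_apply, ih (α.symm y), α.symm.norm_map]
  have hcancel : ∀ (n : ℕ) (y : Nstar →L[ℂ] ℂ), (⇑α)^[n] ((⇑α.symm)^[n] y) = y := by
    intro n
    exact Function.LeftInverse.iterate (fun y => α.apply_symm_apply y) n
  have hEnb : ∀ y : Nstar →L[ℂ] ℂ, ‖y‖ ≤ 1 → ∀ n : ℕ, ‖E ((⇑α.symm)^[n] y)‖ ≤ 1 := by
    intro y hy n
    calc ‖E ((⇑α.symm)^[n] y)‖ ≤ ‖E‖ * ‖(⇑α.symm)^[n] y‖ := E.le_opNorm _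
      _ = ‖E‖ * ‖y‖ := by rw [hsymm_norm]
      _ ≤ 1 * 1 := by
          apply mul_le_mul hEnorm hy (norm_nonneg _) zero_le_one
      _ = 1 := one_mul 1
  have hEmem : ∀ (n : ℕ) (y : Nstar →L[ℂ] ℂ), ‖y‖ ≤ 1 →
      E y ∈ (L ^ n) '' Metric.closedBall 0 1 := by
    intro n y hy
    refine ⟨E ((⇑α.symm)^[n] y), ?_, ?_⟩
    · rw [mem_closedBall_zero_iff]
      exact hEnb y hy n
    · rw [← hiter n, hcancel]
  have hsub : E '' Metric.closedBall 0 1 ⊆ ⋂ n : ℕ, (L ^ n) '' Metric.closedBall 0 1 := by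
    rintro _ ⟨y, hy, rfl⟩
    exact Set.mem_iInter.2 fun n => hEmem n y (mem_closedBall_zero_iff.1 hy)
  -- `‖ρ ∘ E‖ ≤ ‖Ep ρ‖`
  have hEleq : ∀ ρ : Mstar, ‖(ContinuousLinearMap.apply ℂ ℂ ρ).comp E‖ ≤ ‖Ep ρ‖ := by
    intro ρ
    refine ContinuousLinearMap.opNorm_le_bound _ (norm_nonneg (Ep ρ)) fun y => ?_
    rw [ContinuousLinearMap.comp_apply, ContinuousLinearMap.apply_apply, hEp]
    rw [mul_comm]
    exact y.le_opNorm _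
  -- `‖ρ ∘ E‖ ≤ ‖ρ ∘ Lⁿ‖`
  have hELn : ∀ (ρ : Mstar) (n : ℕ),
      ‖(ContinuousLinearMap.apply ℂ ℂ ρ).comp E‖ ≤
        ‖(ContinuousLinearMap.apply ℂ ℂ ρ).comp (L ^ n)‖ := by
    intro ρ n
    refine ContinuousLinearMap.opNorm_le_bound _
      (norm_nonneg ((ContinuousLinearMap.apply ℂ ℂ ρ).comp (L ^ n))) fun y => ?_
    have h1 : ((ContinuousLinearMap.apply ℂ ℂ ρ).comp E) y =
        ((ContinuousLinearMap.apply ℂ ℂ ρ).comp (L ^ n)) (E ((⇑α.symm)^[n] y)) := by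
      simp only [ContinuousLinearMap.comp_apply, ContinuousLinearMap.apply_apply]
      rw [← hiter n, hcancel]
    rw [h1]
    calc ‖((ContinuousLinearMap.apply ℂ ℂ ρ).comp (L ^ n)) (E ((⇑α.symm)^[n] y))‖
        ≤ ‖(ContinuousLinearMap.apply ℂ ℂ ρ).comp (L ^ n)‖ * ‖E ((⇑α.symm)^[n] y)‖ :=
          ContinuousLinearMap.le_opNorm _ _
      _ ≤ ‖(ContinuousLinearMap.apply ℂ ℂ ρ).comp (L ^ n)‖ * ‖y‖ := by
          gcongr
          calc ‖E ((⇑α.symm)^[n] y)‖ ≤ ‖E‖ * ‖(⇑α.symm)^[n] y‖ := E.le_opNorm _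
            _ = ‖E‖ * ‖y‖ := by rw [hsymm_norm]
            _ ≤ 1 * ‖y‖ := by gcongr
            _ = ‖y‖ := one_mul _
  -- antitone
  have hanti : ∀ ρ : Mstar,
      Antitone fun n : ℕ => ‖(ContinuousLinearMap.apply ℂ ℂ ρ).comp (L ^ n)‖ := by
    intro ρ
    apply antitone_nat_of_succ_le
    intro n
    refine ContinuousLinearMap.opNorm_le_bound _
      (norm_nonneg ((ContinuousLinearMap.apply ℂ ℂ ρ).comp (L ^ n))) fun x => ?_
    have h1 : ((ContinuousLinearMap.apply ℂ ℂ ρ).comp (L ^ (n + 1))) x =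
        ((ContinuousLinearMap.apply ℂ ℂ ρ).comp (L ^ n)) (L x) := by
      simp only [ContinuousLinearMap.comp_apply, ContinuousLinearMap.apply_apply, pow_succ,
        ContinuousLinearMap.mul_apply]
    rw [h1]
    calc ‖((ContinuousLinearMap.apply ℂ ℂ ρ).comp (L ^ n)) (L x)‖
        ≤ ‖(ContinuousLinearMap.apply ℂ ℂ ρ).comp (L ^ n)‖ * ‖L x‖ :=
          ContinuousLinearMap.le_opNorm _ _
      _ ≤ ‖(ContinuousLinearMap.apply ℂ ℂ ρ).comp (L ^ n)‖ * ‖x‖ := by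
          gcongr
          calc ‖L x‖ ≤ ‖L‖ * ‖x‖ := L.le_opNorm x
            _ ≤ 1 * ‖x‖ := by gcongr
            _ = ‖x‖ := one_mul _
  constructor
  · -- (i) → (ii)
    intro hlim
    refine Set.Subset.antisymm hsub ?_
    intro x₀ hx₀
    have hx₀' := fun n => Set.mem_iInter.1 hx₀ n
    have hx₀ρ : ∀ ρ' : Mstar, ‖x₀ ρ'‖ ≤ ‖Ep ρ'‖ := by
      intro ρ'
      have h1 : ∀ n : ℕ, ‖x₀ ρ'‖ ≤ ‖(ContinuousLinearMap.apply ℂ ℂ ρ').comp (L ^ n)‖ := by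
        intro n
        obtain ⟨z, hz, hzx⟩ := hx₀' n
        rw [← hzx]
        calc ‖((L ^ n) z) ρ'‖ = ‖((ContinuousLinearMap.apply ℂ ℂ ρ').comp (L ^ n)) z‖ := by
              simp [ContinuousLinearMap.comp_apply, ContinuousLinearMap.apply_apply]
          _ ≤ ‖(ContinuousLinearMap.apply ℂ ℂ ρ').comp (L ^ n)‖ * ‖z‖ :=
              ContinuousLinearMap.le_opNorm _ _
          _ ≤ ‖(ContinuousLinearMap.apply ℂ ℂ ρ').comp (L ^ n)‖ * 1 := by
              gcongr
              exact mem_closedBall_zero_iff.1 hz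
          _ = _ := mul_one _
      exact le_trans (ge_of_tendsto' (hlim ρ') h1) (hEleq ρ')
    -- build the preimage via Hahn-Banach
    have hker : LinearMap.ker (Ep : Mstar →ₗ[ℂ] Nstar) ≤ LinearMap.ker (x₀ : Mstar →ₗ[ℂ] ℂ) := by
      intro ρ' h
      rw [LinearMap.mem_ker] at h ⊢
      have := hx₀ρ ρ'
      rw [show Ep ρ' = 0 from h, norm_zero] at this
      exact norm_le_zero_iff.1 this
    set g₁ : (Mstar ⧸ LinearMap.ker (Ep : Mstar →ₗ[ℂ] Nstar)) →ₗ[ℂ] ℂ :=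
      (LinearMap.ker (Ep : Mstar →ₗ[ℂ] Nstar)).liftQ (x₀ : Mstar →ₗ[ℂ] ℂ) hker with hg₁
    set e := (Ep : Mstar →ₗ[ℂ] Nstar).quotKerEquivRange with he
    set g : LinearMap.range (Ep : Mstar →ₗ[ℂ] Nstar) →ₗ[ℂ] ℂ :=
      g₁ ∘ₗ (e.symm : LinearMap.range (Ep : Mstar →ₗ[ℂ] Nstar) →ₗ[ℂ] _) with hgdef
    have hg : ∀ ρ' : Mstar,
        g ⟨Ep ρ', LinearMap.mem_range_self _ ρ'⟩ = x₀ ρ' := by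
      intro ρ'
      have h2 : e.symm ⟨Ep ρ', LinearMap.mem_range_self _ ρ'⟩ = Submodule.Quotient.mk ρ' := by
        rw [LinearEquiv.symm_apply_eq]
        apply Subtype.ext
        exact (LinearMap.quotKerEquivRange_apply_mk _ _).symm
      simp only [hgdef, LinearMap.comp_apply, LinearEquiv.coe_coe, h2, hg₁,
        Submodule.liftQ_apply, ContinuousLinearMap.coe_coe]
    have hgb : ∀ v : LinearMap.range (Ep : Mstar →ₗ[ℂ] Nstar), ‖g v‖ ≤ 1 * ‖v‖ := by
      rintro ⟨v, hv⟩
      obtain ⟨ρ', rfl⟩ := hv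
      have h3 : (⟨(Ep : Mstar →ₗ[ℂ] Nstar) ρ', ⟨ρ', rfl⟩⟩ :
          LinearMap.range (Ep : Mstar →ₗ[ℂ] Nstar)) =
          ⟨Ep ρ', LinearMap.mem_range_self _ ρ'⟩ := rfl
      rw [h3, hg ρ', one_mul]
      exact hx₀ρ ρ'
    obtain ⟨y, hy1, hy2⟩ := exists_extension_norm_eq
      (LinearMap.range (Ep : Mstar →ₗ[ℂ] Nstar)) (LinearMap.mkContinuous g 1 hgb)
    refine ⟨y, ?_, ?_⟩
    · rw [mem_closedBall_zero_iff, hy2]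
      exact LinearMap.mkContinuous_norm_le g zero_le_one hgb
    · ext ρ'
      rw [hEp y ρ']
      have h4 := hy1 ⟨Ep ρ', LinearMap.mem_range_self _ ρ'⟩
      rw [LinearMap.mkContinuous_apply, hg ρ'] at h4
      exact h4
  · -- (ii) → (i)
    intro hset ρ
    set f : ℕ → ℝ := fun n => ‖(ContinuousLinearMap.apply ℂ ℂ ρ).comp (L ^ n)‖ with hf
    have hbdd : BddBelow (Set.range f) := by
      refine ⟨0, ?_⟩
      rintro _ ⟨n, rfl⟩
      exact norm_nonneg ((ContinuousLinearMap.apply ℂ ℂ ρ).comp (L ^ n))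
    have hlim := tendsto_atTop_ciInf (hanti ρ) hbdd
    set c : ℝ := ⨅ n, f n with hc
    suffices hcE : c = ‖(ContinuousLinearMap.apply ℂ ℂ ρ).comp E‖ by
      rw [← hcE]; exact hlim
    refine le_antisymm ?_ (le_ciInf (hELn ρ))
    -- weak* machinery
    set ι : (Mstar →L[ℂ] ℂ) ≃ₗ[ℂ] WeakDual ℂ Mstar := StrongDual.toWeakDual with hι
    have hιapp : ∀ (z : Mstar →L[ℂ] ℂ) (ρ' : Mstar), (ι z) ρ' = z ρ' := fun _ _ => rfl
    have hιsymm : ∀ (x : WeakDual ℂ Mstar) (ρ' : Mstar), (ι.symm x) ρ' = x ρ' := fun _ _ => rfl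
    have hB : IsCompact (ι '' Metric.closedBall 0 1) := by
      have h := WeakDual.isCompact_closedBall (𝕜 := ℂ) (E := Mstar) 0 1
      have heq : ι '' Metric.closedBall 0 1 =
          WeakDual.toStrongDual ⁻¹' Metric.closedBall 0 1 := by
        ext x
        constructor
        · rintro ⟨z, hz, rfl⟩
          exact hz
        · intro hx
          exact ⟨ι.symm x, hx, ι.apply_symm_apply x⟩
      rw [heq]
      exact h
    set ℓ : WeakDual ℂ Mstar → WeakDual ℂ Mstar := fun x => ι (L (ι.symm x)) with hℓ
    have hℓcont : Continuous ℓ := by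
      apply WeakDual.continuous_of_continuous_eval
      intro ρ'
      have h1 : (fun x : WeakDual ℂ Mstar => (ℓ x) ρ') = fun x : WeakDual ℂ Mstar =>
          x (Lp ρ') := by
        funext x
        rw [hℓ]
        rw [hιapp, hLp, hιsymm]
      rw [h1]
      exact WeakDual.eval_continuous (Lp ρ')
    have hS : ∀ n : ℕ, IsCompact (ι '' ((L ^ n) '' Metric.closedBall 0 1)) := by
      intro n
      induction n with
      | zero =>
        have h0 : ⇑(L ^ 0) '' Metric.closedBall 0 1 =
            (Metric.closedBall 0 1 : Set (Mstar →L[ℂ] ℂ)) := by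
          ext z
          simp [pow_zero]
        rw [h0]; exact hB
      | succ n ih =>
        have h1 : ι '' ((L ^ (n + 1)) '' Metric.closedBall 0 1) =
            ℓ '' (ι '' ((L ^ n) '' Metric.closedBall 0 1)) := by
          simp only [Set.image_image]
          apply Set.image_congr'
          intro z
          show ι ((L ^ (n + 1)) z) = ι (L (ι.symm (ι ((L ^ n) z))))
          rw [LinearEquiv.symm_apply_apply, pow_succ', ContinuousLinearMap.mul_apply]
        rw [h1]
        exact ih.image hℓcont
    have hdec : ∀ n : ℕ, (L ^ (n + 1)) '' Metric.closedBall 0 1 ⊆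
        (L ^ n) '' Metric.closedBall 0 1 := by
      intro n
      rintro _ ⟨z, hz, rfl⟩
      refine ⟨L z, ?_, ?_⟩
      · rw [mem_closedBall_zero_iff]
        calc ‖L z‖ ≤ ‖L‖ * ‖z‖ := L.le_opNorm z
          _ ≤ 1 * 1 := by
            apply mul_le_mul hLnorm (mem_closedBall_zero_iff.1 hz) (norm_nonneg _)
              zero_le_one
          _ = 1 := one_mul 1
      · rw [pow_succ, ContinuousLinearMap.mul_apply]
    refine le_of_forall_pos_le_add fun ε hε => ?_
    set C : Set (WeakDual ℂ Mstar) := {x | c - ε ≤ ‖x ρ‖} with hC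
    have hCclosed : IsClosed C := isClosed_le continuous_const ((WeakDual.eval_continuous ρ).norm)
    set T : ℕ → Set (WeakDual ℂ Mstar) :=
      fun n => (ι '' ((L ^ n) '' Metric.closedBall 0 1)) ∩ C with hT
    have hTsub : ∀ n : ℕ, T (n + 1) ⊆ T n := by
      intro n
      apply Set.inter_subset_inter_left
      exact Set.image_mono (hdec n)
    have hTne : ∀ n : ℕ, (T n).Nonempty := by
      intro n
      have hlt : c - ε < f n := lt_of_lt_of_le (by linarith) (ciInf_le hbdd n)
      obtain ⟨z, hz1, hz2⟩ := ContinuousLinearMap.exists_lt_apply_of_lt_opNorm _ hlt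
      refine ⟨ι ((L ^ n) z), ⟨(L ^ n) z,
        ⟨z, mem_closedBall_zero_iff.2 hz1.le, rfl⟩, rfl⟩, ?_⟩
      rw [hC, Set.mem_setOf_eq, hιapp]
      have : ((ContinuousLinearMap.apply ℂ ℂ ρ).comp (L ^ n)) z = ((L ^ n) z) ρ := by
        simp [ContinuousLinearMap.comp_apply, ContinuousLinearMap.apply_apply]
      rw [this] at hz2
      exact hz2.le
    obtain ⟨x, hx⟩ := IsCompact.nonempty_iInter_of_sequence_nonempty_isCompact_isClosed T hTsub
      hTne ((hS 0).inter_right hCclosed)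
      (fun n => ((hS n).isClosed).inter hCclosed)
    have hxm := Set.mem_iInter.1 hx
    have hx1 : ι.symm x ∈ ⋂ n : ℕ, (L ^ n) '' Metric.closedBall 0 1 := by
      refine Set.mem_iInter.2 fun n => ?_
      obtain ⟨w, hw, hwx⟩ := (hxm n).1
      rw [← hwx, LinearEquiv.symm_apply_apply]
      exact hw
    rw [← hset] at hx1
    obtain ⟨y, hy, hEy⟩ := hx1
    have hxρ : c - ε ≤ ‖x ρ‖ := (hxm 0).2
    have hfinal : ‖x ρ‖ ≤ ‖(ContinuousLinearMap.apply ℂ ℂ ρ).comp E‖ := by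
      have h1 : ((ContinuousLinearMap.apply ℂ ℂ ρ).comp E) y = x ρ := by
        rw [ContinuousLinearMap.comp_apply, ContinuousLinearMap.apply_apply, hEy, hιsymm]
      calc ‖x ρ‖ = ‖((ContinuousLinearMap.apply ℂ ℂ ρ).comp E) y‖ := by rw [h1]
        _ ≤ ‖(ContinuousLinearMap.apply ℂ ℂ ρ).comp E‖ * ‖y‖ :=
            ContinuousLinearMap.le_opNorm _ _
        _ ≤ ‖(ContinuousLinearMap.apply ℂ ℂ ρ).comp E‖ * 1 := by
            gcongr
            exact mem_closedBall_zero_iff.1 hy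
        _ = _ := mul_one _
    linarith
end

section
/- Let M⋆ and N⋆ be complex Banach spaces with continuous duals M and N, let L : M → M and E : N → M be normal linear maps with ‖L‖ ≤ 1 and ‖E‖ ≤ 1, and let α : N → N be a surjective linear isometry such that both α and α⁻¹ are normal and E ∘ α = L ∘ E. Suppose that ‖ρ ∘ E‖ = lim_{n→∞} ‖ρ ∘ L^n‖ for every ρ ∈ M⋆. Let K = {z ∈ N : E(α^k(z)) = 0 for all k ∈ ℤ}. Then for every y ∈ N, sup_{k∈ℤ} ‖E(α^k(y))‖ = inf_{z∈K} ‖y + z‖. -/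
set_option maxHeartbeats 1000000 in
/-- With `M`, `N` duals of complex Banach spaces `M⋆`, `N⋆`, let
`L : M → M`, `E : N → M` be normal linear maps with `‖L‖ ≤ 1`, `‖E‖ ≤ 1`, and let
`α : N → N` be a surjective linear isometry such that `α` and `α⁻¹` are normal and
`E ∘ α = L ∘ E`.  Assume `‖ρ ∘ E‖ = lim_n ‖ρ ∘ L^n‖` for every `ρ ∈ M⋆`.  Let
`K = {z ∈ N : E(α^k z) = 0 for all k ∈ ℤ}`.  Then for every `y ∈ N`,
`sup_{k ∈ ℤ} ‖E(α^k y)‖ = inf_{z ∈ K} ‖y + z‖`. -/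
theorem stmt3 {Mstar Nstar : Type*}
    [NormedAddCommGroup Mstar] [NormedSpace ℂ Mstar] [CompleteSpace Mstar]
    [NormedAddCommGroup Nstar] [NormedSpace ℂ Nstar] [CompleteSpace Nstar]
    (L : (Mstar →L[ℂ] ℂ) →L[ℂ] (Mstar →L[ℂ] ℂ))
    (hLnormal : ∃ Lp : Mstar →L[ℂ] Mstar,
      ∀ (x : Mstar →L[ℂ] ℂ) (ρ : Mstar), L x ρ = x (Lp ρ))
    (hLnorm : ‖L‖ ≤ 1)
    (E : (Nstar →L[ℂ] ℂ) →L[ℂ] (Mstar →L[ℂ] ℂ))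
    (hEnormal : ∃ Ep : Mstar →L[ℂ] Nstar,
      ∀ (y : Nstar →L[ℂ] ℂ) (ρ : Mstar), E y ρ = y (Ep ρ))
    (hEnorm : ‖E‖ ≤ 1)
    (α : (Nstar →L[ℂ] ℂ) ≃ₗᵢ[ℂ] (Nstar →L[ℂ] ℂ))
    (hαnormal : ∃ a : Nstar →L[ℂ] Nstar,
      ∀ (y : Nstar →L[ℂ] ℂ) (ρ : Nstar), α y ρ = y (a ρ))
    (hαinvnormal : ∃ b : Nstar →L[ℂ] Nstar,
      ∀ (y : Nstar →L[ℂ] ℂ) (ρ : Nstar), α.symm y ρ = y (b ρ))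
    (hEq : ∀ y : Nstar →L[ℂ] ℂ, E (α y) = L (E y))
    (hAsym : ∀ ρ : Mstar,
      Filter.Tendsto
        (fun n : ℕ => ‖(ContinuousLinearMap.apply ℂ ℂ ρ).comp (L ^ n)‖)
        Filter.atTop
        (nhds ‖(ContinuousLinearMap.apply ℂ ℂ ρ).comp E‖))
    (y : Nstar →L[ℂ] ℂ) :
    (⨆ k : ℤ, ‖E ((α ^ k) y)‖) =
      ⨅ z : {z : Nstar →L[ℂ] ℂ // ∀ k : ℤ, E ((α ^ k) z) = 0}, ‖y + (z : Nstar →L[ℂ] ℂ)‖ := by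
  classical
  obtain ⟨Lp, hLp⟩ := hLnormal
  obtain ⟨Ep, hEp⟩ := hEnormal
  obtain ⟨a, ha⟩ := hαnormal
  obtain ⟨b, hb⟩ := hαinvnormal
  -- the dual separates points
  have sep : ∀ {u v : Nstar}, (∀ f : Nstar →L[ℂ] ℂ, f u = f v) → u = v :=
    fun h => (NormedSpace.eq_iff_forall_dual_eq ℂ).mpr h
  -- a and b are mutually inverse
  have hba : ∀ ρ, b (a ρ) = ρ := by
    intro ρ
    apply sep
    intro f
    have h1 : f (b (a ρ)) = (α.symm f) (a ρ) := (hb f (a ρ)).symm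
    rw [h1, ← ha (α.symm f) ρ, α.apply_symm_apply]
  have hab : ∀ ρ, a (b ρ) = ρ := by
    intro ρ
    apply sep
    intro f
    rw [← ha f (b ρ), ← hb (α f) ρ, α.symm_apply_apply]
  -- a is an isometry
  have hanorm : ∀ ρ, ‖a ρ‖ ≤ ‖ρ‖ := by
    intro ρ
    refine NormedSpace.norm_le_dual_bound ℂ _ (norm_nonneg ρ) (fun f => ?_)
    rw [← ha f ρ]
    calc ‖α f ρ‖ ≤ ‖α f‖ * ‖ρ‖ := (α f).le_opNorm ρ
      _ = ‖ρ‖ * ‖f‖ := by rw [α.norm_map]; ring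
  have hbnorm : ∀ ρ, ‖b ρ‖ ≤ ‖ρ‖ := by
    intro ρ
    refine NormedSpace.norm_le_dual_bound ℂ _ (norm_nonneg ρ) (fun f => ?_)
    rw [← hb f ρ]
    calc ‖α.symm f ρ‖ ≤ ‖α.symm f‖ * ‖ρ‖ := (α.symm f).le_opNorm ρ
      _ = ‖ρ‖ * ‖f‖ := by rw [α.symm.norm_map]; ring
  have haIso : ∀ ρ, ‖a ρ‖ = ‖ρ‖ := by
    intro ρ
    refine le_antisymm (hanorm ρ) ?_
    calc ‖ρ‖ = ‖b (a ρ)‖ := by rw [hba]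
      _ ≤ ‖a ρ‖ := hbnorm _
  -- the predual isometry A
  let Aeq : Nstar ≃L[ℂ] Nstar := ContinuousLinearEquiv.equivOfInverse a b hba hab
  let A : Nstar ≃ₗᵢ[ℂ] Nstar := ⟨Aeq.toLinearEquiv, haIso⟩
  have hAa : ∀ ρ, A ρ = a ρ := fun _ => rfl
  have hAb : ∀ ρ, A.symm ρ = b ρ := fun _ => rfl
  -- key identity relating α powers and A powers
  have hI1 : ∀ (k : ℤ) (w : Nstar →L[ℂ] ℂ) (ρ : Nstar),
      ((α ^ k) w) ρ = w ((A ^ k) ρ) := by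
    intro k
    induction k using Int.induction_on with
    | zero => intro w ρ; simp
    | succ i ih =>
      intro w ρ
      have h1 : (α ^ ((i : ℤ) + 1)) w = (α ^ (i : ℤ)) (α w) := by
        rw [zpow_add_one]; rfl
      have h2 : (A ^ ((i : ℤ) + 1)) ρ = A ((A ^ (i : ℤ)) ρ) := by
        rw [add_comm, zpow_add, zpow_one]; rfl
      rw [h1, h2, ih (α w) ρ, ha w ((A ^ (i : ℤ)) ρ), hAa]
    | pred i ih =>
      intro w ρ
      have h1 : (α ^ (-(i : ℤ) - 1)) w = (α ^ (-(i : ℤ))) (α⁻¹ w) := by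
        rw [zpow_sub_one]; rfl
      have h2 : (A ^ (-(i : ℤ) - 1)) ρ = A.symm ((A ^ (-(i : ℤ))) ρ) := by
        rw [show -(i : ℤ) - 1 = -1 + -(i : ℤ) by ring, zpow_add, zpow_neg_one]; rfl
      rw [h1, h2, ih (α⁻¹ w) ρ, hAb]
      exact hb w _
  -- powers of L on the predual
  have hLn : ∀ (n : ℕ) (x : Mstar →L[ℂ] ℂ) (ρ : Mstar),
      ((L ^ n) x) ρ = x ((Lp ^ n) ρ) := by
    intro n
    induction n with
    | zero => intro x ρ; set_option synthInstance.maxHeartbeats 400000 in simp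
    | succ n ih =>
      intro x ρ
      have h1 : (L ^ (n + 1)) x = (L ^ n) (L x) := by set_option synthInstance.maxHeartbeats 400000 in rw [pow_succ]; rfl
      have h2 : (Lp ^ (n + 1)) ρ = Lp ((Lp ^ n) ρ) := by rw [pow_succ']; rfl
      rw [h1, h2, ih (L x) ρ, hLp x _]
  -- intertwining on the predual
  have hI3 : ∀ ρ, A (Ep ρ) = Ep (Lp ρ) := by
    intro ρ
    apply sep
    intro f
    rw [hAa, ← ha f _, ← hEp (α f) ρ, hEq f, hLp (E f) ρ, hEp f _]
  have hAEp : ∀ (m : ℕ) (τ : Mstar), (A ^ m) (Ep τ) = Ep ((Lp ^ m) τ) := by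
    intro m
    induction m with
    | zero => intro τ; simp
    | succ m ih =>
      intro τ
      have h1 : (A ^ (m + 1)) (Ep τ) = A ((A ^ m) (Ep τ)) := by rw [pow_succ']; rfl
      have h2 : (Lp ^ (m + 1)) τ = Lp ((Lp ^ m) τ) := by rw [pow_succ']; rfl
      rw [h1, h2, ih τ, hI3]
  have hAEpz : ∀ (m : ℕ) (τ : Mstar), (A ^ (m : ℤ)) (Ep τ) = Ep ((Lp ^ m) τ) := by
    intro m τ
    rw [zpow_natCast]
    exact hAEp m τ
  -- composition of zpowers
  have hcomp : ∀ (j k : ℤ) (v : Nstar), (A ^ j) ((A ^ k) v) = (A ^ (j + k)) v := by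
    intro j k v
    rw [zpow_add]; rfl
  -- the asymptotic hypothesis on the predual
  have hAsym' : ∀ ρ : Mstar,
      Filter.Tendsto (fun n : ℕ => ‖(Lp ^ n) ρ‖) Filter.atTop (nhds ‖Ep ρ‖) := by
    intro ρ
    have h1 : ∀ n : ℕ, ‖(ContinuousLinearMap.apply ℂ ℂ ρ).comp (L ^ n)‖ = ‖(Lp ^ n) ρ‖ := by
      intro n
      have he : (ContinuousLinearMap.apply ℂ ℂ ρ).comp (L ^ n)
          = NormedSpace.inclusionInDoubleDual ℂ Mstar ((Lp ^ n) ρ) := by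
        ext x
        exact hLn n x ρ
      rw [he]
      exact (NormedSpace.inclusionInDoubleDualLi ℂ).norm_map _
    have h2 : ‖(ContinuousLinearMap.apply ℂ ℂ ρ).comp E‖ = ‖Ep ρ‖ := by
      have he : (ContinuousLinearMap.apply ℂ ℂ ρ).comp E
          = NormedSpace.inclusionInDoubleDual ℂ Nstar (Ep ρ) := by
        ext x
        exact hEp x ρ
      rw [he]
      exact (NormedSpace.inclusionInDoubleDualLi ℂ).norm_map _
    have := hAsym ρ
    rw [h2] at this
    refine this.congr (fun n => h1 n)
  -- the supremum p
  set p : ℝ := ⨆ k : ℤ, ‖E ((α ^ k) y)‖ with hp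
  have hbddA : BddAbove (Set.range fun k : ℤ => ‖E ((α ^ k) y)‖) := by
    refine ⟨‖y‖, ?_⟩
    rintro _ ⟨k, rfl⟩
    calc ‖E ((α ^ k) y)‖ ≤ ‖E‖ * ‖(α ^ k) y‖ := E.le_opNorm _
      _ ≤ 1 * ‖(α ^ k) y‖ := mul_le_mul_of_nonneg_right hEnorm (norm_nonneg _)
      _ = ‖y‖ := by rw [one_mul, (α ^ k).norm_map]
  have hple : ∀ k : ℤ, ‖E ((α ^ k) y)‖ ≤ p := fun k => le_ciSup hbddA k
  have hp0 : 0 ≤ p := le_trans (norm_nonneg _) (hple 0)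
  -- the subspace W
  set S : Set Nstar := {x | ∃ (k : ℤ) (ρ : Mstar), x = (A ^ k) (Ep ρ)} with hS
  set W : Submodule ℂ Nstar := Submodule.span ℂ S with hW
  -- every element of W is moved into the range of Ep by a positive power of A
  have haveU : ∀ x ∈ W, ∃ (n : ℕ) (τ : Mstar), (A ^ (n : ℤ)) x = Ep τ := by
    intro x hx
    induction hx using Submodule.span_induction with
    | mem x hxS =>
      obtain ⟨k, ρ, rfl⟩ := hxS
      refine ⟨(-k).toNat, (Lp ^ k.toNat) ρ, ?_⟩
      rw [hcomp, show (((-k).toNat : ℤ) + k) = (k.toNat : ℤ) by omega]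
      exact hAEpz k.toNat ρ
    | zero => exact ⟨0, 0, by simp⟩
    | add u v hu hv ihu ihv =>
      obtain ⟨n, τ, hn⟩ := ihu
      obtain ⟨m, τ', hm⟩ := ihv
      refine ⟨n + m, (Lp ^ m) τ + (Lp ^ n) τ', ?_⟩
      have e1 : (A ^ ((n + m : ℕ) : ℤ)) (u + v)
          = (A ^ (m : ℤ)) ((A ^ (n : ℤ)) u) + (A ^ (n : ℤ)) ((A ^ (m : ℤ)) v) := by
        rw [map_add, hcomp, hcomp, show ((m : ℤ) + n) = ((n + m : ℕ) : ℤ) by push_cast; ring,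
          show ((n : ℤ) + m) = ((n + m : ℕ) : ℤ) by push_cast; ring]
      rw [e1, hn, hm, hAEpz m τ, hAEpz n τ', map_add]
    | smul c u hu ihu =>
      obtain ⟨n, τ, hn⟩ := ihu
      exact ⟨n, c • τ, by rw [map_smul, hn, map_smul]⟩
  -- the fundamental estimate : |y(x)| ≤ p * ‖x‖ for x ∈ W
  have hbound : ∀ x ∈ W, ‖y x‖ ≤ p * ‖x‖ := by
    intro x hx
    obtain ⟨n, τ, hτ⟩ := haveU x hx
    have hxnorm : ‖Ep τ‖ = ‖x‖ := by rw [← hτ]; exact (A ^ (n : ℤ)).norm_map x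
    have key : ∀ m : ℕ, ‖y x‖ ≤ p * ‖(Lp ^ m) τ‖ := by
      intro m
      have hx2 : x = (A ^ (-((m : ℤ) + n))) (Ep ((Lp ^ m) τ)) := by
        rw [← hAEpz m τ, ← hτ, hcomp, hcomp,
          show -((m : ℤ) + n) + (m : ℤ) + (n : ℤ) = 0 by ring, zpow_zero]
        rfl
      have hyx : y x = (E ((α ^ (-((m : ℤ) + n))) y)) ((Lp ^ m) τ) := by
        rw [hEp, hI1, ← hx2]
      rw [hyx]
      calc ‖(E ((α ^ (-((m : ℤ) + n))) y)) ((Lp ^ m) τ)‖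
          ≤ ‖E ((α ^ (-((m : ℤ) + n))) y)‖ * ‖(Lp ^ m) τ‖ :=
            (E ((α ^ (-((m : ℤ) + n))) y)).le_opNorm _
        _ ≤ p * ‖(Lp ^ m) τ‖ := mul_le_mul_of_nonneg_right (hple _) (norm_nonneg _)
    have hlim : Filter.Tendsto (fun m : ℕ => p * ‖(Lp ^ m) τ‖) Filter.atTop
        (nhds (p * ‖Ep τ‖)) := (hAsym' τ).const_mul p
    have := ge_of_tendsto hlim (Filter.Eventually.of_forall key)
    rwa [hxnorm] at this
  -- Hahn–Banach extension
  let f : W →L[ℂ] ℂ := y.comp W.subtypeL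
  have hfnorm : ‖f‖ ≤ p := by
    refine ContinuousLinearMap.opNorm_le_bound f hp0 (fun x => ?_)
    exact hbound x x.2
  obtain ⟨g, hg, hgnorm⟩ := exists_extension_norm_eq W f
  -- g - y lies in K
  have hzK : ∀ k : ℤ, E ((α ^ k) (g - y)) = 0 := by
    intro k
    ext ρ
    have hmem : (A ^ k) (Ep ρ) ∈ W := Submodule.subset_span ⟨k, ρ, rfl⟩
    have hgy : g ((A ^ k) (Ep ρ)) = y ((A ^ k) (Ep ρ)) := hg ⟨_, hmem⟩
    rw [hEp, hI1]
    simp [ContinuousLinearMap.sub_apply, hgy]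
  -- conclusion
  have hne : Nonempty {z : Nstar →L[ℂ] ℂ // ∀ k : ℤ, E ((α ^ k) z) = 0} :=
    ⟨⟨0, fun k => by simp⟩⟩
  refine le_antisymm ?_ ?_
  · refine ciSup_le (fun k => le_ciInf (fun z => ?_))
    obtain ⟨z, hzk⟩ := z
    have h1 : E ((α ^ k) (y + z)) = E ((α ^ k) y) := by
      rw [map_add, map_add, hzk k, add_zero]
    calc ‖E ((α ^ k) y)‖ = ‖E ((α ^ k) (y + z))‖ := by rw [h1]
      _ ≤ ‖E‖ * ‖(α ^ k) (y + z)‖ := E.le_opNorm _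
      _ ≤ 1 * ‖(α ^ k) (y + z)‖ := mul_le_mul_of_nonneg_right hEnorm (norm_nonneg _)
      _ = ‖y + z‖ := by rw [one_mul, (α ^ k).norm_map]
  · have hbddB : BddBelow (Set.range fun z : {z : Nstar →L[ℂ] ℂ // ∀ k : ℤ, E ((α ^ k) z) = 0}
        => ‖y + (z : Nstar →L[ℂ] ℂ)‖) := by
      refine ⟨0, ?_⟩
      rintro _ ⟨z, rfl⟩
      exact norm_nonneg _
    have h1 : (⨅ z : {z : Nstar →L[ℂ] ℂ // ∀ k : ℤ, E ((α ^ k) z) = 0},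
        ‖y + (z : Nstar →L[ℂ] ℂ)‖) ≤ ‖y + (g - y)‖ := ciInf_le hbddB ⟨g - y, hzK⟩
    have h2 : y + (g - y) = g := by abel
    rw [h2] at h1
    exact h1.trans (hgnorm.trans_le hfnorm)
end

section
/- Let M⋆ be a complex Banach space with continuous dual M, and let L : M → M be a normal linear map with ‖L‖ ≤ 1. Then every x ∈ ∩_{n≥0} L^n(ball M) is the initial term of an inverse sequence lying in ball M: there exists a bilateral sequence (x_n)_{n∈ℤ} in M with ‖x_n‖ ≤ 1 for all n, x_0 = x, and x_n = L(x_{n+1}) for all n ∈ ℤ. Consequently E₀(ball S_L) = ∩_{n≥0} L^n(ball M). -/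
open Filter Topology

set_option synthInstance.maxHeartbeats 400000 in
/-- Let `M` be the continuous dual of a complex Banach space `M⋆` and
`L : M → M` a normal linear map with `‖L‖ ≤ 1`.  Then every
`x ∈ ⋂_{n ≥ 0} L^n(ball M)` is the initial term of an inverse sequence lying in
`ball M`: there is a bilateral sequence `(x_n)_{n ∈ ℤ}` with `‖x_n‖ ≤ 1`, `x_0 = x` and
`x_n = L(x_{n+1})` for all `n ∈ ℤ`.  Consequently, the image under the evaluation map
`E₀ : (x_n) ↦ x₀` of the unit ball of the space `S_L` of inverse sequences (the
sequences with `‖x_n‖ ≤ 1` for all `n`) equals `⋂_{n ≥ 0} L^n(ball M)`. -/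
theorem stmt4 {Mstar : Type*}
    [NormedAddCommGroup Mstar] [NormedSpace ℂ Mstar] [CompleteSpace Mstar]
    (L : (Mstar →L[ℂ] ℂ) →L[ℂ] (Mstar →L[ℂ] ℂ))
    (hLnormal : ∃ Lp : Mstar →L[ℂ] Mstar,
      ∀ (x : Mstar →L[ℂ] ℂ) (ρ : Mstar), L x ρ = x (Lp ρ))
    (hLnorm : ‖L‖ ≤ 1) :
    (∀ x ∈ ⋂ n : ℕ, (L ^ n) '' Metric.closedBall 0 1,
      ∃ xs : ℤ → (Mstar →L[ℂ] ℂ),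
        (∀ n : ℤ, ‖xs n‖ ≤ 1) ∧ xs 0 = x ∧ ∀ n : ℤ, xs n = L (xs (n + 1))) ∧
    ((fun xs : ℤ → (Mstar →L[ℂ] ℂ) => xs 0) ''
        {xs | (∀ n : ℤ, xs n = L (xs (n + 1))) ∧ ∀ n : ℤ, ‖xs n‖ ≤ 1}
      = ⋂ n : ℕ, (L ^ n) '' Metric.closedBall 0 1) := by
  obtain ⟨Lp, hLp⟩ := hLnormal
  -- powers of `L` are contractive
  have hpow : ∀ (k : ℕ) (z : Mstar →L[ℂ] ℂ), ‖(L ^ k) z‖ ≤ ‖z‖ := by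
    intro k
    induction k with
    | zero => intro z; simp
    | succ k ih =>
      intro z
      rw [pow_succ, ContinuousLinearMap.mul_apply]
      calc ‖(L ^ k) (L z)‖ ≤ ‖L z‖ := ih _
        _ ≤ ‖L‖ * ‖z‖ := L.le_opNorm z
        _ ≤ 1 * ‖z‖ := by gcongr
        _ = ‖z‖ := one_mul _
  have main : ∀ x ∈ ⋂ n : ℕ, (L ^ n) '' Metric.closedBall 0 1,
      ∃ xs : ℤ → (Mstar →L[ℂ] ℂ),
        (∀ n : ℤ, ‖xs n‖ ≤ 1) ∧ xs 0 = x ∧ ∀ n : ℤ, xs n = L (xs (n + 1)) := by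
    intro x hx
    have hx' : ∀ n : ℕ, ∃ y, ‖y‖ ≤ 1 ∧ (L ^ n) y = x := by
      intro n
      obtain ⟨y, hy, hyx⟩ := Set.mem_iInter.mp hx n
      exact ⟨y, by simpa [mem_closedBall_zero_iff] using hy, hyx⟩
    choose y hy1 hy2 using hx'
    -- approximate inverse sequences
    set s : ℕ → ℤ → (Mstar →L[ℂ] ℂ) :=
      fun N n => if n ≤ (N : ℤ) then (L ^ ((N : ℤ) - n).toNat) (y N) else 0 with hs
    have hsnorm : ∀ N n, ‖s N n‖ ≤ 1 := by
      intro N n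
      simp only [hs]
      split
      · exact le_trans (hpow _ _) (hy1 N)
      · simp
    set U : Ultrafilter ℕ := Ultrafilter.of atTop with hUdef
    have hU : (U : Filter ℕ) ≤ atTop := Ultrafilter.of_le _
    have hmem : ∀ (n : ℤ) (ρ : Mstar) (N : ℕ), s N n ρ ∈ Metric.closedBall (0 : ℂ) ‖ρ‖ := by
      intro n ρ N
      rw [mem_closedBall_zero_iff]
      calc ‖s N n ρ‖ ≤ ‖s N n‖ * ‖ρ‖ := (s N n).le_opNorm ρ
        _ ≤ 1 * ‖ρ‖ := by gcongr; exact hsnorm N n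
        _ = ‖ρ‖ := one_mul _
    have hex : ∀ (n : ℤ) (ρ : Mstar),
        ∃ a, Tendsto (fun N => s N n ρ) (U : Filter ℕ) (𝓝 a) := by
      intro n ρ
      obtain ⟨a, -, ha⟩ := (isCompact_closedBall (0 : ℂ) ‖ρ‖).ultrafilter_le_nhds
        (U.map (fun N => s N n ρ))
        (by
          rw [Ultrafilter.coe_map, le_principal_iff, mem_map]
          exact univ_mem' (fun N => hmem n ρ N))
      exact ⟨a, ha⟩
    set c : ℤ → Mstar → ℂ := fun n ρ => limUnder (U : Filter ℕ) (fun N => s N n ρ) with hc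
    have htend : ∀ (n : ℤ) (ρ : Mstar),
        Tendsto (fun N => s N n ρ) (U : Filter ℕ) (𝓝 (c n ρ)) := by
      intro n ρ
      exact tendsto_nhds_limUnder (hex n ρ)
    have hadd : ∀ (n : ℤ) (ρ σ : Mstar), c n (ρ + σ) = c n ρ + c n σ := by
      intro n ρ σ
      refine tendsto_nhds_unique (htend n (ρ + σ)) ?_
      have := (htend n ρ).add (htend n σ)
      simpa [map_add] using this
    have hsmul : ∀ (n : ℤ) (a : ℂ) (ρ : Mstar), c n (a • ρ) = a • c n ρ := by
      intro n a ρ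
      refine tendsto_nhds_unique (htend n (a • ρ)) ?_
      have := (htend n ρ).const_smul a
      simpa [map_smul] using this
    have hbound : ∀ (n : ℤ) (ρ : Mstar), ‖c n ρ‖ ≤ 1 * ‖ρ‖ := by
      intro n ρ
      rw [one_mul, ← mem_closedBall_zero_iff]
      exact Metric.isClosed_closedBall.mem_of_tendsto (htend n ρ)
        (Eventually.of_forall (fun N => hmem n ρ N))
    set xs : ℤ → (Mstar →L[ℂ] ℂ) := fun n =>
      LinearMap.mkContinuous
        { toFun := c n
          map_add' := hadd n
          map_smul' := hsmul n } 1 (hbound n) with hxs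
    have hxsapp : ∀ (n : ℤ) (ρ : Mstar), xs n ρ = c n ρ := fun n ρ => rfl
    refine ⟨xs, ?_, ?_, ?_⟩
    · intro n
      exact LinearMap.mkContinuous_norm_le _ zero_le_one _
    · -- xs 0 = x
      ext ρ
      rw [hxsapp]
      refine tendsto_nhds_unique (htend 0 ρ) ?_
      have heq : ∀ N : ℕ, s N 0 ρ = x ρ := by
        intro N
        have h0 : (0 : ℤ) ≤ (N : ℤ) := Int.natCast_nonneg N
        simp only [hs, if_pos h0, sub_zero, Int.toNat_natCast]
        rw [hy2 N]
      simp only [heq]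
      exact tendsto_const_nhds
    · -- xs n = L (xs (n+1))
      intro n
      ext ρ
      rw [hxsapp, hLp, hxsapp]
      refine tendsto_nhds_unique (htend n ρ) ?_
      have heq : ∀ᶠ N : ℕ in (U : Filter ℕ), s N (n + 1) (Lp ρ) = s N n ρ := by
        have hatTop : ∀ᶠ N : ℕ in atTop, n + 1 ≤ (N : ℤ) := by
          refine eventually_atTop.mpr ⟨(n + 1).toNat, fun N hN => ?_⟩
          omega
        filter_upwards [hU hatTop] with N hN
        have hn : n ≤ (N : ℤ) := by omega
        have hk : ((N : ℤ) - n).toNat = ((N : ℤ) - (n + 1)).toNat + 1 := by omega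
        simp only [hs, if_pos hn, if_pos hN, hk, pow_succ', ContinuousLinearMap.mul_apply]
        rw [hLp]
      exact Filter.Tendsto.congr' heq (htend (n + 1) (Lp ρ))
  constructor
  · exact main
  · ext x
    constructor
    · rintro ⟨xs, ⟨hrel, hnorm⟩, rfl⟩
      have key : ∀ n : ℕ, xs 0 = (L ^ n) (xs (n : ℤ)) := by
        intro n
        induction n with
        | zero => simp
        | succ n ih =>
          rw [ih, hrel (n : ℤ)]
          rw [pow_succ, ContinuousLinearMap.mul_apply]
          norm_num
      refine Set.mem_iInter.mpr (fun n => ⟨xs (n : ℤ), ?_, (key n).symm⟩)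
      rw [mem_closedBall_zero_iff]
      exact hnorm _
    · intro hx
      obtain ⟨xs, h1, h2, h3⟩ := main x hx
      exact ⟨xs, ⟨h3, h1⟩, h2⟩
end

section
/- Let M⋆ be a complex Banach space with continuous dual M, and let L : M → M be a normal linear map with ‖L‖ ≤ 1. Then the triple (S_L, σ, E₀) is a nondegenerate reversible lift of L with the asymptotic norm property; that is: σ is a surjective linear isometry of S_L; ‖E₀‖ ≤ 1 and E₀ ∘ σ = L ∘ E₀; if x ∈ S_L satisfies E₀(σ^{-n}(x)) = 0 for all integers n ≥ 0 then x = 0; and for every ρ ∈ M⋆, ‖ρ ∘ E₀‖ = lim_{k→∞} ‖ρ ∘ L^k‖. -/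
open Filter Topology


private lemma iterate_key {M : Type*} [NormedAddCommGroup M] [NormedSpace ℂ M]
    (L : M →L[ℂ] M) (x : ℤ → M)
    (hrec : ∀ n : ℤ, x n = L (x (n + 1))) :
    ∀ (k : ℕ) (n : ℤ), x n = (L ^ k) (x (n + k)) := by
  intro k
  induction k with
  | zero => intro n; simp
  | succ k ih =>
    intro n
    rw [ih n, hrec (n + k), pow_succ, ContinuousLinearMap.mul_apply]
    congr 2
    push_cast; ring_nf

private lemma pow_contr {M : Type*} [NormedAddCommGroup M] [NormedSpace ℂ M]
    (L : M →L[ℂ] M) (hL : ‖L‖ ≤ 1) :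
    ∀ (j : ℕ) (y : M), ‖(L ^ j) y‖ ≤ ‖y‖ := by
  intro j
  induction j with
  | zero => intro y; simp
  | succ j ih =>
    intro y
    rw [pow_succ, ContinuousLinearMap.mul_apply]
    refine (ih _).trans ((L.le_opNorm y).trans ?_)
    exact mul_le_of_le_one_left (norm_nonneg y) hL

set_option synthInstance.maxHeartbeats 200000 in
private theorem stmt5_aux {Mstar : Type*}
    [NormedAddCommGroup Mstar] [NormedSpace ℂ Mstar] [CompleteSpace Mstar]
    (L : (Mstar →L[ℂ] ℂ) →L[ℂ] (Mstar →L[ℂ] ℂ))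
    (hLnormal : ∃ Lp : Mstar →L[ℂ] Mstar,
      ∀ (x : Mstar →L[ℂ] ℂ) (ρ : Mstar), L x ρ = x (Lp ρ))
    (hLnorm : ‖L‖ ≤ 1) :
    (∀ ρ : Mstar,
      Filter.Tendsto
        (fun k : ℕ => ‖(ContinuousLinearMap.apply ℂ ℂ ρ).comp (L ^ k)‖)
        Filter.atTop
        (nhds (sSup ((fun x : ℤ → (Mstar →L[ℂ] ℂ) => ‖x 0 ρ‖) ''
          {x | (∀ n : ℤ, x n = L (x (n + 1))) ∧ ∀ n : ℤ, ‖x n‖ ≤ 1})))) := by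
  obtain ⟨Lp, hLp⟩ := hLnormal
  intro ρ
  set T : ℕ → (Mstar →L[ℂ] ℂ) →L[ℂ] ℂ :=
    fun k => (ContinuousLinearMap.apply ℂ ℂ ρ).comp (L ^ k) with hT
  have hTapp : ∀ (k : ℕ) (ψ : Mstar →L[ℂ] ℂ), T k ψ = ((L ^ k) ψ) ρ := fun k ψ => rfl
  have hanti : Antitone fun k => ‖T k‖ := by
    refine antitone_nat_of_succ_le fun k => ?_
    have hc : T (k + 1) = (T k).comp L := by
      ext ψ
      simp [hT, pow_succ, ContinuousLinearMap.mul_apply]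
    rw [hc]
    refine (ContinuousLinearMap.opNorm_comp_le _ _).trans ?_
    exact mul_le_of_le_one_right (norm_nonneg _) hLnorm
  have hbdd : BddBelow (Set.range fun k => ‖T k‖) := by
    refine ⟨0, ?_⟩; rintro r ⟨k, rfl⟩; exact norm_nonneg (T k)
  set a : ℝ := ⨅ k, ‖T k‖ with ha
  have htends : Tendsto (fun k => ‖T k‖) atTop (𝓝 a) := tendsto_atTop_ciInf hanti hbdd
  have ha_le : ∀ k, a ≤ ‖T k‖ := fun k => ciInf_le hbdd k
  -- upper bound: every member of the image set is ≤ a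
  set S : Set ℝ := (fun x : ℤ → (Mstar →L[ℂ] ℂ) => ‖x 0 ρ‖) ''
      {x | (∀ n : ℤ, x n = L (x (n + 1))) ∧ ∀ n : ℤ, ‖x n‖ ≤ 1} with hS
  have hub : ∀ r ∈ S, r ≤ a := by
    rintro r ⟨x, ⟨hrec, hbd⟩, rfl⟩
    refine le_ciInf fun k => ?_
    have hx0 : x 0 = (L ^ k) (x k) := by
      simpa using iterate_key L x hrec k 0
    calc ‖x 0 ρ‖ = ‖T k (x k)‖ := by rw [hTapp, ← hx0]
      _ ≤ ‖T k‖ * ‖x k‖ := (T k).le_opNorm _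
      _ ≤ ‖T k‖ * 1 := by
          have := hbd (k : ℤ)
          gcongr
      _ = ‖T k‖ := mul_one _
  -- choose near-optimal vectors
  have hchoice : ∀ k : ℕ, ∃ m : Mstar →L[ℂ] ℂ, ‖m‖ ≤ 1 ∧ ‖T k‖ - 1 / (k + 1) ≤ ‖T k m‖ := by
    intro k
    obtain ⟨m, hm1, hm2⟩ := (T k).exists_lt_apply_of_lt_opNorm
      (r := ‖T k‖ - 1 / (k + 1)) (by
        have : (0:ℝ) < 1 / (k + 1) := by positivity
        linarith)
    exact ⟨m, hm1.le, hm2.le⟩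
  choose m hm1 hm2 using hchoice
  -- the approximating sequences
  set g : ℕ → ℤ → (Mstar →L[ℂ] ℂ) :=
    fun k n => if n ≤ (k : ℤ) then (L ^ ((k : ℤ) - n).toNat) (m k) else 0 with hg
  have hgnorm : ∀ k n, ‖g k n‖ ≤ 1 := by
    intro k n
    by_cases h : n ≤ (k : ℤ)
    · simp only [hg, if_pos h]
      exact (pow_contr L hLnorm _ _).trans (hm1 k)
    · simp [hg, if_neg h]
  have hgrec : ∀ (k : ℕ) (n : ℤ), n < (k : ℤ) → g k n = L (g k (n + 1)) := by
    intro k n hn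
    simp only [hg, if_pos hn.le, if_pos (by omega : n + 1 ≤ (k : ℤ))]
    have h1 : ((k : ℤ) - n).toNat = ((k : ℤ) - (n + 1)).toNat + 1 := by omega
    rw [h1, pow_succ', ContinuousLinearMap.mul_apply]
  have hg0 : ∀ k : ℕ, (g k 0) ρ = T k (m k) := by
    intro k
    simp only [hg, if_pos (by positivity : (0:ℤ) ≤ (k:ℤ)), hTapp]
    norm_num
  -- compactness setup in the weak dual
  set B : Set (WeakDual ℂ Mstar) := WeakDual.toStrongDual ⁻¹' Metric.closedBall 0 1 with hB
  have hBcomp : IsCompact B := WeakDual.isCompact_closedBall (𝕜 := ℂ) 0 1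
  set K : Set (ℤ → WeakDual ℂ Mstar) := Set.univ.pi fun _ => B with hK
  have hKcomp : IsCompact K := isCompact_univ_pi fun _ => hBcomp
  set fW : ℕ → ℤ → WeakDual ℂ Mstar := fun k n => StrongDual.toWeakDual (g k n) with hfW
  have hfK : ∀ k, fW k ∈ K := by
    intro k n _
    simp only [hB, Set.mem_preimage, Metric.mem_closedBall, dist_zero_right]
    exact hgnorm k n
  set U : Ultrafilter ℕ := Ultrafilter.of Filter.atTop with hUdef
  have hU : (U : Filter ℕ) ≤ Filter.atTop := Ultrafilter.of_le _
  obtain ⟨x, hxK, hxU⟩ := hKcomp.ultrafilter_le_nhds (U.map fW)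
    (le_principal_iff.mpr (Filter.mem_map.mpr (Filter.univ_mem' hfK)))
  have hxT : Tendsto fW U (𝓝 x) := hxU
  -- the weak*-continuous version of L
  set LW : WeakDual ℂ Mstar → WeakDual ℂ Mstar := fun φ => StrongDual.toWeakDual (L (WeakDual.toStrongDual φ)) with hLW
  have hLWc : Continuous LW := by
    apply WeakDual.continuous_of_continuous_eval
    intro ρ'
    have : (fun φ : WeakDual ℂ Mstar => (LW φ) ρ') = fun φ : WeakDual ℂ Mstar => φ (Lp ρ') := by
      funext φ
      exact hLp (WeakDual.toStrongDual φ) ρ'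
    rw [this]
    exact WeakDual.eval_continuous (Lp ρ')
  -- closed constraint sets
  have hC : ∀ n : ℤ, IsClosed {z : ℤ → WeakDual ℂ Mstar | z n = LW (z (n + 1))} := by
    intro n
    exact isClosed_eq (continuous_apply n) (hLWc.comp (continuous_apply (n + 1)))
  have hxrec : ∀ n : ℤ, x n = LW (x (n + 1)) := by
    intro n
    refine (hC n).mem_of_tendsto hxT ?_
    refine hU ?_
    filter_upwards [eventually_ge_atTop (n.toNat + 1)] with k hk
    have hn : n < (k : ℤ) := by
      have : (n.toNat : ℤ) + 1 ≤ (k : ℤ) := by exact_mod_cast hk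
      omega
    show fW k n = LW (fW k (n + 1))
    simp only [hfW, hLW]
    rw [hgrec k n hn]
    rfl
  -- the limiting sequence in the normed dual
  set y : ℤ → (Mstar →L[ℂ] ℂ) := fun n => WeakDual.toStrongDual (x n) with hy
  have hyrec : ∀ n : ℤ, y n = L (y (n + 1)) := by
    intro n
    have := hxrec n
    simp only [hy]
    rw [this]
    rfl
  have hynorm : ∀ n : ℤ, ‖y n‖ ≤ 1 := by
    intro n
    have := hxK n (Set.mem_univ n)
    simpa [hB, dist_zero_right] using this
  -- the value at 0
  have hvalT : Tendsto (fun k => ‖(fW k 0) ρ‖) U (𝓝 ‖(x 0) ρ‖) := by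
    have hev : Continuous fun z : ℤ → WeakDual ℂ Mstar => (z 0) ρ :=
      (WeakDual.eval_continuous ρ).comp (continuous_apply (0 : ℤ))
    exact ((hev.tendsto x).comp hxT).norm
  have hlow : Tendsto (fun k : ℕ => a - 1 / ((k : ℝ) + 1)) U (𝓝 a) := by
    refine Tendsto.mono_left ?_ hU
    have := tendsto_one_div_add_atTop_nhds_zero_nat (𝕜 := ℝ)
    simpa using tendsto_const_nhds.sub this
  have hge : a ≤ ‖(x 0) ρ‖ := by
    refine le_of_tendsto_of_tendsto' hlow hvalT fun k => ?_
    have h1 : (fW k 0) ρ = (g k 0) ρ := rfl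
    rw [h1, hg0 k]
    calc a - 1 / ((k : ℝ) + 1) ≤ ‖T k‖ - 1 / ((k : ℝ) + 1) := by
          have := ha_le k; linarith
      _ ≤ ‖T k (m k)‖ := hm2 k
  have hy0 : ‖y 0 ρ‖ = ‖(x 0) ρ‖ := rfl
  have hmem : ‖y 0 ρ‖ ∈ S := ⟨y, ⟨hyrec, hynorm⟩, rfl⟩
  have heq : a = ‖y 0 ρ‖ := le_antisymm (hy0 ▸ hge) (hub _ hmem)
  have hsup : sSup S = a := IsGreatest.csSup_eq ⟨heq ▸ hmem, hub⟩
  rw [hsup]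
  exact htends

/-- The space `S_L` of inverse sequences of a map `L : M → M`: norm-bounded bilateral
sequences `(x_n)_{n ∈ ℤ}` with `x_n = L (x_{n+1})` for all `n`.  (It is a normed space
under the supremum norm `‖(x_n)‖ = ⨆ n, ‖x n‖`.) -/
def invSeqSet {M : Type*} [Norm M] (L : M → M) : Set (ℤ → M) :=
  {x | BddAbove (Set.range fun n => ‖x n‖) ∧ ∀ n : ℤ, x n = L (x (n + 1))}

/-- The shift `σ((x_n)_{n ∈ ℤ}) = (x_{n-1})_{n ∈ ℤ}` on bilateral sequences. -/
def shiftSeq {M : Type*} (x : ℤ → M) : ℤ → M := fun n => x (n - 1)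

/-- Let `M` be the continuous dual of a complex Banach space `M⋆` and
`L : M → M` a normal linear map with `‖L‖ ≤ 1`.  Then `(S_L, σ, E₀)` — where
`σ` is the shift and `E₀((x_n)) = x₀` — is a nondegenerate reversible lift of `L` with
the asymptotic norm property.  Explicitly: `σ` is a linear map of `S_L` onto itself
preserving the supremum norm (a surjective linear isometry); `E₀` is contractive,
i.e. `‖x₀‖ ≤ ⨆ n, ‖x n‖` (so `‖E₀‖ ≤ 1`); `E₀ ∘ σ = L ∘ E₀`; if `E₀(σ^{-n} x) = x n`
vanishes for all integers `n ≥ 0` then `x = 0`; and for every `ρ ∈ M⋆`,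
`‖ρ ∘ L^k‖ → ‖ρ ∘ E₀‖` (the operator norm of `ρ ∘ E₀` being the supremum of
`‖(x 0) ρ‖` over the unit ball of `S_L`). -/
theorem stmt5 {Mstar : Type*}
    [NormedAddCommGroup Mstar] [NormedSpace ℂ Mstar] [CompleteSpace Mstar]
    (L : (Mstar →L[ℂ] ℂ) →L[ℂ] (Mstar →L[ℂ] ℂ))
    (hLnormal : ∃ Lp : Mstar →L[ℂ] Mstar,
      ∀ (x : Mstar →L[ℂ] ℂ) (ρ : Mstar), L x ρ = x (Lp ρ))
    (hLnorm : ‖L‖ ≤ 1) :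
    -- σ is linear …
    (∀ x y : ℤ → (Mstar →L[ℂ] ℂ), shiftSeq (x + y) = shiftSeq x + shiftSeq y) ∧
    (∀ (c : ℂ) (x : ℤ → (Mstar →L[ℂ] ℂ)), shiftSeq (c • x) = c • shiftSeq x) ∧
    -- … mapping S_L onto S_L …
    (∀ x ∈ invSeqSet L, shiftSeq x ∈ invSeqSet L) ∧
    (∀ y ∈ invSeqSet L, ∃ x ∈ invSeqSet L, shiftSeq x = y) ∧
    -- … isometrically for the supremum norm:
    (∀ x ∈ invSeqSet L, (⨆ n : ℤ, ‖shiftSeq x n‖) = ⨆ n : ℤ, ‖x n‖) ∧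
    -- ‖E₀‖ ≤ 1:
    (∀ x ∈ invSeqSet L, ‖x 0‖ ≤ ⨆ n : ℤ, ‖x n‖) ∧
    -- E₀ ∘ σ = L ∘ E₀:
    (∀ x ∈ invSeqSet L, shiftSeq x 0 = L (x 0)) ∧
    -- nondegeneracy (note E₀(σ^{-n}(x)) = x n):
    (∀ x ∈ invSeqSet L, (∀ n : ℕ, x (n : ℤ) = 0) → x = 0) ∧
    -- the asymptotic norm property ‖ρ ∘ E₀‖ = lim_k ‖ρ ∘ L^k‖:
    (∀ ρ : Mstar,
      Filter.Tendsto
        (fun k : ℕ => ‖(ContinuousLinearMap.apply ℂ ℂ ρ).comp (L ^ k)‖)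
        Filter.atTop
        (nhds (sSup ((fun x : ℤ → (Mstar →L[ℂ] ℂ) => ‖x 0 ρ‖) ''
          {x | (∀ n : ℤ, x n = L (x (n + 1))) ∧ ∀ n : ℤ, ‖x n‖ ≤ 1})))) := by
  refine ⟨fun x y => rfl, fun c x => rfl, ?_, ?_, ?_, ?_, ?_, ?_,
    stmt5_aux L hLnormal hLnorm⟩
  · -- σ maps S_L to S_L
    rintro x ⟨hbd, hrec⟩
    refine ⟨hbd.mono ?_, fun n => ?_⟩
    · rintro r ⟨n, rfl⟩; exact ⟨n - 1, rfl⟩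
    · show x (n - 1) = L (x (n + 1 - 1))
      rw [show n + 1 - 1 = (n - 1) + 1 by ring]
      exact hrec (n - 1)
  · -- surjectivity of σ
    rintro y ⟨hbd, hrec⟩
    refine ⟨fun n => y (n + 1), ⟨hbd.mono ?_, fun n => hrec (n + 1)⟩, ?_⟩
    · rintro r ⟨n, rfl⟩; exact ⟨n + 1, rfl⟩
    · funext n; show y (n - 1 + 1) = y n; congr 1; ring
  · -- σ is isometric
    rintro x -
    have hr : (Set.range fun n : ℤ => ‖shiftSeq x n‖) = Set.range fun n : ℤ => ‖x n‖ := by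
      ext r
      constructor
      · rintro ⟨n, rfl⟩; exact ⟨n - 1, rfl⟩
      · rintro ⟨n, rfl⟩; exact ⟨n + 1, by simp [shiftSeq]⟩
    exact congrArg sSup hr
  · -- E₀ contractive
    rintro x ⟨hbd, -⟩
    exact le_ciSup hbd 0
  · -- E₀ ∘ σ = L ∘ E₀
    rintro x ⟨-, hrec⟩
    show x (0 - 1) = L (x 0)
    rw [show (0 : ℤ) = (0 - 1) + 1 by ring]
    exact hrec (0 - 1)
  · -- nondegeneracy
    rintro x ⟨-, hrec⟩ h0
    funext n
    rcases le_or_gt 0 n with hn | hn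
    · have := h0 n.toNat
      rwa [Int.toNat_of_nonneg hn] at this
    · have hkey := iterate_key L x hrec (-n).toNat n
      rw [Int.toNat_of_nonneg (by omega), show n + -n = 0 by ring] at hkey
      have hx0 : x 0 = 0 := by simpa using h0 0
      simp [hkey, hx0]
end

section
/- Let M⋆ and N⋆ be complex Banach spaces with continuous duals M and N, and let L : M → M be a normal linear map with ‖L‖ ≤ 1. Let (N, α, E) be a reversible lift of L such that E is normal with ‖E‖ ≤ 1, α is a surjective linear isometry with α and α⁻¹ normal, the lift is nondegenerate, and ‖ρ ∘ E‖ = lim_{n→∞} ‖ρ ∘ L^n‖ for every ρ ∈ M⋆. Then the map θ : N → S_L defined by θ(y) = (E(α^{-n}(y)))_{n∈ℤ} is a well-defined surjective linear isometry of N onto S_L satisfying θ ∘ α = σ ∘ θ and E₀ ∘ θ = E; moreover, θ is the unique linear map from N to S_L satisfying these two intertwining identities. -/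
/-- The comparison map `θ(y) = (E(α^{-n}(y)))_{n ∈ ℤ}` from `N` into bilateral
sequences. -/
def liftTheta {M N : Type*} [NormedAddCommGroup N] [NormedSpace ℂ N]
    (E : N → M) (α : N ≃ₗᵢ[ℂ] N) : N → ℤ → M :=
  fun y n => E ((α ^ (-n)) y)

lemma dense_of_dual_eq_zero {X : Type*} [NormedAddCommGroup X] [NormedSpace ℂ X]
    (p : Submodule ℂ X) (h : ∀ g : X →L[ℂ] ℂ, (∀ s ∈ p, g s = 0) → g = 0) :
    Dense (p : Set X) := by
  by_contra hd
  have hne : p.topologicalClosure ≠ ⊤ := by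
    intro htop
    apply hd
    rw [dense_iff_closure_eq, ← Submodule.topologicalClosure_coe, htop]
    rfl
  obtain ⟨x, hx⟩ : ∃ x : X, x ∉ p.topologicalClosure := by
    by_contra hall
    push_neg at hall
    exact hne (Submodule.eq_top_iff'.mpr hall)
  set q := p.topologicalClosure with hq
  haveI : IsClosed (q : Set X) := p.isClosed_topologicalClosure
  have hx0 : (Submodule.Quotient.mk x : X ⧸ q) ≠ 0 := by
    simpa [Submodule.Quotient.mk_eq_zero] using hx
  obtain ⟨g, hg1, hgx⟩ := exists_dual_vector ℂ _ (norm_ne_zero_iff.mpr hx0)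
  have hmk : ∀ m : X, ‖q.mkQ m‖ ≤ 1 * ‖m‖ := by
    intro m
    rw [one_mul]
    exact Submodule.Quotient.norm_mk_le q m
  let π : X →L[ℂ] X ⧸ q := LinearMap.mkContinuous q.mkQ 1 hmk
  have hG : g.comp π = 0 := by
    apply h
    intro s hs
    have hπ : π s = 0 := by
      show (Submodule.Quotient.mk s : X ⧸ q) = 0
      rw [Submodule.Quotient.mk_eq_zero]
      exact Submodule.le_topologicalClosure p hs
    show g (π s) = 0
    rw [hπ, map_zero]
  have h0 : g (Submodule.Quotient.mk x) = 0 := by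
    have := ContinuousLinearMap.ext_iff.mp hG x
    exact (by simpa using this : g (π x) = 0)
  rw [hgx] at h0
  have : ‖(Submodule.Quotient.mk x : X ⧸ q)‖ = 0 := by
    have := congrArg Complex.re h0
    simpa using this
  exact hx0 (norm_eq_zero.mp this)

set_option maxHeartbeats 2000000 in
set_option synthInstance.maxHeartbeats 400000 in
/-- Let `M`, `N` be the duals of complex Banach spaces `M⋆`, `N⋆`,
`L : M → M` normal with `‖L‖ ≤ 1`, and `(N, α, E)` a reversible lift of `L` with `E`
normal, `‖E‖ ≤ 1`, `α` a surjective linear isometry with `α` and `α⁻¹` normal, the lift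
nondegenerate, and `‖ρ ∘ E‖ = lim_n ‖ρ ∘ L^n‖` for every `ρ ∈ M⋆`.  Then
`θ(y) = (E(α^{-n}(y)))_{n ∈ ℤ}` is a well-defined surjective linear isometry from `N`
onto `S_L` satisfying `θ ∘ α = σ ∘ θ` and `E₀ ∘ θ = E`, and `θ` is the unique linear
map from `N` to `S_L` with these two intertwining properties. -/
theorem stmt6 {Mstar Nstar : Type*}
    [NormedAddCommGroup Mstar] [NormedSpace ℂ Mstar] [CompleteSpace Mstar]
    [NormedAddCommGroup Nstar] [NormedSpace ℂ Nstar] [CompleteSpace Nstar]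
    (L : (Mstar →L[ℂ] ℂ) →L[ℂ] (Mstar →L[ℂ] ℂ))
    (hLnormal : ∃ Lp : Mstar →L[ℂ] Mstar,
      ∀ (x : Mstar →L[ℂ] ℂ) (ρ : Mstar), L x ρ = x (Lp ρ))
    (hLnorm : ‖L‖ ≤ 1)
    (E : (Nstar →L[ℂ] ℂ) →L[ℂ] (Mstar →L[ℂ] ℂ))
    (hEnormal : ∃ Ep : Mstar →L[ℂ] Nstar,
      ∀ (y : Nstar →L[ℂ] ℂ) (ρ : Mstar), E y ρ = y (Ep ρ))
    (hEnorm : ‖E‖ ≤ 1)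
    (α : (Nstar →L[ℂ] ℂ) ≃ₗᵢ[ℂ] (Nstar →L[ℂ] ℂ))
    (hαnormal : ∃ a : Nstar →L[ℂ] Nstar,
      ∀ (y : Nstar →L[ℂ] ℂ) (ρ : Nstar), α y ρ = y (a ρ))
    (hαinvnormal : ∃ b : Nstar →L[ℂ] Nstar,
      ∀ (y : Nstar →L[ℂ] ℂ) (ρ : Nstar), α.symm y ρ = y (b ρ))
    (hEq : ∀ y : Nstar →L[ℂ] ℂ, E (α y) = L (E y))
    (hnondeg : ∀ y : Nstar →L[ℂ] ℂ, (∀ n : ℕ, E ((α ^ (-(n : ℤ))) y) = 0) → y = 0)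
    (hAsym : ∀ ρ : Mstar,
      Filter.Tendsto
        (fun n : ℕ => ‖(ContinuousLinearMap.apply ℂ ℂ ρ).comp (L ^ n)‖)
        Filter.atTop
        (nhds ‖(ContinuousLinearMap.apply ℂ ℂ ρ).comp E‖)) :
    -- θ is well defined: it takes values in S_L
    (∀ y : Nstar →L[ℂ] ℂ, liftTheta (⇑E) α y ∈ invSeqSet L) ∧
    -- θ is linear
    (∀ y z : Nstar →L[ℂ] ℂ,
      liftTheta (⇑E) α (y + z) = liftTheta (⇑E) α y + liftTheta (⇑E) α z) ∧
    (∀ (c : ℂ) (y : Nstar →L[ℂ] ℂ),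
      liftTheta (⇑E) α (c • y) = c • liftTheta (⇑E) α y) ∧
    -- θ is isometric for the supremum norm on S_L
    (∀ y : Nstar →L[ℂ] ℂ, (⨆ n : ℤ, ‖liftTheta (⇑E) α y n‖) = ‖y‖) ∧
    -- θ maps N onto S_L
    (∀ x ∈ invSeqSet L, ∃ y : Nstar →L[ℂ] ℂ, liftTheta (⇑E) α y = x) ∧
    -- θ ∘ α = σ ∘ θ and E₀ ∘ θ = E
    (∀ y : Nstar →L[ℂ] ℂ, liftTheta (⇑E) α (α y) = shiftSeq (liftTheta (⇑E) α y)) ∧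
    (∀ y : Nstar →L[ℂ] ℂ, liftTheta (⇑E) α y 0 = E y) ∧
    -- uniqueness: θ is the only linear map with the two intertwining properties
    (∀ θ' : (Nstar →L[ℂ] ℂ) → ℤ → (Mstar →L[ℂ] ℂ),
      (∀ y z, θ' (y + z) = θ' y + θ' z) →
      (∀ (c : ℂ) y, θ' (c • y) = c • θ' y) →
      (∀ y, θ' (α y) = shiftSeq (θ' y)) →
      (∀ y, θ' y 0 = E y) →
      θ' = liftTheta (⇑E) α) := by
  classical
  obtain ⟨Lp, hLp⟩ := hLnormal
  obtain ⟨Ep, hEp⟩ := hEnormal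
  obtain ⟨a, ha⟩ := hαnormal
  obtain ⟨b, hb⟩ := hαinvnormal
  have hzpow : ∀ (m k : ℤ) (z : Nstar →L[ℂ] ℂ),
      (α ^ (m + k)) z = (α ^ m) ((α ^ k) z) := by
    intro m k z; rw [zpow_add]; rfl
  have hzpow0 : ∀ z : Nstar →L[ℂ] ℂ, (α ^ (0 : ℤ)) z = z := by
    intro z; rw [zpow_zero]; rfl
  have hzpow1 : ∀ z : Nstar →L[ℂ] ℂ, (α ^ (1 : ℤ)) z = α z := by
    intro z; rw [zpow_one]
  have hzpowneg1 : ∀ z : Nstar →L[ℂ] ℂ, (α ^ (-1 : ℤ)) z = α.symm z := by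
    intro z; rw [zpow_neg_one]; rfl
  -- predual identities
  have hba : ∀ ρ : Nstar, b (a ρ) = ρ := by
    intro ρ
    rw [NormedSpace.eq_iff_forall_dual_eq ℂ]
    intro g
    have h1 : α.symm g (a ρ) = g (b (a ρ)) := hb g (a ρ)
    have h2 : α (α.symm g) ρ = (α.symm g) (a ρ) := ha (α.symm g) ρ
    rw [α.apply_symm_apply] at h2
    rw [← h1, ← h2]
  have hab : ∀ ρ : Nstar, a (b ρ) = ρ := by
    intro ρ
    rw [NormedSpace.eq_iff_forall_dual_eq ℂ]
    intro g
    have h1 : α g (b ρ) = g (a (b ρ)) := ha g (b ρ)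
    have h2 : α.symm (α g) ρ = (α g) (b ρ) := hb (α g) ρ
    rw [α.symm_apply_apply] at h2
    rw [← h1, ← h2]
  have hanorm : ∀ ρ : Nstar, ‖a ρ‖ ≤ ‖ρ‖ := by
    intro ρ
    refine NormedSpace.norm_le_dual_bound ℂ _ (norm_nonneg ρ) fun f => ?_
    rw [← ha f ρ]
    calc ‖α f ρ‖ ≤ ‖α f‖ * ‖ρ‖ := (α f).le_opNorm ρ
      _ = ‖ρ‖ * ‖f‖ := by rw [α.norm_map]; ring
  have hbnorm : ∀ ρ : Nstar, ‖b ρ‖ ≤ ‖ρ‖ := by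
    intro ρ
    refine NormedSpace.norm_le_dual_bound ℂ _ (norm_nonneg ρ) fun f => ?_
    rw [← hb f ρ]
    calc ‖α.symm f ρ‖ ≤ ‖α.symm f‖ * ‖ρ‖ := (α.symm f).le_opNorm ρ
      _ = ‖ρ‖ * ‖f‖ := by rw [α.symm.norm_map]; ring
  have hbiso : ∀ ρ : Nstar, ‖b ρ‖ = ‖ρ‖ := by
    intro ρ
    refine le_antisymm (hbnorm ρ) ?_
    calc ‖ρ‖ = ‖a (b ρ)‖ := by rw [hab]
      _ ≤ ‖b ρ‖ := hanorm _
  have hLpnorm : ∀ ρ : Mstar, ‖Lp ρ‖ ≤ ‖ρ‖ := by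
    intro ρ
    refine NormedSpace.norm_le_dual_bound ℂ _ (norm_nonneg ρ) fun f => ?_
    rw [← hLp f ρ]
    calc ‖L f ρ‖ ≤ ‖L f‖ * ‖ρ‖ := (L f).le_opNorm ρ
      _ ≤ (‖L‖ * ‖f‖) * ‖ρ‖ :=
        mul_le_mul_of_nonneg_right (L.le_opNorm f) (norm_nonneg ρ)
      _ ≤ (1 * ‖f‖) * ‖ρ‖ := by
        have := mul_le_mul_of_nonneg_right hLnorm (norm_nonneg f)
        exact mul_le_mul_of_nonneg_right this (norm_nonneg ρ)
      _ = ‖ρ‖ * ‖f‖ := by ring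
  -- the predual isometry A = b with inverse a
  let A : Nstar ≃ₗᵢ[ℂ] Nstar :=
    { LinearEquiv.ofLinear (re₁₂ := RingHomInvPair.ids) (re₂₁ := RingHomInvPair.ids) b.toLinearMap a.toLinearMap
        (by ext ρ; simpa using hba ρ) (by ext ρ; simpa using hab ρ) with
      norm_map' := hbiso }
  have hA : ∀ v : Nstar, A v = b v := fun _ => rfl
  have hAsm : ∀ v : Nstar, A.symm v = a v := fun _ => rfl
  have hzpowA : ∀ (m k : ℤ) (v : Nstar),
      (A ^ (m + k)) v = (A ^ m) ((A ^ k) v) := by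
    intro m k v; rw [zpow_add]; rfl
  have hzpowA1 : ∀ v : Nstar, (A ^ (1 : ℤ)) v = b v := by
    intro v; rw [zpow_one]; rfl
  have hzpowA0 : ∀ v : Nstar, (A ^ (0 : ℤ)) v = v := by
    intro v; rw [zpow_zero]; rfl
  have hzpowAneg1 : ∀ v : Nstar, (A ^ (-1 : ℤ)) v = a v := by
    intro v; rw [zpow_neg_one]; rfl
  -- Ep ∘ Lp = a ∘ Ep
  have hEpLp : ∀ ρ : Mstar, Ep (Lp ρ) = a (Ep ρ) := by
    intro ρ
    rw [NormedSpace.eq_iff_forall_dual_eq ℂ]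
    intro g
    have h1 : E (α g) ρ = L (E g) ρ := by rw [hEq]
    rw [hEp (α g) ρ, ha g (Ep ρ), hLp (E g) ρ, hEp g (Lp ρ)] at h1
    exact h1.symm ▸ rfl
  have hEpA : ∀ ρ : Mstar, Ep ρ = A (Ep (Lp ρ)) := by
    intro ρ
    rw [hA, hEpLp, hba]
  -- the key duality formula
  have hK : ∀ (n : ℤ) (y : Nstar →L[ℂ] ℂ) (ρ : Mstar),
      E ((α ^ (-n)) y) ρ = y ((A ^ n) (Ep ρ)) := by
    intro n
    induction n using Int.induction_on with
    | zero =>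
      intro y ρ
      rw [neg_zero, hzpow0, hzpowA0, hEp]
    | succ k ih =>
      intro y ρ
      have e1 : (α ^ (-((k : ℤ) + 1))) y = (α ^ (-(k : ℤ))) (α.symm y) := by
        have h' : (-((k : ℤ) + 1)) = (-(k : ℤ)) + (-1) := by ring
        rw [h', hzpow, hzpowneg1]
      rw [e1, ih (α.symm y) ρ, hb]
      have e2 : (A ^ ((k : ℤ) + 1)) (Ep ρ) = b ((A ^ (k : ℤ)) (Ep ρ)) := by
        rw [add_comm (k : ℤ) 1, hzpowA, hzpowA1]
      rw [e2]
    | pred k ih =>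
      intro y ρ
      have e1 : (α ^ (-(-(k : ℤ) - 1))) y = (α ^ (k : ℤ)) (α y) := by
        have h' : (-(-(k : ℤ) - 1)) = (k : ℤ) + 1 := by ring
        rw [h', hzpow, hzpow1]
      rw [e1]
      have := ih (α y) ρ
      rw [neg_neg] at this
      rw [this, ha]
      have e2 : (A ^ (-(k : ℤ) - 1)) (Ep ρ) = a ((A ^ (-(k : ℤ))) (Ep ρ)) := by
        rw [sub_eq_add_neg, add_comm (-(k : ℤ)) (-1), hzpowA, hzpowAneg1]
      rw [e2]
  -- shifting representations
  have hshift : ∀ (n : ℤ) (m : ℕ) (ρ : Mstar),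
      (A ^ n) (Ep ρ) = (A ^ (n + m)) (Ep ((Lp ^ m) ρ)) := by
    intro n m ρ
    induction m with
    | zero => simp
    | succ k ih =>
      rw [ih]
      have e1 : (Lp ^ (k + 1)) ρ = Lp ((Lp ^ k) ρ) := by
        rw [pow_succ']
        rfl
      have e2 : Ep ((Lp ^ k) ρ) = A (Ep (Lp ((Lp ^ k) ρ))) := hEpA _
      rw [e2, e1]
      have e3 : ((n + (k : ℤ)) + 1) = n + ((k : ℤ) + 1) := by ring
      have : (A ^ (n + ((k : ℕ) + 1 : ℕ) : ℤ)) (Ep (Lp ((Lp ^ k) ρ)))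
          = (A ^ (n + (k : ℤ))) ((A ^ (1 : ℤ)) (Ep (Lp ((Lp ^ k) ρ)))) := by
        rw [← hzpowA]
        congr 1
        push_cast
        ring
      rw [this, hzpowA1, hA]
  -- the norm limits in the predual
  have hinclN : ∀ v : Nstar, ‖NormedSpace.inclusionInDoubleDual ℂ Nstar v‖ = ‖v‖ :=
    fun v => (NormedSpace.inclusionInDoubleDualLi ℂ (E := Nstar)).norm_map v
  have hinclM : ∀ v : Mstar, ‖NormedSpace.inclusionInDoubleDual ℂ Mstar v‖ = ‖v‖ :=
    fun v => (NormedSpace.inclusionInDoubleDualLi ℂ (E := Mstar)).norm_map v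
  have hLpn : ∀ (n : ℕ) (x : Mstar →L[ℂ] ℂ) (ρ : Mstar),
      (L ^ n) x ρ = x ((Lp ^ n) ρ) := by
    intro n
    induction n with
    | zero => intro x ρ; rfl
    | succ k ih =>
      intro x ρ
      have e1 : (L ^ (k + 1)) x = (L ^ k) (L x) := by
        rw [pow_succ]
        rfl
      rw [e1, ih (L x) ρ, hLp]
      congr 1
      rw [pow_succ']
      rfl
  have hEpLim : ∀ ρ : Mstar,
      Filter.Tendsto (fun m : ℕ => ‖(Lp ^ m) ρ‖) Filter.atTop (nhds ‖Ep ρ‖) := by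
    intro ρ
    have h1 : (ContinuousLinearMap.apply ℂ ℂ ρ).comp E
        = NormedSpace.inclusionInDoubleDual ℂ Nstar (Ep ρ) := by
      ext y
      exact hEp y ρ
    have h2 : ∀ n : ℕ, (ContinuousLinearMap.apply ℂ ℂ ρ).comp (L ^ n)
        = NormedSpace.inclusionInDoubleDual ℂ Mstar ((Lp ^ n) ρ) := by
      intro n
      ext x
      exact hLpn n x ρ
    have := hAsym ρ
    rw [h1, hinclN] at this
    refine this.congr fun n => ?_
    rw [h2 n, hinclM]
  -- the submodule U of the predual
  let U : Submodule ℂ Nstar :=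
    { carrier := {s | ∃ (n : ℤ) (τ : Mstar), s = (A ^ n) (Ep τ)}
      add_mem' := by
        rintro s t ⟨n, τ, rfl⟩ ⟨m, σ, rfl⟩
        refine ⟨max n m, (Lp ^ (max n m - n).toNat) τ + (Lp ^ (max n m - m).toNat) σ, ?_⟩
        have hn : n + ((max n m - n).toNat : ℤ) = max n m := by
          rw [Int.toNat_of_nonneg (by omega)]; ring
        have hm : m + ((max n m - m).toNat : ℤ) = max n m := by
          rw [Int.toNat_of_nonneg (by omega)]; ring
        rw [map_add, map_add, hshift n (max n m - n).toNat τ,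
          hshift m (max n m - m).toNat σ, hn, hm]
      zero_mem' := ⟨0, 0, by simp⟩
      smul_mem' := by
        rintro c s ⟨n, τ, rfl⟩
        exact ⟨n, c • τ, by rw [map_smul, map_smul]⟩ }
  have hUmem : ∀ s : Nstar, s ∈ U ↔ ∃ (n : ℤ) (τ : Mstar), s = (A ^ n) (Ep τ) :=
    fun s => Iff.rfl
  -- density of U
  have hdense : Dense (U : Set Nstar) := by
    apply dense_of_dual_eq_zero
    intro g hg
    apply hnondeg
    intro n
    ext ρ
    rw [hK]
    simpa using hg ((A ^ (n : ℤ)) (Ep ρ)) ⟨n, ρ, rfl⟩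
  -- the key norm bound
  have hKeyGen : ∀ (y : Nstar →L[ℂ] ℂ) (C : ℝ),
      (∀ k : ℤ, ‖E ((α ^ (-k)) y)‖ ≤ C) →
      ∀ (n : ℤ) (τ : Mstar), ‖y ((A ^ n) (Ep τ))‖ ≤ C * ‖Ep τ‖ := by
    intro y C hC n τ
    have hm : ∀ m : ℕ, ‖y ((A ^ n) (Ep τ))‖ ≤ C * ‖(Lp ^ m) τ‖ := by
      intro m
      rw [hshift n m τ, ← hK (n + m) y ((Lp ^ m) τ)]
      calc ‖E ((α ^ (-(n + (m : ℤ)))) y) ((Lp ^ m) τ)‖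
          ≤ ‖E ((α ^ (-(n + (m : ℤ)))) y)‖ * ‖(Lp ^ m) τ‖ :=
            ContinuousLinearMap.le_opNorm _ _
        _ ≤ C * ‖(Lp ^ m) τ‖ :=
            mul_le_mul_of_nonneg_right (hC _) (norm_nonneg _)
    exact ge_of_tendsto' ((hEpLim τ).const_mul C) hm
  -- uniform bound for theta
  have hbound : ∀ (y : Nstar →L[ℂ] ℂ) (n : ℤ), ‖E ((α ^ (-n)) y)‖ ≤ ‖y‖ := by
    intro y n
    calc ‖E ((α ^ (-n)) y)‖ ≤ ‖E‖ * ‖(α ^ (-n)) y‖ := E.le_opNorm _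
      _ ≤ 1 * ‖(α ^ (-n)) y‖ :=
        mul_le_mul_of_nonneg_right hEnorm (norm_nonneg _)
      _ = ‖y‖ := by rw [one_mul, LinearIsometryEquiv.norm_map]
  refine ⟨?_, ?_, ?_, ?_, ?_, ?_, ?_, ?_⟩
  · -- well-definedness
    intro y
    constructor
    · refine ⟨‖y‖, ?_⟩
      rintro r ⟨n, rfl⟩
      exact hbound y n
    · intro n
      show E ((α ^ (-n)) y) = L (E ((α ^ (-(n + 1))) y))
      rw [← hEq]
      congr 1
      have h' : (-n : ℤ) = 1 + (-(n + 1)) := by ring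
      rw [h', hzpow, hzpow1]
  · -- additivity
    intro y z
    funext n
    show E ((α ^ (-n)) (y + z)) = E ((α ^ (-n)) y) + E ((α ^ (-n)) z)
    rw [map_add, map_add]
  · -- homogeneity
    intro c y
    funext n
    show E ((α ^ (-n)) (c • y)) = c • E ((α ^ (-n)) y)
    rw [map_smul, map_smul]
  · -- isometry
    intro y
    have hbdd : BddAbove (Set.range fun n : ℤ => ‖E ((α ^ (-n)) y)‖) := by
      refine ⟨‖y‖, ?_⟩
      rintro r ⟨n, rfl⟩
      exact hbound y n
    apply le_antisymm
    · exact ciSup_le fun n => hbound y n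
    · set C := ⨆ n : ℤ, ‖liftTheta (⇑E) α y n‖ with hC
      have hCeq : C = ⨆ n : ℤ, ‖E ((α ^ (-n)) y)‖ := rfl
      have hCb : ∀ n : ℤ, ‖E ((α ^ (-n)) y)‖ ≤ C := by
        intro n
        rw [hCeq]
        exact le_ciSup hbdd n
      have hC0 : (0 : ℝ) ≤ C := le_trans (norm_nonneg _) (hCb 0)
      refine ContinuousLinearMap.opNorm_le_bound y hC0 ?_
      intro s
      have hcl : IsClosed {s : Nstar | ‖y s‖ ≤ C * ‖s‖} :=
        isClosed_le (y.continuous.norm) (continuous_const.mul continuous_norm)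
      have hsub : (U : Set Nstar) ⊆ {s : Nstar | ‖y s‖ ≤ C * ‖s‖} := by
        rintro s ⟨n, τ, rfl⟩
        have : ‖(A ^ n) (Ep τ)‖ = ‖Ep τ‖ := LinearIsometryEquiv.norm_map _ _
        rw [Set.mem_setOf_eq, this]
        exact hKeyGen y C hCb n τ
      have : s ∈ closure (U : Set Nstar) := by
        rw [hdense.closure_eq]
        trivial
      exact closure_minimal hsub hcl this
  · -- surjectivity
    intro x hx
    obtain ⟨hxbdd, hxrec⟩ := hx
    obtain ⟨C₀, hC₀'⟩ := hxbdd
    have hC₀ : ∀ n : ℤ, ‖x n‖ ≤ C₀ := fun n => hC₀' (Set.mem_range_self n)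
    have hxiter : ∀ (n : ℤ) (m : ℕ) (ρ : Mstar), x n ρ = x (n + m) ((Lp ^ m) ρ) := by
      intro n m
      induction m with
      | zero => intro ρ; simp
      | succ k ih =>
        intro ρ
        have h1 : x (n + k) ((Lp ^ k) ρ) = x (n + k + 1) (Lp ((Lp ^ k) ρ)) := by
          rw [hxrec (n + k), hLp]
        rw [ih ρ, h1]
        have e1 : (Lp ^ (k + 1)) ρ = Lp ((Lp ^ k) ρ) := by rw [pow_succ']; rfl
        have e2 : n + ((k : ℕ) + 1 : ℕ) = n + k + 1 := by push_cast; ring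
        rw [e1, e2]
    have hWb : ∀ (n : ℤ) (τ : Mstar), ‖x n τ‖ ≤ C₀ * ‖Ep τ‖ := by
      intro n τ
      have hm : ∀ m : ℕ, ‖x n τ‖ ≤ C₀ * ‖(Lp ^ m) τ‖ := by
        intro m
        rw [hxiter n m τ]
        calc ‖x (n + m) ((Lp ^ m) τ)‖ ≤ ‖x (n + m)‖ * ‖(Lp ^ m) τ‖ :=
              ContinuousLinearMap.le_opNorm _ _
          _ ≤ C₀ * ‖(Lp ^ m) τ‖ :=
              mul_le_mul_of_nonneg_right (hC₀ _) (norm_nonneg _)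
      exact ge_of_tendsto' ((hEpLim τ).const_mul C₀) hm
    have hW : ∀ (n₁ : ℤ) (τ₁ : Mstar) (n₂ : ℤ) (τ₂ : Mstar),
        (A ^ n₁) (Ep τ₁) = (A ^ n₂) (Ep τ₂) → x n₁ τ₁ = x n₂ τ₂ := by
      intro n₁ τ₁ n₂ τ₂ h
      set N := max n₁ n₂ with hN
      set k₁ := (N - n₁).toNat with hk₁
      set k₂ := (N - n₂).toNat with hk₂
      have hNk₁ : n₁ + (k₁ : ℤ) = N := by
        rw [hk₁, Int.toNat_of_nonneg (by omega)]; ring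
      have hNk₂ : n₂ + (k₂ : ℤ) = N := by
        rw [hk₂, Int.toNat_of_nonneg (by omega)]; ring
      rw [hshift n₁ k₁ τ₁, hshift n₂ k₂ τ₂, hNk₁, hNk₂] at h
      have hinj := (A ^ N).injective h
      have hEp0 : Ep ((Lp ^ k₁) τ₁ - (Lp ^ k₂) τ₂) = 0 := by
        rw [map_sub, hinj, sub_self]
      have hx0 : x N ((Lp ^ k₁) τ₁ - (Lp ^ k₂) τ₂) = 0 := by
        have := hWb N ((Lp ^ k₁) τ₁ - (Lp ^ k₂) τ₂)
        rw [hEp0, norm_zero, mul_zero] at this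
        exact norm_le_zero_iff.mp this
      rw [map_sub, sub_eq_zero] at hx0
      calc x n₁ τ₁ = x (n₁ + k₁) ((Lp ^ k₁) τ₁) := hxiter n₁ k₁ τ₁
        _ = x N ((Lp ^ k₁) τ₁) := by rw [hNk₁]
        _ = x N ((Lp ^ k₂) τ₂) := hx0
        _ = x (n₂ + k₂) ((Lp ^ k₂) τ₂) := by rw [hNk₂]
        _ = x n₂ τ₂ := (hxiter n₂ k₂ τ₂).symm
    -- the functional on U
    let f₀ : ↥U → ℂ := fun s =>
      x (Classical.choose s.2) (Classical.choose (Classical.choose_spec s.2))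
    have hf₀ : ∀ (s : ↥U) (n : ℤ) (τ : Mstar),
        (s : Nstar) = (A ^ n) (Ep τ) → f₀ s = x n τ := by
      intro s n τ h
      have hc : (s : Nstar)
          = (A ^ (Classical.choose s.2)) (Ep (Classical.choose (Classical.choose_spec s.2))) :=
        Classical.choose_spec (Classical.choose_spec s.2)
      exact hW _ _ _ _ (by rw [← hc, h])
    have hrep : ∀ s : ↥U, ∃ (n : ℤ) (τ : Mstar), (s : Nstar) = (A ^ n) (Ep τ) :=
      fun s => s.2
    let flin : ↥U →ₗ[ℂ] ℂ :=
      { toFun := f₀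
        map_add' := by
          intro s t
          obtain ⟨ns, τs, hs⟩ := hrep s
          obtain ⟨nt, τt, ht⟩ := hrep t
          set N := max ns nt with hN
          set ks := (N - ns).toNat with hks
          set kt := (N - nt).toNat with hkt
          have hNks : ns + (ks : ℤ) = N := by
            rw [hks, Int.toNat_of_nonneg (by omega)]; ring
          have hNkt : nt + (kt : ℤ) = N := by
            rw [hkt, Int.toNat_of_nonneg (by omega)]; ring
          have hs' : (s : Nstar) = (A ^ N) (Ep ((Lp ^ ks) τs)) := by
            rw [hs, hshift ns ks τs, hNks]
          have ht' : (t : Nstar) = (A ^ N) (Ep ((Lp ^ kt) τt)) := by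
            rw [ht, hshift nt kt τt, hNkt]
          have hst : ((s + t : ↥U) : Nstar)
              = (A ^ N) (Ep ((Lp ^ ks) τs + (Lp ^ kt) τt)) := by
            rw [Submodule.coe_add, hs', ht', map_add, map_add]
          rw [hf₀ (s + t) N _ hst, hf₀ s N _ hs', hf₀ t N _ ht', map_add]
        map_smul' := by
          intro c s
          show f₀ (c • s) = c • f₀ s
          obtain ⟨n, τ, h⟩ := hrep s
          have hcs : ((c • s : ↥U) : Nstar) = (A ^ n) (Ep (c • τ)) := by
            rw [Submodule.coe_smul, h, map_smul, map_smul]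
          rw [hf₀ (c • s) n _ hcs, hf₀ s n τ h, map_smul] }
    have hfb : ∀ s : ↥U, ‖flin s‖ ≤ C₀ * ‖s‖ := by
      intro s
      obtain ⟨n, τ, h⟩ := hrep s
      have h1 : flin s = x n τ := hf₀ s n τ h
      have h2 : ‖(s : Nstar)‖ = ‖Ep τ‖ := by
        rw [h]
        exact LinearIsometryEquiv.norm_map _ _
      rw [h1]
      calc ‖x n τ‖ ≤ C₀ * ‖Ep τ‖ := hWb n τ
        _ = C₀ * ‖s‖ := by rw [← h2]; rfl
    let fC : ↥U →L[ℂ] ℂ := LinearMap.mkContinuous flin C₀ hfb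
    obtain ⟨y, hy, _⟩ := exists_extension_norm_eq U fC
    refine ⟨y, ?_⟩
    funext n
    ext ρ
    show E ((α ^ (-n)) y) ρ = x n ρ
    rw [hK]
    have hmem : (A ^ n) (Ep ρ) ∈ U := ⟨n, ρ, rfl⟩
    have := hy ⟨(A ^ n) (Ep ρ), hmem⟩
    rw [this]
    exact hf₀ ⟨(A ^ n) (Ep ρ), hmem⟩ n ρ rfl
  · -- intertwining with the shift
    intro y
    funext n
    show E ((α ^ (-n)) (α y)) = E ((α ^ (-(n - 1))) y)
    congr 1
    have h' : (-(n - 1) : ℤ) = (-n) + 1 := by ring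
    rw [h', hzpow, hzpow1]
  · -- evaluation at 0
    intro y
    show E ((α ^ (-(0 : ℤ))) y) = E y
    rw [neg_zero, hzpow0]
  · -- uniqueness
    intro θ' hadd hsmul hsh hE0
    have key : ∀ (n : ℤ) (y : Nstar →L[ℂ] ℂ), θ' y n = E ((α ^ (-n)) y) := by
      intro n
      induction n using Int.induction_on with
      | zero =>
        intro y
        rw [hE0, neg_zero, hzpow0]
      | succ k ih =>
        intro y
        have h1 : θ' (α (α.symm y)) ((k : ℤ) + 1) = shiftSeq (θ' (α.symm y)) ((k : ℤ) + 1) := by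
          rw [hsh (α.symm y)]
        rw [α.apply_symm_apply] at h1
        have h2 : shiftSeq (θ' (α.symm y)) ((k : ℤ) + 1) = θ' (α.symm y) (k : ℤ) := by
          show θ' (α.symm y) ((k : ℤ) + 1 - 1) = θ' (α.symm y) (k : ℤ)
          norm_num
        rw [h1, h2, ih (α.symm y)]
        congr 1
        have h' : (-((k : ℤ) + 1)) = (-(k : ℤ)) + (-1) := by ring
        rw [h', hzpow, hzpowneg1]
      | pred k ih =>
        intro y
        have h1 : θ' (α y) (-(k : ℤ)) = shiftSeq (θ' y) (-(k : ℤ)) := by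
          rw [hsh y]
        have h2 : shiftSeq (θ' y) (-(k : ℤ)) = θ' y (-(k : ℤ) - 1) := rfl
        rw [h2] at h1
        rw [← h1, ih (α y)]
        congr 1
        have h' : (-(-(k : ℤ) - 1)) = (-(-(k : ℤ))) + 1 := by ring
        rw [h', hzpow, hzpow1]
    funext y n
    exact key n y
end

section
/- Let M⋆ be a complex Banach space with continuous dual M, and let L : M → M be a normal linear map with ‖L‖ ≤ 1. Then the following are equivalent: (i) every inverse sequence for L is constant, i.e., every norm-bounded bilateral sequence (x_n)_{n∈ℤ} in M with x_n = L(x_{n+1}) for all n satisfies x_n = x_0 for all n ∈ ℤ; (ii) every x ∈ ∩_{n≥0} L^n(ball M) satisfies L(x) = x; (iii) L is slowly oscillating, i.e., lim_{n→∞} ‖ρ ∘ L^{n+1} − ρ ∘ L^n‖ = 0 for every ρ ∈ M⋆. -/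
open Filter Topology Metric

namespace Stmt7Aux

noncomputable def UF : Ultrafilter ℕ := hyperfilter ℕ

lemma UF_le_atTop : (UF : Filter ℕ) ≤ atTop := by
  rw [← Nat.cofinite_eq_atTop]; exact hyperfilter_le_cofinite

variable {E : Type*} [NormedAddCommGroup E] [NormedSpace ℂ E]

lemma tendsto_limUnder_UF {g : ℕ → ℂ} {C : ℝ} (h : ∀ k, ‖g k‖ ≤ C) :
    Tendsto g (UF : Filter ℕ) (𝓝 (limUnder (UF : Filter ℕ) g)) := by
  apply tendsto_nhds_limUnder
  have hle : (UF.map g : Filter ℂ) ≤ Filter.principal (closedBall (0:ℂ) C) := by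
    rw [le_principal_iff, Ultrafilter.coe_map, mem_map]
    exact univ_mem' fun k => by simpa [dist_zero_right] using h k
  obtain ⟨a, -, ha⟩ := (isCompact_closedBall (0:ℂ) C).ultrafilter_le_nhds (UF.map g) hle
  exact ⟨a, ha⟩

lemma apply_bound {f : ℕ → (E →L[ℂ] ℂ)} (hf : ∀ k, ‖f k‖ ≤ 1) (ρ : E) (k : ℕ) :
    ‖f k ρ‖ ≤ ‖ρ‖ := by
  calc ‖f k ρ‖ ≤ ‖f k‖ * ‖ρ‖ := (f k).le_opNorm ρ
    _ ≤ 1 * ‖ρ‖ := mul_le_mul_of_nonneg_right (hf k) (norm_nonneg ρ)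
    _ = ‖ρ‖ := one_mul _

/-- A weak* cluster point (along the fixed free ultrafilter `UF`) of a sequence of
functionals in the unit ball. -/
noncomputable def wlim (f : ℕ → (E →L[ℂ] ℂ)) (hf : ∀ k, ‖f k‖ ≤ 1) : E →L[ℂ] ℂ :=
  LinearMap.mkContinuous
    { toFun := fun ρ => limUnder (UF : Filter ℕ) (fun k => f k ρ)
      map_add' := fun ρ σ => by
        have hρ := tendsto_limUnder_UF (apply_bound hf ρ)
        have hσ := tendsto_limUnder_UF (apply_bound hf σ)
        have hρσ := tendsto_limUnder_UF (apply_bound hf (ρ + σ))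
        refine tendsto_nhds_unique hρσ ?_
        have h : (fun k => f k (ρ + σ)) = fun k => f k ρ + f k σ := by
          funext k; simp
        rw [h]; exact hρ.add hσ
      map_smul' := fun c ρ => by
        have hρ := tendsto_limUnder_UF (apply_bound hf ρ)
        have hcρ := tendsto_limUnder_UF (apply_bound hf (c • ρ))
        refine tendsto_nhds_unique hcρ ?_
        have h : (fun k => f k (c • ρ)) = fun k => c • f k ρ := by
          funext k; simp
        rw [h]
        simpa using hρ.const_smul c }
    1
    (fun ρ => by
      have hρ := tendsto_limUnder_UF (apply_bound hf ρ)
      have h := le_of_tendsto hρ.norm (Eventually.of_forall fun k => apply_bound hf ρ k)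
      show ‖limUnder (UF : Filter ℕ) (fun k => f k ρ)‖ ≤ 1 * ‖ρ‖
      rw [one_mul]; exact h)

lemma wlim_tendsto {f : ℕ → (E →L[ℂ] ℂ)} (hf : ∀ k, ‖f k‖ ≤ 1) (ρ : E) :
    Tendsto (fun k => f k ρ) (UF : Filter ℕ) (𝓝 (wlim f hf ρ)) :=
  tendsto_limUnder_UF (apply_bound hf ρ)

lemma wlim_norm_le {f : ℕ → (E →L[ℂ] ℂ)} (hf : ∀ k, ‖f k‖ ≤ 1) : ‖wlim f hf‖ ≤ 1 :=
  LinearMap.mkContinuous_norm_le _ zero_le_one _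

lemma wlim_eq_of_tendsto {f : ℕ → (E →L[ℂ] ℂ)} (hf : ∀ k, ‖f k‖ ≤ 1) {ρ : E} {a : ℂ}
    (h : Tendsto (fun k => f k ρ) (UF : Filter ℕ) (𝓝 a)) : wlim f hf ρ = a :=
  tendsto_nhds_unique (wlim_tendsto hf ρ) h

end Stmt7Aux

open Stmt7Aux

set_option maxHeartbeats 1000000 in
set_option synthInstance.maxHeartbeats 400000 in
/-- Let `M` be the continuous dual of a complex Banach space `M⋆` and
`L : M → M` a normal linear map with `‖L‖ ≤ 1`.  The following are equivalent:
(i) every inverse sequence for `L` is constant;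
(ii) every `x ∈ ⋂_{n ≥ 0} L^n(ball M)` satisfies `L x = x`;
(iii) `L` is slowly oscillating: `‖ρ ∘ L^{n+1} − ρ ∘ L^n‖ → 0` for every `ρ ∈ M⋆`. -/
theorem stmt7 {Mstar : Type*}
    [NormedAddCommGroup Mstar] [NormedSpace ℂ Mstar] [CompleteSpace Mstar]
    (L : (Mstar →L[ℂ] ℂ) →L[ℂ] (Mstar →L[ℂ] ℂ))
    (hLnormal : ∃ Lp : Mstar →L[ℂ] Mstar,
      ∀ (x : Mstar →L[ℂ] ℂ) (ρ : Mstar), L x ρ = x (Lp ρ))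
    (hLnorm : ‖L‖ ≤ 1) :
    ((∀ xs : ℤ → (Mstar →L[ℂ] ℂ),
        BddAbove (Set.range fun n => ‖xs n‖) →
        (∀ n : ℤ, xs n = L (xs (n + 1))) →
        ∀ n : ℤ, xs n = xs 0)
      ↔ (∀ x ∈ ⋂ n : ℕ, (L ^ n) '' Metric.closedBall 0 1, L x = x)) ∧
    ((∀ x ∈ ⋂ n : ℕ, (L ^ n) '' Metric.closedBall 0 1, L x = x)
      ↔ (∀ ρ : Mstar,
          Filter.Tendsto
            (fun n : ℕ =>
              ‖(ContinuousLinearMap.apply ℂ ℂ ρ).comp (L ^ (n + 1)) -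
                (ContinuousLinearMap.apply ℂ ℂ ρ).comp (L ^ n)‖)
            Filter.atTop (nhds 0))) := by
  obtain ⟨Lp, hLp⟩ := hLnormal
  -- `L^n` acts on functionals as precomposition with `Lp^n`
  have hpow : ∀ (n : ℕ) (y : Mstar →L[ℂ] ℂ) (ρ : Mstar), (L ^ n) y ρ = y ((Lp ^ n) ρ) := by
    intro n
    induction n with
    | zero => intro y ρ; simp
    | succ n ih =>
      intro y ρ
      rw [pow_succ, ContinuousLinearMap.mul_apply, ih (L y) ρ, hLp, pow_succ',
        ContinuousLinearMap.mul_apply]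
  -- iterates are contractions
  have hLn : ∀ (n : ℕ) (y : Mstar →L[ℂ] ℂ), ‖(L ^ n) y‖ ≤ ‖y‖ := by
    intro n
    induction n with
    | zero => intro y; simp
    | succ n ih =>
      intro y
      rw [pow_succ', ContinuousLinearMap.mul_apply]
      calc ‖L ((L ^ n) y)‖ ≤ ‖L‖ * ‖(L ^ n) y‖ := L.le_opNorm _
        _ ≤ 1 * ‖y‖ := by
            have := ih y
            have h0 := norm_nonneg ((L ^ n) y)
            nlinarith [ContinuousLinearMap.opNorm_nonneg L]
        _ = ‖y‖ := one_mul _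
  -- `L^(j+1) y ρ = (L^j y) (Lp ρ)`
  have hpow1 : ∀ (j : ℕ) (y : Mstar →L[ℂ] ℂ) (ρ : Mstar),
      (L ^ (j + 1)) y ρ = (L ^ j) y (Lp ρ) := by
    intro j y ρ
    rw [pow_succ', ContinuousLinearMap.mul_apply, hLp]
  -- (ii) → (i)
  have h21 : (∀ x ∈ ⋂ n : ℕ, (L ^ n) '' Metric.closedBall 0 1, L x = x) →
      (∀ xs : ℤ → (Mstar →L[ℂ] ℂ),
        BddAbove (Set.range fun n => ‖xs n‖) →
        (∀ n : ℤ, xs n = L (xs (n + 1))) →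
        ∀ n : ℤ, xs n = xs 0) := by
    intro h2 xs hbdd hrec
    obtain ⟨B, hB⟩ := hbdd
    have hBn : ∀ m : ℤ, ‖xs m‖ ≤ B := fun m => hB ⟨m, rfl⟩
    set C : ℝ := max B 1 with hCdef
    have hC1 : (1 : ℝ) ≤ C := le_max_right _ _
    have hC0 : (0 : ℝ) < C := lt_of_lt_of_le one_pos hC1
    have hCne : ((C : ℂ)) ≠ 0 := by
      simp only [ne_eq, Complex.ofReal_eq_zero]
      exact ne_of_gt hC0
    have hiter : ∀ (k : ℕ) (m : ℤ), xs m = (L ^ k) (xs (m + k)) := by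
      intro k
      induction k with
      | zero => intro m; simp
      | succ k ih =>
        intro m
        have h1 : xs (m + k) = L (xs (m + k + 1)) := hrec (m + k)
        have h2' : xs m = (L ^ k) (xs (m + k)) := ih m
        rw [h2', h1, pow_succ, ContinuousLinearMap.mul_apply]
        congr 2
        push_cast
        ring_nf
    have hfix : ∀ m : ℤ, L (xs m) = xs m := by
      intro m
      have hmem : ((C : ℂ))⁻¹ • xs m ∈ ⋂ n : ℕ, (L ^ n) '' Metric.closedBall 0 1 := by
        refine Set.mem_iInter.2 fun k => ⟨((C : ℂ))⁻¹ • xs (m + k), ?_, ?_⟩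
        · rw [mem_closedBall, dist_zero_right]
          calc ‖((C : ℂ))⁻¹ • xs (m + (k : ℤ))‖
              ≤ ‖((C : ℂ))⁻¹‖ * ‖xs (m + (k : ℤ))‖ := ContinuousLinearMap.opNorm_smul_le _ _
            _ = C⁻¹ * ‖xs (m + (k : ℤ))‖ := by
                rw [norm_inv, Complex.norm_real, Real.norm_eq_abs, abs_of_pos hC0]
            _ ≤ C⁻¹ * C := by
                have h2 : (0:ℝ) ≤ C⁻¹ := inv_nonneg.2 hC0.le
                exact mul_le_mul_of_nonneg_left (le_trans (hBn _) (le_max_left _ _)) h2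
            _ = 1 := inv_mul_cancel₀ (ne_of_gt hC0)
        · rw [map_smul, ← hiter k m]
      have h := h2 _ hmem
      rw [map_smul] at h
      exact smul_right_injective (Mstar →L[ℂ] ℂ) (inv_ne_zero hCne) h
    have hstep : ∀ m : ℤ, xs m = xs (m + 1) := by
      intro m
      rw [hrec m, hfix (m + 1)]
    intro n
    induction n using Int.induction_on with
    | zero => rfl
    | succ k ih => rw [← hstep k, ih]
    | pred k ih => rw [hstep (-(k : ℤ) - 1)]; simpa using ih
  -- (i) → (ii)
  have h12 : (∀ xs : ℤ → (Mstar →L[ℂ] ℂ),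
        BddAbove (Set.range fun n => ‖xs n‖) →
        (∀ n : ℤ, xs n = L (xs (n + 1))) →
        ∀ n : ℤ, xs n = xs 0) →
      (∀ x ∈ ⋂ n : ℕ, (L ^ n) '' Metric.closedBall 0 1, L x = x) := by
    intro h1 x hx
    have h' : ∀ n : ℕ, ∃ y : Mstar →L[ℂ] ℂ, ‖y‖ ≤ 1 ∧ (L ^ n) y = x := by
      intro n
      obtain ⟨y, hy, hyx⟩ := Set.mem_iInter.1 hx n
      exact ⟨y, by simpa [dist_zero_right] using hy, hyx⟩
    choose y hy hxy using h'
    have hx1 : ‖x‖ ≤ 1 := by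
      have := hxy 0
      simp only [pow_zero, ContinuousLinearMap.one_apply] at this
      rw [← this]; exact hy 0
    -- the sequence whose wlim is the `m`-th term of the inverse sequence
    have hf : ∀ m k : ℕ, ‖(L ^ (k - m)) (y k)‖ ≤ 1 := fun m k => le_trans (hLn _ _) (hy k)
    set z : ℕ → (Mstar →L[ℂ] ℂ) := fun m => wlim (fun k => (L ^ (k - m)) (y k)) (hf m)
      with hzdef
    have hz0 : z 0 = x := by
      refine ContinuousLinearMap.ext fun ρ => ?_
      refine wlim_eq_of_tendsto _ ?_
      have h : (fun k => (L ^ (k - 0)) (y k) ρ) = fun k => x ρ := by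
        funext k
        rw [Nat.sub_zero, hxy k]
      rw [h]
      exact tendsto_const_nhds
    have hzstep : ∀ m : ℕ, L (z (m + 1)) = z m := by
      intro m
      refine ContinuousLinearMap.ext fun ρ => ?_
      rw [hLp]
      have h := wlim_tendsto (hf (m + 1)) (Lp ρ)
      refine (wlim_eq_of_tendsto (hf m) ?_).symm
      refine h.congr' ?_
      have hev : ∀ᶠ k in (UF : Filter ℕ), m + 1 ≤ k := UF_le_atTop (eventually_ge_atTop (m + 1))
      filter_upwards [hev] with k hk
      have h1 : k - m = (k - (m + 1)) + 1 := by omega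
      rw [h1, hpow1]
    -- build the inverse sequence
    set xs : ℤ → (Mstar →L[ℂ] ℂ) := fun n => if 0 ≤ n then z n.toNat else (L ^ (-n).toNat) x
      with hxsdef
    have hxs0 : xs 0 = x := by simp [hxsdef, hz0]
    have hbdd : BddAbove (Set.range fun n => ‖xs n‖) := by
      refine ⟨1, ?_⟩
      rintro r ⟨n, rfl⟩
      by_cases h : 0 ≤ n
      · simp only [hxsdef, if_pos h]
        exact wlim_norm_le (hf n.toNat)
      · simp only [hxsdef, if_neg h]
        exact le_trans (hLn _ _) hx1
    have hrec : ∀ n : ℤ, xs n = L (xs (n + 1)) := by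
      intro n
      by_cases h : 0 ≤ n
      · have h1 : (0 : ℤ) ≤ n + 1 := by omega
        have h2 : (n + 1).toNat = n.toNat + 1 := by omega
        simp only [hxsdef, if_pos h, if_pos h1, h2]
        exact (hzstep n.toNat).symm
      · by_cases h1 : 0 ≤ n + 1
        · have hn : n = -1 := by omega
          subst hn
          norm_num [hxsdef, hz0]
        · have h2 : (-n).toNat = (-(n + 1)).toNat + 1 := by omega
          simp only [hxsdef, if_neg h, if_neg h1, h2]
          rw [pow_succ', ContinuousLinearMap.mul_apply]
    have hkey := h1 xs hbdd hrec (-1)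
    have hm1 : xs (-1) = L x := by
      have : ¬ (0 : ℤ) ≤ -1 := by omega
      simp [hxsdef, this]
    rw [hm1, hxs0] at hkey
    exact hkey
  -- (iii) → (ii)
  have h32 : (∀ ρ : Mstar,
        Filter.Tendsto
          (fun n : ℕ =>
            ‖(ContinuousLinearMap.apply ℂ ℂ ρ).comp (L ^ (n + 1)) -
              (ContinuousLinearMap.apply ℂ ℂ ρ).comp (L ^ n)‖)
          Filter.atTop (nhds 0)) →
      (∀ x ∈ ⋂ n : ℕ, (L ^ n) '' Metric.closedBall 0 1, L x = x) := by
    intro h3 x hx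
    refine ContinuousLinearMap.ext fun ρ => ?_
    set K : ℕ → ((Mstar →L[ℂ] ℂ) →L[ℂ] ℂ) :=
      fun n => (ContinuousLinearMap.apply ℂ ℂ ρ).comp (L ^ n) with hKdef
    have key : ∀ n : ℕ, ‖L x ρ - x ρ‖ ≤ ‖K (n + 1) - K n‖ := by
      intro n
      obtain ⟨y, hy, hyx⟩ := Set.mem_iInter.1 hx n
      have hy1 : ‖y‖ ≤ 1 := by simpa [dist_zero_right] using hy
      have h1 : L x ρ - x ρ = (K (n + 1) - K n) y := by
        simp only [hKdef, ContinuousLinearMap.sub_apply, ContinuousLinearMap.comp_apply,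
          ContinuousLinearMap.apply_apply]
        rw [← hyx, pow_succ', ContinuousLinearMap.mul_apply]
      rw [h1]
      calc ‖(K (n + 1) - K n) y‖ ≤ ‖K (n + 1) - K n‖ * ‖y‖ := (K (n + 1) - K n).le_opNorm y
        _ ≤ ‖K (n + 1) - K n‖ * 1 :=
            mul_le_mul_of_nonneg_left hy1 (ContinuousLinearMap.opNorm_nonneg _)
        _ = ‖K (n + 1) - K n‖ := mul_one _
    have h0 : ‖L x ρ - x ρ‖ ≤ 0 := ge_of_tendsto' (h3 ρ) key
    exact sub_eq_zero.1 (norm_le_zero_iff.1 h0)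
  -- (ii) → (iii)
  have h23 : (∀ x ∈ ⋂ n : ℕ, (L ^ n) '' Metric.closedBall 0 1, L x = x) →
      (∀ ρ : Mstar,
        Filter.Tendsto
          (fun n : ℕ =>
            ‖(ContinuousLinearMap.apply ℂ ℂ ρ).comp (L ^ (n + 1)) -
              (ContinuousLinearMap.apply ℂ ℂ ρ).comp (L ^ n)‖)
          Filter.atTop (nhds 0)) := by
    intro h2 ρ
    set K : ℕ → ((Mstar →L[ℂ] ℂ) →L[ℂ] ℂ) :=
      fun n => (ContinuousLinearMap.apply ℂ ℂ ρ).comp (L ^ n) with hKdef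
    set a : ℕ → ℝ := fun n => ‖K (n + 1) - K n‖ with hadef
    by_contra hnot
    have hcomp : ∀ n : ℕ, K (n + 1 + 1) - K (n + 1) = (K (n + 1) - K n).comp L := by
      intro n
      refine ContinuousLinearMap.ext fun v => ?_
      simp only [hKdef, ContinuousLinearMap.sub_apply, ContinuousLinearMap.comp_apply,
        ContinuousLinearMap.apply_apply, pow_succ, ContinuousLinearMap.mul_apply]
    have hanti : Antitone a := by
      apply antitone_nat_of_succ_le
      intro n
      show ‖K (n + 1 + 1) - K (n + 1)‖ ≤ ‖K (n + 1) - K n‖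
      rw [hcomp n]
      calc ‖(K (n + 1) - K n).comp L‖ ≤ ‖K (n + 1) - K n‖ * ‖L‖ :=
            ContinuousLinearMap.opNorm_comp_le _ _
        _ ≤ ‖K (n + 1) - K n‖ * 1 :=
            mul_le_mul_of_nonneg_left hLnorm (ContinuousLinearMap.opNorm_nonneg _)
        _ = ‖K (n + 1) - K n‖ := mul_one _
    have hbddb : BddBelow (Set.range a) := by
      refine ⟨0, ?_⟩
      rintro r ⟨n, rfl⟩
      exact ContinuousLinearMap.opNorm_nonneg _
    have htend : Tendsto a atTop (𝓝 (⨅ n, a n)) := tendsto_atTop_ciInf hanti hbddb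
    set δ := ⨅ n, a n with hδdef
    have hδ0 : (0 : ℝ) ≤ δ := le_ciInf fun n => ContinuousLinearMap.opNorm_nonneg _
    have hδpos : 0 < δ := by
      rcases hδ0.lt_or_eq with h | h
      · exact h
      · rw [← h] at htend
        exact absurd htend hnot
    have hδle : ∀ n, δ ≤ a n := fun n => ciInf_le hbddb n
    have hexists : ∀ n : ℕ, ∃ x : Mstar →L[ℂ] ℂ, ‖x‖ < 1 ∧ δ / 2 < ‖(K (n + 1) - K n) x‖ := by
      intro n
      apply ContinuousLinearMap.exists_lt_apply_of_lt_opNorm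
      calc δ / 2 < δ := by linarith
        _ ≤ a n := hδle n
    choose x hx1 hx2 using hexists
    have hg : ∀ n, ‖(L ^ n) (x n)‖ ≤ 1 := fun n => le_trans (hLn n (x n)) (hx1 n).le
    set z := wlim (fun n => (L ^ n) (x n)) hg with hzdef
    have hmem : z ∈ ⋂ m : ℕ, (L ^ m) '' Metric.closedBall 0 1 := by
      refine Set.mem_iInter.2 fun m => ?_
      have hw : ∀ n, ‖(L ^ (n - m)) (x n)‖ ≤ 1 := fun n => le_trans (hLn _ _) (hx1 n).le
      refine ⟨wlim (fun n => (L ^ (n - m)) (x n)) hw, ?_, ?_⟩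
      · rw [mem_closedBall, dist_zero_right]
        exact wlim_norm_le hw
      · refine ContinuousLinearMap.ext fun ρ' => ?_
        rw [hpow]
        have h1 := wlim_tendsto hw ((Lp ^ m) ρ')
        have h2' : Tendsto (fun n => (L ^ n) (x n) ρ') (UF : Filter ℕ)
            (𝓝 (wlim (fun n => (L ^ (n - m)) (x n)) hw ((Lp ^ m) ρ'))) := by
          refine h1.congr' ?_
          filter_upwards [UF_le_atTop (eventually_ge_atTop m)] with n hn
          rw [← hpow m ((L ^ (n - m)) (x n)) ρ', ← ContinuousLinearMap.mul_apply, ← pow_add,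
            Nat.add_sub_cancel' hn]
        exact (wlim_eq_of_tendsto hg h2').symm
    have hz := h2 z hmem
    have hc : Tendsto (fun n => (L ^ (n + 1)) (x n) ρ - (L ^ n) (x n) ρ) (UF : Filter ℕ)
        (𝓝 (z (Lp ρ) - z ρ)) := by
      have h1 := (wlim_tendsto hg (Lp ρ)).sub (wlim_tendsto hg ρ)
      refine h1.congr fun n => ?_
      rw [hpow1]
    have hzz : z (Lp ρ) = z ρ := by rw [← hLp, hz]
    rw [hzz, sub_self] at hc
    have hnorm : Tendsto (fun n => ‖(L ^ (n + 1)) (x n) ρ - (L ^ n) (x n) ρ‖) (UF : Filter ℕ)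
        (𝓝 0) := by
      simpa using hc.norm
    have heq : ∀ n, (K (n + 1) - K n) (x n) = (L ^ (n + 1)) (x n) ρ - (L ^ n) (x n) ρ := by
      intro n
      simp [hKdef, ContinuousLinearMap.sub_apply, ContinuousLinearMap.comp_apply,
        ContinuousLinearMap.apply_apply]
    have hge : δ / 2 ≤ 0 := by
      refine ge_of_tendsto' hnorm fun n => ?_
      rw [← heq n]
      exact (hx2 n).le
    linarith
  exact ⟨⟨h12, h21⟩, ⟨h23, h32⟩⟩
end

section
/- Let M⋆ be a complex Banach space with continuous dual M, let α : M → M be a normal linear isometry (not necessarily surjective), and let M_∞ = ∩_{n≥0} α^n(M). Then for every ρ ∈ M⋆, the sequence ‖ρ ∘ α^{n+1} − ρ ∘ α^n‖ is nonincreasing and converges, as n → ∞, to ‖(ρ ∘ α − ρ)↾_{M_∞}‖, the norm of the restriction of ρ ∘ α − ρ to M_∞. In particular, lim_{n→∞} ‖ρ ∘ α^{n+1} − ρ ∘ α^n‖ = 0 for every ρ ∈ M⋆ if and only if α(x) = x for every x ∈ M_∞. -/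
open ContinuousLinearMap Filter Metric

set_option synthInstance.maxHeartbeats 400000

section Aux
variable {E : Type*} [NormedAddCommGroup E] [NormedSpace ℂ E]

lemma stmt9_pow_apply (α : (E →L[ℂ] ℂ) →L[ℂ] (E →L[ℂ] ℂ)) (a : E →L[ℂ] E)
    (ha : ∀ (x : E →L[ℂ] ℂ) (ρ : E), α x ρ = x (a ρ)) :
    ∀ (n : ℕ) (x : E →L[ℂ] ℂ) (ρ : E), (α ^ n) x ρ = x ((a ^ n) ρ) := by
  intro n
  induction n with
  | zero => intro x ρ; simp
  | succ n ih =>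
    intro x ρ
    rw [pow_succ, ContinuousLinearMap.mul_apply, ih, ha, pow_succ',
      ContinuousLinearMap.mul_apply]

lemma stmt9_pow_iso (α : (E →L[ℂ] ℂ) →L[ℂ] (E →L[ℂ] ℂ))
    (hαiso : ∀ x : E →L[ℂ] ℂ, ‖α x‖ = ‖x‖) :
    ∀ (n : ℕ) (x : E →L[ℂ] ℂ), ‖(α ^ n) x‖ = ‖x‖ := by
  intro n
  induction n with
  | zero => intro x; simp
  | succ n ih => intro x; rw [pow_succ, ContinuousLinearMap.mul_apply, ih, hαiso]

lemma stmt9_norm_apply (ρ : E) : ‖ContinuousLinearMap.apply ℂ ℂ ρ‖ = ‖ρ‖ :=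
  (NormedSpace.inclusionInDoubleDualLi ℂ).norm_map ρ

lemma stmt9_contr (α : (E →L[ℂ] ℂ) →L[ℂ] (E →L[ℂ] ℂ)) (a : E →L[ℂ] E)
    (ha : ∀ (x : E →L[ℂ] ℂ) (ρ : E), α x ρ = x (a ρ))
    (hαiso : ∀ x : E →L[ℂ] ℂ, ‖α x‖ = ‖x‖) (ν : E) : ‖a ν‖ ≤ ‖ν‖ := by
  have h1 : ContinuousLinearMap.apply ℂ ℂ (a ν)
      = (ContinuousLinearMap.apply ℂ ℂ ν).comp α := by
    ext x
    simp [ha]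
  calc ‖a ν‖ = ‖ContinuousLinearMap.apply ℂ ℂ (a ν)‖ := (stmt9_norm_apply _).symm
    _ = ‖(ContinuousLinearMap.apply ℂ ℂ ν).comp α‖ := by rw [h1]
    _ ≤ ‖ContinuousLinearMap.apply ℂ ℂ ν‖ := by
        refine opNorm_le_bound _ (opNorm_nonneg _) fun x => ?_
        rw [ContinuousLinearMap.comp_apply]
        calc ‖ContinuousLinearMap.apply ℂ ℂ ν (α x)‖
            ≤ ‖ContinuousLinearMap.apply ℂ ℂ ν‖ * ‖α x‖ := le_opNorm _ _
          _ = ‖ContinuousLinearMap.apply ℂ ℂ ν‖ * ‖x‖ := by rw [hαiso]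
    _ = ‖ν‖ := stmt9_norm_apply _

lemma stmt9_antitone (α : (E →L[ℂ] ℂ) →L[ℂ] (E →L[ℂ] ℂ)) (a : E →L[ℂ] E)
    (ha : ∀ (x : E →L[ℂ] ℂ) (ρ : E), α x ρ = x (a ρ))
    (hαiso : ∀ x : E →L[ℂ] ℂ, ‖α x‖ = ‖x‖) (μ : E) :
    Antitone fun n : ℕ => ‖(a ^ n) μ‖ := by
  refine antitone_nat_of_succ_le fun n => ?_
  rw [pow_succ', ContinuousLinearMap.mul_apply]
  exact stmt9_contr α a ha hαiso _

lemma stmt9_tendsto_iInf (α : (E →L[ℂ] ℂ) →L[ℂ] (E →L[ℂ] ℂ)) (a : E →L[ℂ] E)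
    (ha : ∀ (x : E →L[ℂ] ℂ) (ρ : E), α x ρ = x (a ρ))
    (hαiso : ∀ x : E →L[ℂ] ℂ, ‖α x‖ = ‖x‖) (μ : E) :
    Tendsto (fun n : ℕ => ‖(a ^ n) μ‖) atTop (nhds (⨅ n : ℕ, ‖(a ^ n) μ‖)) :=
  tendsto_atTop_ciInf (stmt9_antitone α a ha hαiso μ)
    ⟨0, by rintro x ⟨n, rfl⟩; exact norm_nonneg _⟩

lemma stmt9_exists_cluster (α : (E →L[ℂ] ℂ) →L[ℂ] (E →L[ℂ] ℂ)) (a : E →L[ℂ] E)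
    (ha : ∀ (x : E →L[ℂ] ℂ) (ρ : E), α x ρ = x (a ρ))
    (hαiso : ∀ x : E →L[ℂ] ℂ, ‖α x‖ = ‖x‖) (μ : E) :
    ∃ y : E →L[ℂ] ℂ, (∀ n : ℕ, y ∈ Set.range ⇑(α ^ n)) ∧ ‖y‖ ≤ 1 ∧
      (⨅ n : ℕ, ‖(a ^ n) μ‖) ≤ ‖y μ‖ := by
  classical
  set L : ℝ := ⨅ n : ℕ, ‖(a ^ n) μ‖ with hL
  choose g hg1 hg2 using fun n : ℕ => exists_dual_vector'' ℂ ((a ^ n) μ)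
  set Y : ℕ → WeakDual ℂ E := fun n => StrongDual.toWeakDual ((α ^ n) (g n)) with hY
  set K : Set (WeakDual ℂ E) := WeakDual.toStrongDual ⁻¹' closedBall (0 : StrongDual ℂ E) 1 with hKdef
  have hK : IsCompact K := WeakDual.isCompact_closedBall (𝕜 := ℂ) 0 1
  have hYK : ∀ n, Y n ∈ K := by
    intro n
    simp only [hKdef, Set.mem_preimage, mem_closedBall_zero_iff]
    show ‖(α ^ n) (g n)‖ ≤ 1
    rw [stmt9_pow_iso α hαiso]
    exact hg1 n
  have hle : Filter.map Y atTop ≤ Filter.principal K :=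
    Filter.le_principal_iff.mpr (Filter.mem_map.mpr (Filter.univ_mem' hYK))
  obtain ⟨w, hwK, hw⟩ := hK.exists_clusterPt hle
  refine ⟨WeakDual.toStrongDual w, ?_, ?_, ?_⟩
  · -- membership in every range
    intro m
    set β : WeakDual ℂ E → WeakDual ℂ E :=
      fun z => StrongDual.toWeakDual ((α ^ m) (WeakDual.toStrongDual z)) with hβ
    have hβc : Continuous β := by
      refine WeakDual.continuous_of_continuous_eval fun ρ => ?_
      have : (fun z : WeakDual ℂ E => β z ρ) = fun z : WeakDual ℂ E => z ((a ^ m) ρ) :=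
        funext fun z => stmt9_pow_apply α a ha m _ ρ
      rw [this]
      exact WeakDual.eval_continuous _
    have hCcl : IsClosed (β '' K) := (hK.image hβc).isClosed
    have hev : ∀ᶠ n in atTop, Y n ∈ β '' K := by
      refine eventually_atTop.mpr ⟨m, fun n hn => ?_⟩
      refine ⟨StrongDual.toWeakDual ((α ^ (n - m)) (g n)), ?_, ?_⟩
      · simp only [hKdef, Set.mem_preimage, mem_closedBall_zero_iff]
        show ‖(α ^ (n - m)) (g n)‖ ≤ 1
        rw [stmt9_pow_iso α hαiso]
        exact hg1 n
      · show StrongDual.toWeakDual ((α ^ m) ((α ^ (n - m)) (g n))) = Y n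
        rw [← ContinuousLinearMap.mul_apply, ← pow_add, Nat.add_sub_cancel' hn]
    have hwC : w ∈ β '' K := by
      have h2 : ClusterPt w (Filter.principal (β '' K)) :=
        hw.mono (Filter.le_principal_iff.mpr (Filter.mem_map.mpr hev))
      have := mem_closure_iff_clusterPt.mpr h2
      rwa [hCcl.closure_eq] at this
    obtain ⟨z, _, hze⟩ := hwC
    exact ⟨WeakDual.toStrongDual z, congrArg WeakDual.toStrongDual hze⟩
  · simpa [hKdef, mem_closedBall_zero_iff] using hwK
  · -- norm value
    have hf : Continuous fun z : WeakDual ℂ E => ‖z μ‖ := (WeakDual.eval_continuous μ).norm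
    have hmap : ClusterPt ‖w μ‖ (Filter.map (fun n => ‖Y n μ‖) atTop) := by
      have := hw.map hf.continuousAt
        (f := fun z : WeakDual ℂ E => ‖z μ‖)
        (ly := Filter.map (fun n => ‖Y n μ‖) atTop) (Filter.map_map).le
      exact this
    have hval : (fun n => ‖Y n μ‖) = fun n => ‖(a ^ n) μ‖ := by
      funext n
      show ‖(α ^ n) (g n) μ‖ = _
      rw [stmt9_pow_apply α a ha, hg2, RCLike.norm_ofReal, abs_norm]
    rw [hval] at hmap
    have h3 : ClusterPt ‖w μ‖ (nhds L) :=
      hmap.mono (stmt9_tendsto_iInf α a ha hαiso μ)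
    exact le_of_eq (eq_of_nhds_neBot h3).symm

end Aux

set_option maxHeartbeats 1000000

/-- Let `M` be the continuous dual of a complex Banach space `M⋆`,
`α : M → M` a normal linear isometry (not necessarily surjective), and
`M_∞ = ⋂_{n ≥ 0} α^n(M)`.  Then for every `ρ ∈ M⋆` the sequence
`‖ρ ∘ α^{n+1} − ρ ∘ α^n‖` is nonincreasing and converges to the norm of the
restriction of `ρ ∘ α − ρ` to `M_∞` (expressed as the supremum of
`‖(ρ ∘ α − ρ)(x)‖` over the unit ball of `M_∞`).  In particular
`‖ρ ∘ α^{n+1} − ρ ∘ α^n‖ → 0` for every `ρ ∈ M⋆` iff `α(x) = x` for every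
`x ∈ M_∞`. -/
theorem stmt9 {Mstar : Type*}
    [NormedAddCommGroup Mstar] [NormedSpace ℂ Mstar] [CompleteSpace Mstar]
    (α : (Mstar →L[ℂ] ℂ) →L[ℂ] (Mstar →L[ℂ] ℂ))
    (hαnormal : ∃ a : Mstar →L[ℂ] Mstar,
      ∀ (x : Mstar →L[ℂ] ℂ) (ρ : Mstar), α x ρ = x (a ρ))
    (hαiso : ∀ x : Mstar →L[ℂ] ℂ, ‖α x‖ = ‖x‖) :
    (∀ ρ : Mstar,
      Antitone (fun n : ℕ =>
        ‖(ContinuousLinearMap.apply ℂ ℂ ρ).comp (α ^ (n + 1)) -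
          (ContinuousLinearMap.apply ℂ ℂ ρ).comp (α ^ n)‖) ∧
      Filter.Tendsto
        (fun n : ℕ =>
          ‖(ContinuousLinearMap.apply ℂ ℂ ρ).comp (α ^ (n + 1)) -
            (ContinuousLinearMap.apply ℂ ℂ ρ).comp (α ^ n)‖)
        Filter.atTop
        (nhds (sSup ((fun x : Mstar →L[ℂ] ℂ =>
          ‖((ContinuousLinearMap.apply ℂ ℂ ρ).comp α -
              ContinuousLinearMap.apply ℂ ℂ ρ) x‖) ''
          ((⋂ n : ℕ, Set.range ⇑(α ^ n)) ∩ Metric.closedBall 0 1))))) ∧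
    ((∀ ρ : Mstar,
        Filter.Tendsto
          (fun n : ℕ =>
            ‖(ContinuousLinearMap.apply ℂ ℂ ρ).comp (α ^ (n + 1)) -
              (ContinuousLinearMap.apply ℂ ℂ ρ).comp (α ^ n)‖)
          Filter.atTop (nhds 0))
      ↔ (∀ x ∈ ⋂ n : ℕ, Set.range ⇑(α ^ n), α x = x)) := by
  classical
  obtain ⟨a, ha⟩ := hαnormal
  -- notation
  set Minf : Set (Mstar →L[ℂ] ℂ) :=
    (⋂ n : ℕ, Set.range ⇑(α ^ n)) ∩ Metric.closedBall 0 1 with hMinf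
  have hcomp : ∀ (ρ : Mstar) (n : ℕ),
      (ContinuousLinearMap.apply ℂ ℂ ρ).comp (α ^ n)
        = ContinuousLinearMap.apply ℂ ℂ ((a ^ n) ρ) := by
    intro ρ n
    ext x
    exact stmt9_pow_apply α a ha n x ρ
  have hDseq : ∀ ρ : Mstar,
      (fun n : ℕ =>
        ‖(ContinuousLinearMap.apply ℂ ℂ ρ).comp (α ^ (n + 1)) -
          (ContinuousLinearMap.apply ℂ ℂ ρ).comp (α ^ n)‖)
      = fun n : ℕ => ‖(a ^ n) (a ρ - ρ)‖ := by
    intro ρ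
    funext n
    have h1 : (a ^ (n + 1)) ρ - (a ^ n) ρ = (a ^ n) (a ρ - ρ) := by
      rw [map_sub, pow_succ, ContinuousLinearMap.mul_apply]
    rw [hcomp ρ (n + 1), hcomp ρ n,
      ← ContinuousLinearMap.map_sub (ContinuousLinearMap.apply ℂ ℂ), stmt9_norm_apply, h1]
  have hGx : ∀ (ρ : Mstar) (x : Mstar →L[ℂ] ℂ),
      ((ContinuousLinearMap.apply ℂ ℂ ρ).comp α - ContinuousLinearMap.apply ℂ ℂ ρ) x
        = x (a ρ - ρ) := by
    intro ρ x
    simp [ha, map_sub]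
  have hne : ∀ ρ : Mstar,
      ((fun x : Mstar →L[ℂ] ℂ =>
          ‖((ContinuousLinearMap.apply ℂ ℂ ρ).comp α -
              ContinuousLinearMap.apply ℂ ℂ ρ) x‖) '' Minf).Nonempty := by
    intro ρ
    exact ⟨_, ⟨0, ⟨Set.mem_iInter.mpr fun n => ⟨0, map_zero _⟩, by simp⟩, rfl⟩⟩
  have hbdd : ∀ ρ : Mstar,
      BddAbove ((fun x : Mstar →L[ℂ] ℂ =>
          ‖((ContinuousLinearMap.apply ℂ ℂ ρ).comp α -
              ContinuousLinearMap.apply ℂ ℂ ρ) x‖) '' Minf) := by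
    intro ρ
    refine ⟨‖a ρ - ρ‖, ?_⟩
    rintro s ⟨x, ⟨hx1, hx2⟩, rfl⟩
    simp only [hGx]
    calc ‖x (a ρ - ρ)‖ ≤ ‖x‖ * ‖a ρ - ρ‖ := le_opNorm _ _
      _ ≤ 1 * ‖a ρ - ρ‖ := by
          have := mem_closedBall_zero_iff.mp hx2
          gcongr
      _ = ‖a ρ - ρ‖ := one_mul _
  have hSup : ∀ ρ : Mstar,
      sSup ((fun x : Mstar →L[ℂ] ℂ =>
          ‖((ContinuousLinearMap.apply ℂ ℂ ρ).comp α -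
              ContinuousLinearMap.apply ℂ ℂ ρ) x‖) '' Minf)
        = ⨅ n : ℕ, ‖(a ^ n) (a ρ - ρ)‖ := by
    intro ρ
    refine le_antisymm ?_ ?_
    · refine csSup_le (hne ρ) ?_
      rintro s ⟨x, ⟨hx1, hx2⟩, rfl⟩
      refine le_ciInf fun n => ?_
      obtain ⟨y, hy⟩ := Set.mem_iInter.mp hx1 n
      have hyx : ‖y‖ = ‖x‖ := by rw [← hy, stmt9_pow_iso α hαiso]
      simp only [hGx]
      rw [← hy, stmt9_pow_apply α a ha]
      calc ‖y ((a ^ n) (a ρ - ρ))‖ ≤ ‖y‖ * ‖(a ^ n) (a ρ - ρ)‖ := le_opNorm _ _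
        _ ≤ 1 * ‖(a ^ n) (a ρ - ρ)‖ := by
            have h2 := mem_closedBall_zero_iff.mp hx2
            rw [hyx]
            gcongr
        _ = _ := one_mul _
    · obtain ⟨y, hy1, hy2, hy3⟩ := stmt9_exists_cluster α a ha hαiso (a ρ - ρ)
      refine hy3.trans (le_csSup (hbdd ρ) ?_)
      refine ⟨y, ⟨Set.mem_iInter.mpr hy1, mem_closedBall_zero_iff.mpr hy2⟩, ?_⟩
      exact congrArg norm (hGx ρ y)
  have part1 : ∀ ρ : Mstar,
      Antitone (fun n : ℕ =>
        ‖(ContinuousLinearMap.apply ℂ ℂ ρ).comp (α ^ (n + 1)) -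
          (ContinuousLinearMap.apply ℂ ℂ ρ).comp (α ^ n)‖) ∧
      Filter.Tendsto
        (fun n : ℕ =>
          ‖(ContinuousLinearMap.apply ℂ ℂ ρ).comp (α ^ (n + 1)) -
            (ContinuousLinearMap.apply ℂ ℂ ρ).comp (α ^ n)‖)
        Filter.atTop
        (nhds (sSup ((fun x : Mstar →L[ℂ] ℂ =>
          ‖((ContinuousLinearMap.apply ℂ ℂ ρ).comp α -
              ContinuousLinearMap.apply ℂ ℂ ρ) x‖) '' Minf))) := by
    intro ρ
    constructor
    · rw [hDseq ρ]
      exact stmt9_antitone α a ha hαiso (a ρ - ρ)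
    · rw [hDseq ρ, hSup ρ]
      exact stmt9_tendsto_iInf α a ha hαiso (a ρ - ρ)
  refine ⟨part1, ?_, ?_⟩
  · -- forward direction
    intro h x hx
    ext ρ
    have hsup0 : sSup ((fun x : Mstar →L[ℂ] ℂ =>
        ‖((ContinuousLinearMap.apply ℂ ℂ ρ).comp α -
            ContinuousLinearMap.apply ℂ ℂ ρ) x‖) '' Minf) = 0 :=
      tendsto_nhds_unique (part1 ρ).2 (h ρ)
    set c : ℝ := (1 + ‖x‖)⁻¹ with hc
    have hc0 : 0 < c := by positivity
    have hx' : (c : ℂ) • x ∈ Minf := by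
      constructor
      · refine Set.mem_iInter.mpr fun n => ?_
        obtain ⟨y, hy⟩ := Set.mem_iInter.mp hx n
        exact ⟨(c : ℂ) • y, by rw [map_smul, hy]⟩
      · rw [mem_closedBall_zero_iff]
        refine (norm_smul_le ((c : ℂ)) x).trans ?_
        rw [Complex.norm_real, Real.norm_eq_abs, abs_of_pos hc0]
        have h1 : (0:ℝ) < 1 + ‖x‖ := by positivity
        calc c * ‖x‖ ≤ c * (1 + ‖x‖) := by nlinarith [norm_nonneg x]
          _ = 1 := inv_mul_cancel₀ (ne_of_gt h1)
    have hmem : ‖((ContinuousLinearMap.apply ℂ ℂ ρ).comp α -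
        ContinuousLinearMap.apply ℂ ℂ ρ) ((c : ℂ) • x)‖ ∈
        ((fun x : Mstar →L[ℂ] ℂ =>
          ‖((ContinuousLinearMap.apply ℂ ℂ ρ).comp α -
              ContinuousLinearMap.apply ℂ ℂ ρ) x‖) '' Minf) := ⟨_, hx', rfl⟩
    have h0 : ‖((ContinuousLinearMap.apply ℂ ℂ ρ).comp α -
        ContinuousLinearMap.apply ℂ ℂ ρ) ((c : ℂ) • x)‖ ≤ 0 :=
      hsup0 ▸ le_csSup (hbdd ρ) hmem
    have h1 : ((c : ℂ) • x) (a ρ - ρ) = 0 := by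
      rw [← hGx ρ]
      exact norm_le_zero_iff.mp h0
    have h2 : x (a ρ - ρ) = 0 := by
      rw [ContinuousLinearMap.smul_apply] at h1
      rcases smul_eq_zero.mp h1 with h | h
      · exact absurd h (by exact_mod_cast ne_of_gt hc0)
      · exact h
    rw [map_sub, ← ha, sub_eq_zero] at h2
    exact h2
  · -- reverse direction
    intro h ρ
    have hsub : ∀ x ∈ Minf,
        ‖((ContinuousLinearMap.apply ℂ ℂ ρ).comp α -
            ContinuousLinearMap.apply ℂ ℂ ρ) x‖ = 0 := by
      intro x hx
      have h1 : α x = x := h x hx.1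
      simp [ContinuousLinearMap.sub_apply, h1]
    have h0 : sSup ((fun x : Mstar →L[ℂ] ℂ =>
        ‖((ContinuousLinearMap.apply ℂ ℂ ρ).comp α -
            ContinuousLinearMap.apply ℂ ℂ ρ) x‖) '' Minf) = 0 := by
      refine le_antisymm (csSup_le (hne ρ) ?_) (le_csSup (hbdd ρ) ?_)
      · rintro s ⟨x, hx, rfl⟩
        exact le_of_eq (hsub x hx)
      · exact ⟨0, ⟨Set.mem_iInter.mpr fun n => ⟨0, map_zero _⟩, by simp⟩, by simp⟩
    have := (part1 ρ).2
    rwa [h0] at this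
end

section
/- Let V be a finite-dimensional complex normed space and let T : V → V be a power-bounded linear map, i.e., sup_{n≥1} ‖T^n‖ < ∞. Then ‖T^{n+1} − T^n‖ → 0 as n → ∞ if and only if every eigenvalue λ of T with |λ| = 1 satisfies λ = 1. -/
open Filter Topology

/-- Gelfand: spectral radius < 1 implies powers tend to zero in norm. -/
lemma aux_pow_tendsto_zero {A : Type*} [NormedRing A] [NormedAlgebra ℂ A]
    [CompleteSpace A] (a : A) (h : spectralRadius ℂ a < 1) :
    Tendsto (fun n : ℕ => ‖a ^ n‖) atTop (𝓝 0) := by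
  obtain ⟨c, hc1, hc2⟩ := exists_between h
  have hcne : c ≠ ⊤ := (hc2.trans_le le_top).ne
  set r : NNReal := c.toNNReal with hr
  have hcr : c = (r : ENNReal) := (ENNReal.coe_toNNReal hcne).symm
  have hr1 : (r : ℝ) < 1 := by
    have := hc2
    rw [hcr] at this
    exact_mod_cast this
  have htend := spectrum.pow_nnnorm_pow_one_div_tendsto_nhds_spectralRadius a
  have hev : ∀ᶠ n : ℕ in atTop, (‖a ^ n‖₊ : ENNReal) ^ (1 / (n : ℝ)) < c :=
    htend.eventually_lt_const hc1
  have hev2 : ∀ᶠ n : ℕ in atTop, ‖a ^ n‖ ≤ (r : ℝ) ^ n := by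
    filter_upwards [hev, eventually_ge_atTop 1] with n hn hn1
    have hne : (n : ℝ) ≠ 0 := by positivity
    have : ((‖a ^ n‖₊ : ENNReal) ^ (1 / (n : ℝ))) ^ (n : ℝ) ≤ c ^ (n : ℝ) :=
      ENNReal.rpow_le_rpow hn.le (by positivity)
    rw [← ENNReal.rpow_mul, one_div, inv_mul_cancel₀ hne, ENNReal.rpow_one] at this
    rw [hcr, ENNReal.rpow_natCast, ← ENNReal.coe_pow, ENNReal.coe_le_coe] at this
    calc ‖a ^ n‖ = ((‖a ^ n‖₊ : NNReal) : ℝ) := rfl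
    _ ≤ ((r ^ n : NNReal) : ℝ) := by exact_mod_cast this
    _ = (r : ℝ) ^ n := by push_cast; ring
  have hrt : Tendsto (fun n : ℕ => (r : ℝ) ^ n) atTop (𝓝 0) :=
    tendsto_pow_atTop_nhds_zero_of_lt_one r.coe_nonneg hr1
  exact squeeze_zero' (Eventually.of_forall fun n => norm_nonneg _) hev2 hrt

/-- Let `V` be a finite-dimensional complex normed space and
`T : V → V` a power-bounded linear map (`sup_{n ≥ 1} ‖T^n‖ < ∞`).  Then
`‖T^{n+1} − T^n‖ → 0` as `n → ∞` iff every eigenvalue `λ` of `T` with `|λ| = 1`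
satisfies `λ = 1` (an eigenvalue being a `λ ∈ ℂ` for which `T − λ·id` is not
injective). -/
theorem stmt10 {V : Type*} [NormedAddCommGroup V] [NormedSpace ℂ V]
    [FiniteDimensional ℂ V]
    (T : V →L[ℂ] V) (hT : ∃ C : ℝ, ∀ n : ℕ, 1 ≤ n → ‖T ^ n‖ ≤ C) :
    Filter.Tendsto (fun n : ℕ => ‖T ^ (n + 1) - T ^ n‖) Filter.atTop (nhds 0)
      ↔ ∀ lam : ℂ, ‖lam‖ = 1 →
          ¬ Function.Injective ⇑(T - lam • (1 : V →L[ℂ] V)) → lam = 1 := by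
  haveI : CompleteSpace V := FiniteDimensional.complete ℂ V
  obtain ⟨C, hC⟩ := hT
  have hpow_apply : ∀ (n : ℕ) (v : V), (T ^ n) v = ((T : V →ₗ[ℂ] V) ^ n) v := by
    intro n
    induction n with
    | zero => intro v; rfl
    | succ n ih =>
        intro v
        rw [pow_succ, pow_succ, ContinuousLinearMap.mul_apply, Module.End.mul_apply]
        exact ih (T v)
  -- iterates of eigenvectors
  have hitereig : ∀ (μ : ℂ) (v : V), T v = μ • v → ∀ n : ℕ, (T ^ n) v = μ ^ n • v := by
    intro μ v hTv n
    induction n with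
    | zero => simp
    | succ n ih =>
        rw [pow_succ', ContinuousLinearMap.mul_apply, ih, map_smul, hTv,
          smul_smul, pow_succ]
  -- eigenvalues have modulus ≤ 1
  have heig_le : ∀ (μ : ℂ) (v : V), v ≠ 0 → T v = μ • v → ‖μ‖ ≤ 1 := by
    intro μ v hv hTv
    by_contra hgt
    push_neg at hgt
    have hvpos : 0 < ‖v‖ := norm_pos_iff.mpr hv
    have hbound : ∀ n : ℕ, 1 ≤ n → ‖μ‖ ^ n ≤ C := by
      intro n hn
      have h1 : ‖μ‖ ^ n * ‖v‖ ≤ C * ‖v‖ := by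
        calc ‖μ‖ ^ n * ‖v‖ = ‖(T ^ n) v‖ := by rw [hitereig μ v hTv n]; simp [norm_smul]
        _ ≤ ‖T ^ n‖ * ‖v‖ := (T ^ n).le_opNorm v
        _ ≤ C * ‖v‖ := mul_le_mul_of_nonneg_right (hC n hn) (norm_nonneg v)
      exact le_of_mul_le_mul_right h1 hvpos
    obtain ⟨n, hn⟩ := pow_unbounded_of_one_lt C hgt
    have h2 : ‖μ‖ ^ n ≤ ‖μ‖ ^ (n + 1) := pow_le_pow_right₀ hgt.le (Nat.le_succ n)
    exact absurd (hbound (n + 1) (Nat.le_add_left 1 n))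
      (not_le.mpr (hn.trans_le h2))
  -- non-injectivity is the same as having an eigenvector
  have hinj : ∀ μ : ℂ, (¬ Function.Injective ⇑(T - μ • (1 : V →L[ℂ] V)))
      ↔ ∃ v : V, v ≠ 0 ∧ T v = μ • v := by
    intro μ
    constructor
    · intro h
      obtain ⟨x, y, hxy, hne⟩ := Function.not_injective_iff.mp h
      refine ⟨x - y, sub_ne_zero.mpr hne, ?_⟩
      have h0 : (T - μ • (1 : V →L[ℂ] V)) (x - y) = 0 := by
        rw [map_sub, hxy, sub_self]
      simp only [ContinuousLinearMap.sub_apply, ContinuousLinearMap.smul_apply,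
        ContinuousLinearMap.one_apply, sub_eq_zero] at h0
      exact h0
    · rintro ⟨v, hv, hTv⟩ hinjf
      have h0 : (T - μ • (1 : V →L[ℂ] V)) v = (T - μ • (1 : V →L[ℂ] V)) 0 := by
        simp [ContinuousLinearMap.sub_apply, ContinuousLinearMap.smul_apply,
          ContinuousLinearMap.one_apply, hTv]
      exact hv (hinjf h0)
  constructor
  · -- easy direction
    intro htend lam hlam hni
    obtain ⟨v, hv, hTv⟩ := (hinj lam).mp hni
    have hvpos : 0 < ‖v‖ := norm_pos_iff.mpr hv
    have hkey : ∀ n : ℕ, ‖lam - 1‖ ≤ ‖T ^ (n + 1) - T ^ n‖ := by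
      intro n
      have h1 : ‖(T ^ (n + 1) - T ^ n) v‖ = ‖lam - 1‖ * ‖v‖ := by
        rw [ContinuousLinearMap.sub_apply, hitereig lam v hTv (n + 1),
          hitereig lam v hTv n]
        rw [show lam ^ (n + 1) • v - lam ^ n • v = (lam ^ n * (lam - 1)) • v by
          rw [pow_succ]; module]
        rw [norm_smul, norm_mul, norm_pow, hlam, one_pow, one_mul]
      have h2 : ‖(T ^ (n + 1) - T ^ n) v‖ ≤ ‖T ^ (n + 1) - T ^ n‖ * ‖v‖ :=
        (T ^ (n + 1) - T ^ n).le_opNorm v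
      rw [h1] at h2
      exact le_of_mul_le_mul_right h2 hvpos
    have h0 : ‖lam - 1‖ ≤ 0 :=
      ge_of_tendsto htend (Eventually.of_forall hkey)
    exact sub_eq_zero.mp (norm_le_zero_iff.mp h0)
  · -- hard direction
    intro H
    set f : Module.End ℂ V := (T : V →ₗ[ℂ] V) with hfdef
    set g : Module.End ℂ V := f - 1 with hgdef
    have hfg : ∀ v : V, f v = v + g v := by intro v; simp [hgdef]
    -- index of eigenvalue 1 is at most 1
    have hg2 : ∀ v : V, g (g v) = 0 → g v = 0 := by
      intro v hv
      set w := g v with hw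
      have hfw : f w = w := by
        have h1 : g w = 0 := hv
        rw [hgdef, LinearMap.sub_apply, Module.End.one_apply, sub_eq_zero] at h1
        exact h1
      have hfv : f v = v + w := hfg v
      have hfn : ∀ n : ℕ, (f ^ n) v = v + (n : ℂ) • w := by
        intro n
        induction n with
        | zero => simp
        | succ n ih =>
            rw [pow_succ', Module.End.mul_apply, ih, map_add, hfv, map_smul, hfw]
            push_cast
            module
      by_contra hw0
      have hwpos : 0 < ‖w‖ := norm_pos_iff.mpr hw0
      have hbnd : ∀ n : ℕ, 1 ≤ n → (n : ℝ) * ‖w‖ ≤ C * ‖v‖ + ‖v‖ := by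
        intro n hn
        have h1 : ‖(T ^ n) v‖ ≤ C * ‖v‖ := by
          calc ‖(T ^ n) v‖ ≤ ‖T ^ n‖ * ‖v‖ := (T ^ n).le_opNorm v
          _ ≤ C * ‖v‖ := mul_le_mul_of_nonneg_right (hC n hn) (norm_nonneg v)
        have h2 : (T ^ n) v = v + (n : ℂ) • w := by rw [hpow_apply n v]; exact hfn n
        have h3 : ‖(n : ℂ) • w‖ ≤ ‖(T ^ n) v‖ + ‖v‖ := by
          calc ‖(n : ℂ) • w‖ = ‖(T ^ n) v - v‖ := by rw [h2]; congr 1; abel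
          _ ≤ ‖(T ^ n) v‖ + ‖v‖ := norm_sub_le _ _
        have h4 : ‖(n : ℂ) • w‖ = (n : ℝ) * ‖w‖ := by
          rw [norm_smul]
          simp
        linarith
      obtain ⟨n, hn⟩ := exists_nat_gt ((C * ‖v‖ + ‖v‖) / ‖w‖)
      have h5 := hbnd (n + 1) (Nat.le_add_left 1 n)
      have h6 : (C * ‖v‖ + ‖v‖) / ‖w‖ < ((n : ℝ) + 1) := by
        linarith
      rw [div_lt_iff₀ hwpos] at h6
      push_cast at h5
      linarith
    have hgk : ∀ (k : ℕ) (v : V), (g ^ k) v = 0 → g v = 0 := by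
      intro k
      induction k with
      | zero =>
          intro v hv
          simp only [pow_zero, Module.End.one_apply] at hv
          rw [hv, map_zero]
      | succ k ih =>
          intro v hv
          rw [pow_succ, Module.End.mul_apply] at hv
          exact hg2 v (ih (g v) hv)
    set E₁ := f.maxGenEigenspace 1 with hE₁def
    set W := ⨆ (μ : ℂ) (_ : μ ≠ 1), f.maxGenEigenspace μ with hWdef
    have hsmone : f - (1 : ℂ) • (1 : Module.End ℂ V) = g := by rw [one_smul]
    have hE₁fix : ∀ x ∈ E₁, f x = x := by
      intro x hx
      obtain ⟨k, hk⟩ := (Module.End.mem_maxGenEigenspace f 1 x).mp hx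
      rw [hsmone] at hk
      have h1 := hgk k x hk
      rw [hgdef, LinearMap.sub_apply, Module.End.one_apply, sub_eq_zero] at h1
      exact h1
    have hdis : Disjoint E₁ W := f.independent_maxGenEigenspace 1
    have hcod : E₁ ⊔ W = ⊤ := by
      have h1 := Module.End.iSup_maxGenEigenspace_eq_top f
      rw [iSup_split_single (fun μ => f.maxGenEigenspace μ) 1] at h1
      exact h1
    have hcompl : IsCompl E₁ W := ⟨hdis, codisjoint_iff.mpr hcod⟩
    have hWmap : ∀ x ∈ W, f x ∈ W := by
      have hle : W ≤ W.comap f := by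
        refine iSup_le fun μ => iSup_le fun hμ => ?_
        intro x hx
        have h1 : f x ∈ f.maxGenEigenspace μ :=
          Module.End.mapsTo_maxGenEigenspace_of_comm (Commute.refl f) μ hx
        exact Submodule.mem_comap.mpr
          (Submodule.mem_iSup_of_mem μ (Submodule.mem_iSup_of_mem hμ h1))
      exact fun x hx => Submodule.mem_comap.mp (hle hx)
    set prj : Module.End ℂ V := E₁.subtype ∘ₗ (E₁.projectionOnto W hcompl)
      with hprjdef
    have hprj_left : ∀ x ∈ E₁, prj x = x := by
      intro x hx
      simp [hprjdef, Submodule.projectionOnto_apply_of_mem_left hcompl hx]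
    have hprj_right : ∀ x ∈ W, prj x = 0 := by
      intro x hx
      simp [hprjdef, Submodule.projectionOnto_apply_of_mem_right hcompl hx]
    have hprj_mem : ∀ x : V, prj x ∈ E₁ := by
      intro x
      simp only [hprjdef, LinearMap.comp_apply]
      exact Submodule.coe_mem _
    have hdecomp : ∀ x : V, ∃ a ∈ E₁, ∃ w ∈ W, x = a + w := by
      intro x
      have hx : x ∈ E₁ ⊔ W := hcod ▸ Submodule.mem_top
      obtain ⟨a, ha, w, hw, hx'⟩ := Submodule.mem_sup.mp hx
      exact ⟨a, ha, w, hw, hx'.symm⟩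
    have hfprj : f * prj = prj := by
      apply LinearMap.ext; intro x
      exact hE₁fix (prj x) (hprj_mem x)
    have hprjf : prj * f = prj := by
      apply LinearMap.ext; intro x
      obtain ⟨a, ha, w, hw, rfl⟩ := hdecomp x
      simp only [Module.End.mul_apply, map_add, hE₁fix a ha]
      rw [hprj_right _ (hWmap w hw), hprj_right _ hw]
    have hprjprj : prj * prj = prj := by
      apply LinearMap.ext; intro x
      exact hprj_left (prj x) (hprj_mem x)
    have hfnprj : ∀ n : ℕ, f ^ n * prj = prj := by
      intro n
      induction n with
      | zero => simp
      | succ n ih => rw [pow_succ', mul_assoc, ih, hfprj]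
    set b : Module.End ℂ V := f - prj with hbdef
    have hbpow : ∀ n : ℕ, 1 ≤ n → b ^ n = f ^ n - prj := by
      intro n hn
      induction n with
      | zero => omega
      | succ n ih =>
          rcases Nat.eq_zero_or_pos n with h0 | hpos
          · subst h0; simp [hbdef]
          · rw [pow_succ, ih hpos, hbdef, sub_mul, mul_sub, mul_sub,
              hprjf, hprjprj, hfnprj n, ← pow_succ]
            abel
    -- eigenvalues of b have modulus < 1
    have hbeig : ∀ (μ : ℂ) (v : V), v ≠ 0 → b v = μ • v → ‖μ‖ < 1 := by
      intro μ v hv hbv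
      obtain ⟨a, ha, w, hw, rfl⟩ := hdecomp v
      have hbvw : b (a + w) = f w := by
        simp only [hbdef, LinearMap.sub_apply, map_add, hE₁fix a ha,
          hprj_left a ha, hprj_right w hw]
        abel
      rw [hbvw] at hbv
      by_cases hμ0 : μ = 0
      · rw [hμ0]; norm_num
      · have hμa : μ • a = 0 := by
          have h1 : μ • a ∈ E₁ := E₁.smul_mem μ ha
          have h2 : μ • a ∈ W := by
            have h3 : μ • a = f w - μ • w := by rw [hbv]; module
            rw [h3]
            exact W.sub_mem (hWmap w hw) (W.smul_mem μ hw)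
          exact Submodule.disjoint_def.mp hdis _ h1 h2
        have ha0 : a = 0 := by
          rcases smul_eq_zero.mp hμa with h | h
          · exact absurd h hμ0
          · exact h
        subst ha0
        rw [zero_add] at hv
        have hfww : f w = μ • w := by rw [hbv]; module
        have hTw : T w = μ • w := hfww
        have hle := heig_le μ w hv hTw
        rcases lt_or_eq_of_le hle with h | h
        · exact h
        · exfalso
          have hni : ¬ Function.Injective ⇑(T - μ • (1 : V →L[ℂ] V)) :=
            (hinj μ).mpr ⟨w, hv, hTw⟩
          have hμ1 : μ = 1 := H μ h hni
          subst hμ1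
          have hwE : w ∈ E₁ := by
            rw [hE₁def]
            refine (Module.End.mem_maxGenEigenspace f 1 w).mpr ⟨1, ?_⟩
            rw [pow_one, hsmone, hgdef, LinearMap.sub_apply, Module.End.one_apply,
              hfww, one_smul, sub_self]
          exact hv (Submodule.disjoint_def.mp hdis w hwE hw)
    -- transfer to continuous linear maps
    set e := Module.End.toContinuousLinearMap (𝕜 := ℂ) V with hedef
    set B := e b with hBdef
    have heB : e f = T := by ext x; rfl
    have hBn : ∀ n : ℕ, 1 ≤ n →
        (T ^ (n + 1) - T ^ n : V →L[ℂ] V) = B ^ (n + 1) - B ^ n := by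
      intro n hn
      have h1 : B ^ (n + 1) = T ^ (n + 1) - e prj := by
        rw [hBdef, ← map_pow, hbpow (n + 1) (by omega), map_sub, map_pow, heB]
      have h2 : B ^ n = T ^ n - e prj := by
        rw [hBdef, ← map_pow, hbpow n hn, map_sub, map_pow, heB]
      rw [h1, h2]
      abel
    have hspec : spectralRadius ℂ B < 1 := by
      have hsub : ∀ μ ∈ spectrum ℂ B, ‖μ‖ < 1 := by
        intro μ hμ
        have hμb : μ ∈ spectrum ℂ b := by
          rw [hBdef] at hμ
          rwa [AlgEquiv.spectrum_eq e b] at hμ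
        have hev : Module.End.HasEigenvalue b μ :=
          Module.End.hasEigenvalue_iff_mem_spectrum.mpr hμb
        obtain ⟨v, hv⟩ := hev.exists_hasEigenvector
        exact hbeig μ v hv.2 (Module.End.mem_eigenspace_iff.mp hv.1)
      rcases (spectrum ℂ B).eq_empty_or_nonempty with hemp | hne
      · rw [spectralRadius, hemp]
        simp
      · have hcpt : IsCompact (spectrum ℂ B) := spectrum.isCompact B
        obtain ⟨μ₀, hμ₀mem, hμ₀max⟩ :=
          hcpt.exists_isMaxOn hne continuous_norm.continuousOn
        have h1 : spectralRadius ℂ B ≤ (‖μ₀‖₊ : ENNReal) := by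
          refine iSup₂_le fun μ hμ => ?_
          have : ‖μ‖ ≤ ‖μ₀‖ := hμ₀max hμ
          exact_mod_cast ENNReal.coe_le_coe.mpr (by exact_mod_cast this)
        have h2 : (‖μ₀‖₊ : ENNReal) < 1 := by
          have := hsub μ₀ hμ₀mem
          exact_mod_cast this
        exact h1.trans_lt h2
    have hpow0 := aux_pow_tendsto_zero B hspec
    have hb1 : Tendsto (fun n : ℕ => ‖B ^ (n + 1)‖ + ‖B ^ n‖) atTop (𝓝 0) := by
      have h1 : Tendsto (fun n : ℕ => ‖B ^ (n + 1)‖) atTop (𝓝 0) :=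
        hpow0.comp (tendsto_add_atTop_nat 1)
      simpa using h1.add hpow0
    refine squeeze_zero' (Eventually.of_forall fun n => norm_nonneg _) ?_ hb1
    filter_upwards [eventually_ge_atTop 1] with n hn
    rw [hBn n hn]
    exact norm_sub_le _ _
end

section
/- Let V be a finite-dimensional complex normed space and let T : V → V be a power-bounded linear map, i.e., sup_{n≥1} ‖T^n‖ < ∞. Let N ⊆ V be the linear span of all eigenvectors of T corresponding to eigenvalues of modulus one, i.e., N = Σ_{|λ|=1} ker(T − λ·id). Then there is a strictly increasing sequence of positive integers n₁ < n₂ < ⋯ such that T^{n_k} converges in operator norm to a linear map Q satisfying Q ∘ Q = Q and range(Q) = N; moreover, Q is the unique idempotent linear map that is a cluster point of the sequence (T^n)_{n≥1}. -/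
open Filter

namespace Stmt11Aux

variable {V : Type*} [NormedAddCommGroup V] [NormedSpace ℂ V]

lemma pow_eigen (T : V →L[ℂ] V) {μ : ℂ} {v : V} (h : T v = μ • v) (n : ℕ) :
    (T ^ n) v = μ ^ n • v := by
  induction n with
  | zero => simp
  | succ n ih =>
    rw [pow_succ, ContinuousLinearMap.mul_apply, h, map_smul, ih, smul_smul, ← pow_succ']

/-- The subspace of vectors `y` with `T^n y → 0`. -/
def stable (T : V →L[ℂ] V) : Submodule ℂ V where
  carrier := {y | Tendsto (fun n : ℕ => (T ^ n) y) atTop (nhds 0)}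
  zero_mem' := by
    simpa using (tendsto_const_nhds : Tendsto (fun _ : ℕ => (0 : V)) atTop (nhds 0))
  add_mem' := by
    intro a b ha hb
    have h := Tendsto.add (f := fun n : ℕ => (T ^ n) a) ha hb
    rw [add_zero] at h
    exact h.congr fun n => (map_add _ _ _).symm
  smul_mem' := by
    intro c y hy
    have h := Tendsto.const_smul (f := fun n : ℕ => (T ^ n) y) hy c
    rw [smul_zero] at h
    exact h.congr fun n => (map_smul _ _ _).symm

lemma mem_stable {T : V →L[ℂ] V} {y : V} :
    y ∈ stable T ↔ Tendsto (fun n : ℕ => (T ^ n) y) atTop (nhds 0) := Iff.rfl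

lemma coe_pow'' (T : V →L[ℂ] V) (n : ℕ) :
    ((T : V →ₗ[ℂ] V) ^ n) = ((T ^ n : V →L[ℂ] V) : V →ₗ[ℂ] V) := by
  induction n with
  | zero => rfl
  | succ n ih => rw [pow_succ, pow_succ, ih]; rfl

/-- Scalar limit lemma for eigenvectors with unimodular eigenvalue. -/
lemma scalar_limit (T : V →L[ℂ] V) {B : V →L[ℂ] V} {s : ℕ → ℕ}
    (hs : Tendsto (fun i => T ^ s i) atTop (nhds B)) {μ : ℂ} (hμ : ‖μ‖ = 1)
    {v : V} (hv0 : v ≠ 0) (hv : T v = μ • v) :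
    ∃ a : ℂ, ‖a‖ = 1 ∧ Tendsto (fun i => μ ^ s i) atTop (nhds a) ∧ B v = a • v := by
  have happ : Tendsto (fun i => (T ^ s i) v) atTop (nhds (B v)) :=
    ((ContinuousLinearMap.apply ℂ V v).continuous.tendsto B).comp hs
  obtain ⟨g, hg1, hgv⟩ := exists_dual_vector ℂ v (norm_ne_zero_iff.mpr hv0)
  have hvn : ((‖v‖ : ℂ)) ≠ 0 := by
    simpa using hv0
  set a := g (B v) * (‖v‖ : ℂ)⁻¹ with ha
  have h2 : ∀ i, g ((T ^ s i) v) = μ ^ s i * (‖v‖ : ℂ) := fun i => by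
    rw [pow_eigen T hv, map_smul, hgv, smul_eq_mul]
    norm_cast
  have h1 : Tendsto (fun i => g ((T ^ s i) v)) atTop (nhds (g (B v))) :=
    (g.continuous.tendsto _).comp happ
  have hta : Tendsto (fun i => μ ^ s i) atTop (nhds a) := by
    have h3 := h1.mul_const ((‖v‖ : ℂ)⁻¹)
    refine h3.congr fun i => ?_
    rw [h2 i, mul_assoc, mul_inv_cancel₀ hvn, mul_one]
  have ha1 : ‖a‖ = 1 := by
    have h4 : Tendsto (fun i => ‖μ ^ s i‖) atTop (nhds ‖a‖) :=
      (continuous_norm.tendsto a).comp hta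
    have h5 : (fun i => ‖μ ^ s i‖) = fun _ => (1 : ℝ) :=
      funext fun i => by rw [norm_pow, hμ, one_pow]
    rw [h5] at h4
    exact tendsto_nhds_unique h4 tendsto_const_nhds
  have hBv : B v = a • v := by
    have h6 : Tendsto (fun i => μ ^ s i • v) atTop (nhds (a • v)) := hta.smul_const v
    have h7 : Tendsto (fun i => μ ^ s i • v) atTop (nhds (B v)) :=
      happ.congr fun i => pow_eigen T hv (s i)
    exact tendsto_nhds_unique h7 h6
  exact ⟨a, ha1, hta, hBv⟩


/-- For a unimodular eigenvalue of a power-bounded operator, all generalized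
eigenspaces collapse to the eigenspace. -/
lemma ker_pow_le_ker (T : V →L[ℂ] V) {C : ℝ} (hC : ∀ n : ℕ, 1 ≤ n → ‖T ^ n‖ ≤ C)
    {μ : ℂ} (hμ : ‖μ‖ = 1) (k : ℕ) :
    LinearMap.ker (((T : V →ₗ[ℂ] V) - μ • 1) ^ k) ≤
      LinearMap.ker ((T : V →ₗ[ℂ] V) - μ • 1) := by
  set S : V →ₗ[ℂ] V := (T : V →ₗ[ℂ] V) - μ • 1 with hSdef
  have hS : ∀ x : V, S x = T x - μ • x := fun x => by
    simp [hSdef, LinearMap.sub_apply, LinearMap.smul_apply]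
  have key : LinearMap.ker (S * S) ≤ LinearMap.ker S := by
    intro v hv
    rw [LinearMap.mem_ker] at hv ⊢
    set w := S v with hw
    have hSw : S w = 0 := hv
    have hTw : T w = μ • w := by
      have h := hS w; rw [hSw] at h
      exact sub_eq_zero.mp h.symm
    have hTv : T v = μ • v + w := by
      have h : T v - μ • v = w := (hS v).symm
      rw [← h]; abel
    have hpow : ∀ m : ℕ, (T ^ (m + 1)) v = μ ^ (m + 1) • v + (((m : ℂ) + 1) * μ ^ m) • w := by
      intro m
      induction m with
      | zero => simpa using hTv
      | succ m ih =>
        rw [pow_succ', ContinuousLinearMap.mul_apply, ih, map_add, map_smul, map_smul,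
          hTv, hTw]
        push_cast
        module
    have hbound : ∀ m : ℕ, ((m : ℝ) + 1) * ‖w‖ ≤ (C + 1) * ‖v‖ := by
      intro m
      have h1 : (((m : ℂ) + 1) * μ ^ m) • w = (T ^ (m + 1)) v - μ ^ (m + 1) • v := by
        rw [hpow m]; abel
      have h2 : ‖(((m : ℂ) + 1) * μ ^ m) • w‖ = ((m : ℝ) + 1) * ‖w‖ := by
        rw [norm_smul, norm_mul, norm_pow, hμ, one_pow, mul_one]
        congr 1
        have h3 : ((m : ℂ) + 1) = ((m + 1 : ℕ) : ℂ) := by push_cast; ring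
        rw [h3, Complex.norm_natCast]; push_cast; ring
      have hA : ‖(T ^ (m + 1)) v‖ ≤ C * ‖v‖ :=
        le_trans ((T ^ (m + 1)).le_opNorm v)
          (mul_le_mul_of_nonneg_right (hC (m + 1) (by omega)) (norm_nonneg v))
      have hB : ‖μ ^ (m + 1) • v‖ = ‖v‖ := by
        rw [norm_smul, norm_pow, hμ, one_pow, one_mul]
      calc ((m : ℝ) + 1) * ‖w‖ = ‖(T ^ (m + 1)) v - μ ^ (m + 1) • v‖ := by rw [← h2, h1]
      _ ≤ ‖(T ^ (m + 1)) v‖ + ‖μ ^ (m + 1) • v‖ := norm_sub_le _ _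
      _ ≤ C * ‖v‖ + ‖v‖ := by rw [hB]; exact add_le_add_left hA _
      _ = (C + 1) * ‖v‖ := by ring
    by_contra hw0
    have hwpos : 0 < ‖w‖ := norm_pos_iff.mpr hw0
    obtain ⟨m, hm⟩ := exists_nat_gt ((C + 1) * ‖v‖ / ‖w‖)
    have h3 : (C + 1) * ‖v‖ < ((m : ℝ) + 1) * ‖w‖ := by
      rw [div_lt_iff₀ hwpos] at hm
      nlinarith [norm_nonneg w]
    exact absurd (hbound m) (not_le.mpr h3)
  induction k with
  | zero =>
    intro v hv
    rw [LinearMap.mem_ker, pow_zero, Module.End.one_apply] at hv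
    simp [LinearMap.mem_ker, hv]
  | succ k ih =>
    intro v hv
    rw [LinearMap.mem_ker] at hv
    have h1 : S v ∈ LinearMap.ker (S ^ k) := by
      rw [LinearMap.mem_ker]
      have h0 : (S ^ (k + 1)) v = (S ^ k) (S v) := by rw [pow_succ]; rfl
      rw [← h0]; exact hv
    have h2 := LinearMap.mem_ker.mp (ih h1)
    apply key
    rw [LinearMap.mem_ker, Module.End.mul_apply]
    exact h2

/-- Eigenvalues of modulus `> 1` are impossible: generalized eigenvectors vanish. -/
lemma gen_eig_zero_of_big (T : V →L[ℂ] V) {C : ℝ} (hC : ∀ n : ℕ, 1 ≤ n → ‖T ^ n‖ ≤ C)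
    {μ : ℂ} (hμ : 1 < ‖μ‖) (k : ℕ) :
    ∀ v : V, ((((T : V →ₗ[ℂ] V) - μ • 1) ^ k) v = 0) → v = 0 := by
  set S : V →ₗ[ℂ] V := (T : V →ₗ[ℂ] V) - μ • 1 with hSdef
  have key : ∀ v : V, S v = 0 → v = 0 := by
    intro v hv
    have hTv : T v = μ • v := by
      have h : S v = T v - μ • v := by
        simp [hSdef, LinearMap.sub_apply, LinearMap.smul_apply]
      rw [hv] at h
      exact sub_eq_zero.mp h.symm
    by_contra h0
    have hvpos : 0 < ‖v‖ := norm_pos_iff.mpr h0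
    obtain ⟨n, hn⟩ := pow_unbounded_of_one_lt (max C 1) hμ
    have hn1 : 1 ≤ n := by
      by_contra hn0
      interval_cases n
      simp only [pow_zero] at hn
      exact absurd hn (not_lt.mpr (le_max_right C 1))
    have h1 : ‖(T ^ n) v‖ = ‖μ‖ ^ n * ‖v‖ := by
      rw [pow_eigen T hTv, norm_smul, norm_pow]
    have h2 : ‖(T ^ n) v‖ ≤ C * ‖v‖ :=
      le_trans ((T ^ n).le_opNorm v)
        (mul_le_mul_of_nonneg_right (hC n hn1) (norm_nonneg v))
    have h3 : C < ‖μ‖ ^ n := lt_of_le_of_lt (le_max_left C 1) hn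
    nlinarith
  induction k with
  | zero =>
    intro v hv
    rw [pow_zero, Module.End.one_apply] at hv
    exact hv
  | succ k ih =>
    intro v hv
    have h0 : (S ^ (k + 1)) v = (S ^ k) (S v) := by rw [pow_succ]; rfl
    rw [h0] at hv
    exact key v (ih (S v) hv)

/-- Generalized eigenvectors for eigenvalues of modulus `< 1` are in the stable subspace. -/
lemma gen_eig_stable (T : V →L[ℂ] V) {μ : ℂ} (hμ : ‖μ‖ < 1) (k : ℕ) (v : V)
    (hv : ((((T : V →ₗ[ℂ] V) - μ • 1) ^ k) v = 0)) :
    Tendsto (fun n : ℕ => (T ^ n) v) atTop (nhds 0) := by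
  set f : V →ₗ[ℂ] V := (T : V →ₗ[ℂ] V) with hfdef
  set S : V →ₗ[ℂ] V := f - μ • 1 with hSdef
  have hcomm : Commute S (μ • (1 : V →ₗ[ℂ] V)) := (Commute.one_right S).smul_right μ
  have hf : f = S + μ • 1 := by rw [hSdef]; abel
  have hSj : ∀ j : ℕ, k ≤ j → (S ^ j) v = 0 := by
    intro j hj
    have h1 : S ^ j = S ^ (j - k) * S ^ k := by rw [← pow_add]; congr 1; omega
    rw [h1, Module.End.mul_apply, hv, map_zero]
  have hexp : ∀ n : ℕ, k ≤ n → (f ^ n) v =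
      ∑ j ∈ Finset.range k, ((n.choose j : ℂ) * μ ^ (n - j)) • ((S ^ j) v) := by
    intro n hn
    have h1 : (f ^ n) v =
        ∑ j ∈ Finset.range (n + 1), ((n.choose j : ℂ) * μ ^ (n - j)) • ((S ^ j) v) := by
      rw [hf, hcomm.add_pow]
      rw [LinearMap.coe_sum, Finset.sum_apply]
      refine Finset.sum_congr rfl fun j hj => ?_
      rw [smul_pow, one_pow]
      simp only [Module.End.mul_apply, LinearMap.smul_apply, Module.End.one_apply]
      rw [Module.End.natCast_apply, map_smul, map_nsmul, ← Nat.cast_smul_eq_nsmul ℂ,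
        smul_smul, mul_comm]
    rw [h1]
    refine (Finset.sum_subset (Finset.range_subset_range.mpr (by omega)) ?_).symm
    intro j hj1 hj2
    rw [hSj j (by simp only [Finset.mem_range, not_lt] at hj2; exact hj2), smul_zero]
  have hsum : Tendsto (fun n : ℕ =>
      ∑ j ∈ Finset.range k, ((n.choose j : ℂ) * μ ^ (n - j)) • ((S ^ j) v)) atTop (nhds 0) := by
    have h0 : (0 : V) = ∑ _j ∈ Finset.range k, (0 : V) := by simp
    rw [h0]
    refine tendsto_finset_sum _ fun j hj => ?_
    have hscal : Tendsto (fun n : ℕ => (n.choose j : ℂ) * μ ^ (n - j)) atTop (nhds 0) := by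
      by_cases hμ0 : μ = 0
      · refine Tendsto.congr' ?_ (tendsto_const_nhds (x := (0 : ℂ)))
        filter_upwards [eventually_ge_atTop (j + 1)] with n hn
        rw [hμ0, zero_pow (by omega), mul_zero]
      · have hμpos : (0 : ℝ) < ‖μ‖ := norm_pos_iff.mpr hμ0
        have hb : Tendsto (fun n : ℕ => ((n : ℝ) ^ j * ‖μ‖ ^ n) * (‖μ‖ ^ j)⁻¹) atTop
            (nhds 0) := by
          have h1 : Tendsto (fun n : ℕ => (n : ℝ) ^ j * ‖μ‖ ^ n) atTop (nhds 0) :=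
            (summable_pow_mul_geometric_of_norm_lt_one j
              (r := ‖μ‖) (by rwa [Real.norm_eq_abs, abs_of_nonneg (norm_nonneg μ)])
              ).tendsto_atTop_zero
          have h2 := h1.mul_const ((‖μ‖ ^ j)⁻¹)
          rwa [zero_mul] at h2
        refine squeeze_zero_norm' ?_ hb
        filter_upwards [eventually_ge_atTop j] with n hn
        rw [norm_mul, norm_pow, Complex.norm_natCast, pow_sub₀ _ (ne_of_gt hμpos) hn]
        rw [← mul_assoc]
        gcongr
        exact_mod_cast Nat.choose_le_pow n j
    have := hscal.smul_const ((S ^ j) v)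
    rwa [zero_smul] at this
  refine Tendsto.congr' ?_ hsum
  filter_upwards [eventually_ge_atTop k] with n hn
  rw [← hexp n hn, hfdef, coe_pow'']
  rfl

lemma sup_eq_top (T : V →L[ℂ] V) [FiniteDimensional ℂ V] {C : ℝ}
    (hC : ∀ n : ℕ, 1 ≤ n → ‖T ^ n‖ ≤ C) :
    (⨆ lam : {lam : ℂ // ‖lam‖ = 1},
      LinearMap.ker ((T - (lam : ℂ) • (1 : V →L[ℂ] V) : V →L[ℂ] V) : V →ₗ[ℂ] V)) ⊔ stable T = ⊤ := by
  rw [eq_top_iff, ← Module.End.iSup_maxGenEigenspace_eq_top (T : V →ₗ[ℂ] V)]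
  refine iSup_le fun μ => fun x hx => ?_
  rw [Module.End.mem_maxGenEigenspace] at hx
  obtain ⟨k, hk⟩ := hx
  rcases lt_trichotomy ‖μ‖ 1 with h | h | h
  · exact Submodule.mem_sup_right (gen_eig_stable T h k x hk)
  · apply Submodule.mem_sup_left
    have hker : x ∈ LinearMap.ker ((T : V →ₗ[ℂ] V) - μ • 1) :=
      ker_pow_le_ker T hC h k (LinearMap.mem_ker.mpr hk)
    have hmem : x ∈ LinearMap.ker ((T - (μ : ℂ) • (1 : V →L[ℂ] V) : V →L[ℂ] V) : V →ₗ[ℂ] V) := by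
      rw [LinearMap.mem_ker] at hker ⊢
      simp only [LinearMap.sub_apply, LinearMap.smul_apply, Module.End.one_apply,
        ContinuousLinearMap.coe_coe] at hker
      simp only [ContinuousLinearMap.coe_coe, ContinuousLinearMap.sub_apply, ContinuousLinearMap.smul_apply,
        ContinuousLinearMap.one_apply]
      exact hker
    exact le_iSup (fun lam : {lam : ℂ // ‖lam‖ = 1} =>
      LinearMap.ker ((T - (lam : ℂ) • (1 : V →L[ℂ] V) : V →L[ℂ] V) : V →ₗ[ℂ] V)) ⟨μ, h⟩ hmem
  · have hx0 : x = 0 := gen_eig_zero_of_big T hC h k x hk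
    rw [hx0]
    exact Submodule.zero_mem _

end Stmt11Aux

open Stmt11Aux Filter

/-- Let `V` be a finite-dimensional complex normed space and
`T : V → V` a power-bounded linear map.  Let `N ⊆ V` be the span of all eigenvectors
of `T` corresponding to eigenvalues of modulus one, i.e.
`N = Σ_{|λ|=1} ker(T − λ·id)`.  Then there is a strictly increasing sequence of
positive integers `n₁ < n₂ < ⋯` such that `T^{n_k}` converges in operator norm to an
idempotent linear map `Q` with range `N`; moreover `Q` is the unique idempotent linear
map that is a cluster point of the sequence `(T^n)_{n ≥ 1}`. -/
theorem stmt11 {V : Type*} [NormedAddCommGroup V] [NormedSpace ℂ V]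
    [FiniteDimensional ℂ V]
    (T : V →L[ℂ] V) (hT : ∃ C : ℝ, ∀ n : ℕ, 1 ≤ n → ‖T ^ n‖ ≤ C) :
    ∃ Q : V →L[ℂ] V,
      (∃ nk : ℕ → ℕ, StrictMono nk ∧ (∀ k, 1 ≤ nk k) ∧
        Filter.Tendsto (fun k : ℕ => T ^ nk k) Filter.atTop (nhds Q)) ∧
      Q.comp Q = Q ∧
      LinearMap.range (Q : V →ₗ[ℂ] V) =
        (⨆ lam : {lam : ℂ // ‖lam‖ = 1},
          LinearMap.ker ((T - (lam : ℂ) • (1 : V →L[ℂ] V) : V →L[ℂ] V) : V →ₗ[ℂ] V)) ∧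
      (∀ Q' : V →L[ℂ] V, Q'.comp Q' = Q' →
        (∃ mk : ℕ → ℕ, StrictMono mk ∧ (∀ k, 1 ≤ mk k) ∧
          Filter.Tendsto (fun k : ℕ => T ^ mk k) Filter.atTop (nhds Q')) →
        Q' = Q) := by
  classical
  obtain ⟨C, hC⟩ := hT
  set N : Submodule ℂ V := ⨆ lam : {lam : ℂ // ‖lam‖ = 1},
    LinearMap.ker ((T - (lam : ℂ) • (1 : V →L[ℂ] V) : V →L[ℂ] V) : V →ₗ[ℂ] V) with hNdef
  -- bounded powers lie in a closed ball
  have hball : ∀ n : ℕ, 1 ≤ n → T ^ n ∈ Metric.closedBall (0 : V →L[ℂ] V) C := by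
    intro n hn
    rw [Metric.mem_closedBall, dist_zero_right]
    exact hC n hn
  -- first subsequence : T ^ k i → A
  obtain ⟨A, -, φ, hφ, hφt⟩ := tendsto_subseq_of_bounded (Metric.isBounded_closedBall)
    (x := fun i : ℕ => T ^ (i + 1)) (fun i => hball (i + 1) (by omega))
  set k : ℕ → ℕ := fun i => φ i + 1 with hkdef
  have hkmono : StrictMono k := fun a b hab => by
    simp only [hkdef]
    exact Nat.add_lt_add_right (hφ hab) 1
  have hkt : Tendsto (fun i => T ^ k i) atTop (nhds A) := hφt
  -- gap sequence
  set ψ : ℕ → ℕ := fun l => Nat.rec 0 (fun _ p => 2 * k p + 1) l with hψdef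
  have hψs : ∀ l, ψ (l + 1) = 2 * k (ψ l) + 1 := fun l => rfl
  have hψmono : StrictMono ψ := strictMono_nat_of_lt_succ fun l => by
    have h1 : ψ l ≤ k (ψ l) := hkmono.le_apply
    rw [hψs]
    omega
  set e : ℕ → ℕ := fun l => k (ψ (l + 1)) - k (ψ l) with hedef
  have hlt : ∀ l, k (ψ l) < k (ψ (l + 1)) := fun l => hkmono (hψmono (lt_add_one l))
  have hesum : ∀ l, k (ψ l) + e l = k (ψ (l + 1)) := fun l => by
    have := hlt l
    simp only [hedef]
    omega
  have he1 : ∀ l, 1 ≤ e l := fun l => by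
    have := hlt l
    simp only [hedef]
    omega
  have hklow : ∀ l, k (ψ l) < e l := fun l => by
    have h1 : 2 * k (ψ l) + 1 ≤ ψ (l + 1) := le_of_eq (hψs l).symm
    have h2 : ψ (l + 1) ≤ k (ψ (l + 1)) := hkmono.le_apply
    have h3 := hesum l
    omega
  have hemono : StrictMono e := strictMono_nat_of_lt_succ fun l => by
    have h1 := hesum l
    have h2 := hklow (l + 1)
    have h3 := hlt l
    omega
  -- second subsequence : T ^ (e (σ m)) → Q
  obtain ⟨Q, -, σ, hσ, hQt⟩ := tendsto_subseq_of_bounded (Metric.isBounded_closedBall)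
    (x := fun l : ℕ => T ^ e l) (fun l => hball (e l) (he1 l))
  set nk : ℕ → ℕ := e ∘ σ with hnkdef
  have hnkmono : StrictMono nk := hemono.comp hσ
  have hnk1 : ∀ m, 1 ≤ nk m := fun m => he1 (σ m)
  have hnkt : Tendsto (fun m => T ^ nk m) atTop (nhds Q) := hQt
  -- pointwise convergence
  have hpt : ∀ (s : ℕ → ℕ) (B : V →L[ℂ] V), Tendsto (fun m => T ^ s m) atTop (nhds B) →
      ∀ x : V, Tendsto (fun m => (T ^ s m) x) atTop (nhds (B x)) := by
    intro s B hB x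
    exact ((ContinuousLinearMap.apply ℂ V x).continuous.tendsto B).comp hB
  -- key : unimodular eigenvalues : μ ^ nk m → 1
  have hmu1 : ∀ μ : ℂ, ‖μ‖ = 1 → ∀ v : V, v ≠ 0 → T v = μ • v →
      Tendsto (fun m => μ ^ nk m) atTop (nhds 1) := by
    intro μ hμ v hv0 hv
    obtain ⟨a, ha1, hta, -⟩ := scalar_limit T hkt hμ hv0 hv
    have ha0 : a ≠ 0 := fun h => by rw [h] at ha1; simp at ha1
    have hμ0 : μ ≠ 0 := fun h => by rw [h] at hμ; simp at hμ
    have hψt : Tendsto ψ atTop atTop := hψmono.tendsto_atTop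
    have h1 : Tendsto (fun l => μ ^ k (ψ (l + 1))) atTop (nhds a) :=
      hta.comp (hψt.comp (tendsto_add_atTop_nat 1))
    have h2 : Tendsto (fun l => μ ^ k (ψ l)) atTop (nhds a) := hta.comp hψt
    have h3 : Tendsto (fun l => μ ^ k (ψ (l + 1)) * (μ ^ k (ψ l))⁻¹) atTop
        (nhds (a * a⁻¹)) := h1.mul (h2.inv₀ ha0)
    rw [mul_inv_cancel₀ ha0] at h3
    have h4 : Tendsto (fun l => μ ^ e l) atTop (nhds 1) := by
      refine h3.congr fun l => ?_
      rw [← hesum l, pow_add, mul_comm (μ ^ k (ψ l)), mul_assoc,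
        mul_inv_cancel₀ (pow_ne_zero _ hμ0), mul_one]
    exact h4.comp hσ.tendsto_atTop
  -- Q is the identity on N
  have hQN : ∀ x ∈ N, Q x = x := by
    intro x hx
    rw [hNdef] at hx
    refine Submodule.iSup_induction (motive := fun y => Q y = y) _ hx ?_ (map_zero Q) ?_
    · rintro ⟨μ, hμ⟩ y hy
      by_cases hy0 : y = 0
      · rw [hy0, map_zero]
      have hTy : T y = μ • y := by
        rw [LinearMap.mem_ker] at hy
        simp only [ContinuousLinearMap.coe_coe, ContinuousLinearMap.sub_apply, ContinuousLinearMap.smul_apply,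
          ContinuousLinearMap.one_apply] at hy
        exact sub_eq_zero.mp hy
      have h1 : Tendsto (fun m => μ ^ nk m • y) atTop (nhds ((1 : ℂ) • y)) :=
        (hmu1 μ hμ y hy0 hTy).smul_const y
      rw [one_smul] at h1
      have h2 : Tendsto (fun m => μ ^ nk m • y) atTop (nhds (Q y)) :=
        (hpt nk Q hnkt y).congr fun m => pow_eigen T hTy (nk m)
      exact tendsto_nhds_unique h2 h1
    · intro x y hx hy
      rw [map_add, hx, hy]
  -- Q vanishes on the stable subspace
  have hQM : ∀ y ∈ stable T, Q y = 0 := by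
    intro y hy
    rw [mem_stable] at hy
    have h1 : Tendsto (fun m => (T ^ nk m) y) atTop (nhds 0) := hy.comp hnkmono.tendsto_atTop
    exact tendsto_nhds_unique (hpt nk Q hnkt y) h1
  -- decomposition
  have hNM := sup_eq_top T hC
  have hdecomp : ∀ x : V, ∃ a ∈ N, ∃ b ∈ stable T, a + b = x := by
    intro x
    have hx : x ∈ N ⊔ stable T := by rw [hNM]; exact Submodule.mem_top
    exact Submodule.mem_sup.mp hx
  have hQval : ∀ (x a b : V), a ∈ N → b ∈ stable T → a + b = x → Q x = a := by
    intro x a b ha hb hab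
    rw [← hab, map_add, hQN a ha, hQM b hb, add_zero]
  refine ⟨Q, ⟨nk, hnkmono, hnk1, hnkt⟩, ?_, ?_, ?_⟩
  · -- idempotent
    ext x
    obtain ⟨a, ha, b, hb, hab⟩ := hdecomp x
    rw [ContinuousLinearMap.comp_apply, hQval x a b ha hb hab, hQN a ha]
  · -- range
    refine le_antisymm ?_ ?_
    · rintro y ⟨x, rfl⟩
      obtain ⟨a, ha, b, hb, hab⟩ := hdecomp x
      rw [ContinuousLinearMap.coe_coe, hQval x a b ha hb hab]
      exact ha
    · intro a ha
      exact LinearMap.mem_range.mpr ⟨a, hQN a ha⟩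
  · -- uniqueness
    rintro Q' hidem ⟨mk, hmkmono, hmk1, hmkt⟩
    have hQ'M : ∀ y ∈ stable T, Q' y = 0 := by
      intro y hy
      rw [mem_stable] at hy
      have h1 : Tendsto (fun m => (T ^ mk m) y) atTop (nhds 0) :=
        hy.comp hmkmono.tendsto_atTop
      exact tendsto_nhds_unique (hpt mk Q' hmkt y) h1
    have hQ'N : ∀ x ∈ N, Q' x = x := by
      intro x hx
      rw [hNdef] at hx
      refine Submodule.iSup_induction (motive := fun y => Q' y = y) _ hx ?_ (map_zero Q') ?_
      · rintro ⟨μ, hμ⟩ y hy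
        by_cases hy0 : y = 0
        · rw [hy0, map_zero]
        have hTy : T y = μ • y := by
          rw [LinearMap.mem_ker] at hy
          simp only [ContinuousLinearMap.coe_coe, ContinuousLinearMap.sub_apply, ContinuousLinearMap.smul_apply,
            ContinuousLinearMap.one_apply] at hy
          exact sub_eq_zero.mp hy
        obtain ⟨a, ha1, -, hQ'y⟩ := scalar_limit T hmkt hμ hy0 hTy
        have ha0 : a ≠ 0 := fun h => by rw [h] at ha1; simp at ha1
        have hiter : Q' (Q' y) = Q' y := by
          have := congrArg (fun (R : V →L[ℂ] V) => R y) hidem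
          simpa using this
        rw [hQ'y, map_smul, hQ'y, smul_smul] at hiter
        have haa : a * a = a := by
          have h5 : (a * a - a) • y = 0 := by
            rw [sub_smul, hiter, sub_self]
          rcases smul_eq_zero.mp h5 with h | h
          · exact sub_eq_zero.mp h
          · exact absurd h hy0
        have ha1' : a = 1 := by
          have h6 : a * (a - 1) = 0 := by ring_nf; linear_combination haa
          rcases mul_eq_zero.mp h6 with h | h
          · exact absurd h ha0
          · exact sub_eq_zero.mp h
        rw [hQ'y, ha1', one_smul]
      · intro x y hx hy
        rw [map_add, hx, hy]
    ext x
    obtain ⟨a, ha, b, hb, hab⟩ := hdecomp x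
    rw [hQval x a b ha hb hab, ← hab, map_add, hQ'N a ha, hQ'M b hb, add_zero]
end
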